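/- arXiv:2303.04462 — 8 statements merged into one kernel-verified Lean document; each statement's English description precedes it below -/
import Mathlib

section
/- For all natural numbers n ≥ 1 and t ≥ 1, the poset Ramsey number of the t-element chain versus the Boolean lattice satisfies R(C_t, Q_n) = n + t − 1. -/
/-- The poset Ramsey number `R(P₁, P₂)`: the least `N` such that every blue/red coloring
(`true` = blue, `false` = red) of the Boolean lattice `Q_N` (all subsets of an `N`-element
set, ordered by inclusion) contains a blue (induced) copy of `P₁` or a red (induced) copy
of `P₂`. -/
noncomputable def posetRamsey (P₁ : Type*) (P₂ : Type*) [PartialOrder P₁] [PartialOrder P₂] : ℕ :=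
  sInf {N : ℕ | ∀ c : Finset (Fin N) → Bool,
    (∃ f : P₁ ↪o Finset (Fin N), ∀ x, c (f x) = true) ∨
    (∃ f : P₂ ↪o Finset (Fin N), ∀ x, c (f x) = false)}


namespace ChainCube

def Eset (n s j : ℕ) : Finset (Fin (n + s)) :=
  Finset.univ.filter (fun x => n ≤ x.val ∧ x.val < n + j)

def Fset (n s : ℕ) (S : Finset (Fin n)) (j : ℕ) : Finset (Fin (n + s)) :=
  S.map (Fin.castAddEmb s) ∪ Eset n s j

lemma mem_Fset_castAdd {n s : ℕ} (S : Finset (Fin n)) (j : ℕ) (x : Fin n) :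
    Fin.castAdd s x ∈ Fset n s S j ↔ x ∈ S := by
  simp only [Fset, Finset.mem_union, Finset.mem_map, Eset, Finset.mem_filter,
    Finset.mem_univ, true_and, Fin.castAddEmb]
  constructor
  · rintro (⟨y, hy, h⟩ | ⟨h1, h2⟩)
    · have : y = x := by
        apply Fin.val_injective
        simpa [Fin.castAdd] using congrArg Fin.val h
      exact this ▸ hy
    · exfalso
      have hx := x.isLt
      have hv : (Fin.castAdd s x : Fin (n+s)).val = x.val := rfl
      omega
  · intro hx
    exact Or.inl ⟨x, hx, rfl⟩

lemma Fset_subset_Fset {n s : ℕ} {S T : Finset (Fin n)} {i j : ℕ}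
    (hST : S ⊆ T) (hij : i ≤ j) : Fset n s S i ⊆ Fset n s T j := by
  apply Finset.union_subset_union
  · exact Finset.map_subset_map.2 hST
  · intro x hx
    simp only [Eset, Finset.mem_filter, Finset.mem_univ, true_and] at hx ⊢
    omega

lemma Fset_ssubset_Fset {n s : ℕ} {S T : Finset (Fin n)} {i j : ℕ}
    (hST : S ⊆ T) (hij : i < j) (hj : j ≤ s) : Fset n s S i ⊂ Fset n s T j := by
  refine Finset.ssubset_iff_of_subset (Fset_subset_Fset hST (le_of_lt hij)) |>.2 ?_
  refine ⟨⟨n + i, by omega⟩, ?_, ?_⟩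
  · simp only [Fset, Finset.mem_union, Eset, Finset.mem_filter, Finset.mem_univ, true_and]
    right; omega
  · simp only [Fset, Finset.mem_union, Finset.mem_map, Eset, Finset.mem_filter,
      Finset.mem_univ, true_and, not_or, Fin.castAddEmb]
    constructor
    · rintro ⟨y, _, h⟩
      have := congrArg Fin.val h
      simp [Fin.castAdd] at this
      omega
    · omega

def IsChain' {n s : ℕ} (c : Finset (Fin (n + s)) → Bool) (m : ℕ)
    (A : Finset (Fin (n + s))) : Prop :=
  ∃ g : ℕ → Finset (Fin (n + s)), (∀ i j, i < j → j < m → g i ⊂ g j) ∧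
    (∀ i < m, c (g i) = true) ∧ (∀ i < m, g i ⊂ A)

lemma IsChain'.mono {n s : ℕ} {c : Finset (Fin (n + s)) → Bool} {m : ℕ}
    {A B : Finset (Fin (n + s))} (h : IsChain' c m A) (hAB : A ⊆ B) : IsChain' c m B := by
  obtain ⟨g, h1, h2, h3⟩ := h
  exact ⟨g, h1, h2, fun i hi => (h3 i hi).trans_subset hAB⟩

lemma no_long_chain {n s : ℕ} {c : Finset (Fin (n + s)) → Bool}
    (hb : ¬ ∃ f : Fin (s + 1) ↪o Finset (Fin (n + s)), ∀ x, c (f x) = true)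
    (g : ℕ → Finset (Fin (n + s)))
    (h1 : ∀ i j, i < j → j ≤ s → g i ⊂ g j) (h2 : ∀ i ≤ s, c (g i) = true) : False := by
  apply hb
  refine ⟨OrderEmbedding.ofStrictMono (fun i : Fin (s + 1) => g i.val) ?_, ?_⟩
  · intro i j hij
    rw [Finset.lt_iff_ssubset]
    exact h1 i.val j.val hij (Nat.lt_succ_iff.1 j.isLt)
  · intro x
    exact h2 x.val (Nat.lt_succ_iff.1 x.isLt)

lemma chain_extend {n s : ℕ} {c : Finset (Fin (n + s)) → Bool} {S : Finset (Fin n)}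
    {m j : ℕ} (hc : IsChain' c m (Fset n s S m)) (hmj : m ≤ j) (hjs : j ≤ s)
    (hblue : ∀ i, m ≤ i → i < j → c (Fset n s S i) = true) :
    IsChain' c j (Fset n s S j) := by
  obtain ⟨g, hg1, hg2, hg3⟩ := hc
  refine ⟨fun i => if i < m then g i else Fset n s S i, ?_, ?_, ?_⟩
  · intro i k hik hkj
    by_cases him : i < m <;> by_cases hkm : k < m <;> simp only [him, hkm, if_pos, if_neg,
      if_true, if_false]
    · exact hg1 i k hik hkm
    · exact (hg3 i him).trans_subset (Fset_subset_Fset (le_refl S) (by omega))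
    · omega
    · exact Fset_ssubset_Fset (le_refl S) hik (by omega)
  · intro i hij
    by_cases him : i < m <;> simp only [him, if_true, if_false, if_pos, if_neg]
    · exact hg2 i him
    · exact hblue i (by omega) hij
  · intro i hij
    by_cases him : i < m <;> simp only [him, if_true, if_false, if_pos, if_neg]
    · exact (hg3 i him).trans_subset (Fset_subset_Fset (le_refl S) hmj)
    · exact Fset_ssubset_Fset (le_refl S) hij hjs

lemma exists_red {n s : ℕ} {c : Finset (Fin (n + s)) → Bool}
    (hb : ¬ ∃ f : Fin (s + 1) ↪o Finset (Fin (n + s)), ∀ x, c (f x) = true)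
    {S : Finset (Fin n)} {m : ℕ} (hc : IsChain' c m (Fset n s S m)) (hms : m ≤ s) :
    ∃ j, m ≤ j ∧ j ≤ s ∧ c (Fset n s S j) = false := by
  by_contra h
  push_neg at h
  have hall : ∀ i, m ≤ i → i ≤ s → c (Fset n s S i) = true := by
    intro i h1 h2
    have := h i h1 h2
    simpa using this
  obtain ⟨g, hg1, hg2, hg3⟩ := hc
  apply no_long_chain hb (fun i => if i < m then g i else Fset n s S i)
  · intro i k hik hks
    by_cases him : i < m <;> by_cases hkm : k < m <;> simp only [him, hkm, if_true, if_false,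
      if_pos, if_neg]
    · exact hg1 i k hik hkm
    · exact (hg3 i him).trans_subset (Fset_subset_Fset (le_refl S) (by omega))
    · omega
    · exact Fset_ssubset_Fset (le_refl S) hik hks
  · intro i his
    by_cases him : i < m <;> simp only [him, if_true, if_false, if_pos, if_neg]
    · exact hg2 i him
    · exact hall i (by omega) his

noncomputable def kf {n : ℕ} (s : ℕ) (c : Finset (Fin (n + s)) → Bool) :
    Finset (Fin n) → ℕ :=
  fun S => Finset.strongInduction
    (p := fun _ : Finset (Fin n) => ℕ)
    (fun S ih =>
      sInf {j | (∀ T (hT : T ⊂ S), ih T hT ≤ j) ∧ j ≤ s ∧ c (Fset n s S j) = false}) S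

lemma kf_eq {n : ℕ} (s : ℕ) (c : Finset (Fin (n + s)) → Bool) (S : Finset (Fin n)) :
    kf s c S =
      sInf {j | (∀ T, T ⊂ S → kf s c T ≤ j) ∧ j ≤ s ∧ c (Fset n s S j) = false} := by
  conv_lhs => rw [kf, Finset.strongInduction_eq]
  rfl

lemma kf_spec {n s : ℕ} (c : Finset (Fin (n + s)) → Bool)
    (hb : ¬ ∃ f : Fin (s + 1) ↪o Finset (Fin (n + s)), ∀ x, c (f x) = true) :
    ∀ S : Finset (Fin n), (∀ T, T ⊂ S → kf s c T ≤ kf s c S) ∧ kf s c S ≤ s ∧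
      c (Fset n s S (kf s c S)) = false ∧ IsChain' c (kf s c S) (Fset n s S (kf s c S)) := by
  intro S
  induction S using Finset.strongInduction with
  | _ S ih =>
    -- key: a suitable m with chain and dominating all subsets
    have key : ∃ m, m ≤ s ∧ IsChain' c m (Fset n s S m) ∧ (∀ T, T ⊂ S → kf s c T ≤ m) ∧
        (m = 0 ∨ ∃ T, T ⊂ S ∧ kf s c T = m) := by
      by_cases hS : S = ∅
      · refine ⟨0, Nat.zero_le s, ⟨fun _ => ∅, by omega, by omega, by omega⟩, ?_, Or.inl rfl⟩
        intro T hT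
        exact absurd hT (by simp [hS, Finset.ssubset_iff_subset_ne])
      · set P := S.powerset.erase S with hP
        have hPne : P.Nonempty := by
          exact ⟨∅, Finset.mem_erase.2 ⟨Ne.symm hS, Finset.empty_mem_powerset S⟩⟩
        obtain ⟨T₀, hT₀P, hT₀⟩ := Finset.exists_mem_eq_sup P hPne (kf s c)
        have hmemP : ∀ T, T ∈ P ↔ T ⊂ S := by
          intro T
          simp [hP, Finset.mem_erase, Finset.mem_powerset, Finset.ssubset_iff_subset_ne,
            and_comm]
        have hT₀S : T₀ ⊂ S := (hmemP T₀).1 hT₀P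
        obtain ⟨hmono, hle, hred, hchain⟩ := ih T₀ hT₀S
        refine ⟨kf s c T₀, hle, ?_, ?_, Or.inr ⟨T₀, hT₀S, rfl⟩⟩
        · exact hchain.mono (Fset_subset_Fset hT₀S.subset (le_refl _))
        · intro T hT
          rw [← hT₀]
          exact Finset.le_sup ((hmemP T).2 hT)
    obtain ⟨m, hms, hchain, hdom, hm0⟩ := key
    obtain ⟨j, hmj, hjs, hjred⟩ := exists_red hb hchain hms
    set M := {j | (∀ T, T ⊂ S → kf s c T ≤ j) ∧ j ≤ s ∧ c (Fset n s S j) = false} with hM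
    have hjM : j ∈ M := ⟨fun T hT => (hdom T hT).trans hmj, hjs, hjred⟩
    have hkeq : kf s c S = sInf M := kf_eq s c S
    have hmem : kf s c S ∈ M := hkeq ▸ Nat.sInf_mem ⟨j, hjM⟩
    obtain ⟨hdom', hle', hred'⟩ := hmem
    have hmk : m ≤ kf s c S := by
      rcases hm0 with rfl | ⟨T, hT, rfl⟩
      · exact Nat.zero_le _
      · exact hdom' T hT
    have hbetween : ∀ i, m ≤ i → i < kf s c S → c (Fset n s S i) = true := by
      intro i hmi hik
      by_contra hbl
      have hiM : i ∈ M := ⟨fun T hT => (hdom T hT).trans hmi, by omega,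
        by simpa using hbl⟩
      have := Nat.sInf_le hiM
      omega
    exact ⟨hdom', hle', hred', chain_extend hchain hmk hle' hbetween⟩

lemma upper (n s : ℕ) (c : Finset (Fin (n + s)) → Bool) :
    (∃ f : Fin (s + 1) ↪o Finset (Fin (n + s)), ∀ x, c (f x) = true) ∨
    (∃ f : Finset (Fin n) ↪o Finset (Fin (n + s)), ∀ x, c (f x) = false) := by
  by_cases hb : ∃ f : Fin (s + 1) ↪o Finset (Fin (n + s)), ∀ x, c (f x) = true
  · exact Or.inl hb
  right
  have spec := kf_spec c hb
  refine ⟨OrderEmbedding.ofMapLEIff (fun S => Fset n s S (kf s c S)) ?_,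
    fun S => (spec S).2.2.1⟩
  intro a b
  constructor
  · intro h x hx
    have h1 : Fin.castAdd s x ∈ Fset n s a (kf s c a) := (mem_Fset_castAdd a _ x).2 hx
    exact (mem_Fset_castAdd b _ x).1 (h h1)
  · intro hab
    rcases eq_or_ne a b with rfl | hne
    · exact le_refl _
    · have hab' : a ⊂ b := Finset.ssubset_iff_subset_ne.2 ⟨hab, hne⟩
      exact Fset_subset_Fset hab ((spec b).1 a hab')

lemma lower (n s m : ℕ) (hm : m < n + s) :
    ∃ c : Finset (Fin m) → Bool,
      ¬ (∃ f : Fin (s + 1) ↪o Finset (Fin m), ∀ x, c (f x) = true) ∧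
      ¬ (∃ f : Finset (Fin n) ↪o Finset (Fin m), ∀ x, c (f x) = false) := by
  refine ⟨fun A => decide (A.card < s), ?_, ?_⟩
  · rintro ⟨f, hf⟩
    have hcard : ∀ i : ℕ, (h : i ≤ s) → i ≤ (f ⟨i, by omega⟩).card := by
      intro i
      induction i with
      | zero => intro _; exact Nat.zero_le _
      | succ i ihi =>
        intro h
        have h1 : (f ⟨i, by omega⟩ : Finset (Fin m)) < f ⟨i + 1, by omega⟩ :=
          f.strictMono (by simp [Fin.lt_def])
        have h2 := Finset.card_lt_card (Finset.lt_iff_ssubset.1 h1)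
        have := ihi (by omega)
        omega
    have h1 := hcard s (le_refl s)
    have h2 := hf ⟨s, by omega⟩
    simp only [decide_eq_true_eq] at h2
    omega
  · rintro ⟨f, hf⟩
    have hred : ∀ X : Finset (Fin n), s ≤ (f X).card := by
      intro X
      have := hf X
      simpa using this
    set D : ℕ → Finset (Fin n) := fun i => Finset.univ.filter (fun x => x.val < i) with hD
    have hDss : ∀ i j : ℕ, i < j → j ≤ n → D i ⊂ D j := by
      intro i j hij hjn
      rw [Finset.ssubset_iff_of_subset]
      · exact ⟨⟨i, by omega⟩, by simp [hD]; omega⟩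
      · intro x hx
        simp [hD] at hx ⊢
        omega
    have hcard : ∀ i : ℕ, i ≤ n → s + i ≤ (f (D i)).card := by
      intro i
      induction i with
      | zero => intro _; simpa using hred (D 0)
      | succ i ihi =>
        intro h
        have h1 : (f (D i) : Finset (Fin m)) < f (D (i + 1)) :=
          f.strictMono (Finset.lt_iff_ssubset.2 (hDss i (i + 1) (by omega) h))
        have h2 := Finset.card_lt_card (Finset.lt_iff_ssubset.1 h1)
        have := ihi (by omega)
        omega
    have h1 := hcard n (le_refl n)
    have h2 : (f (D n)).card ≤ m := (Finset.card_le_univ _).trans (by simp)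
    omega

end ChainCube


/-- `R(C_t, Q_n) = n + t - 1`, where `C_t` is the `t`-element chain (here `Fin t`). -/
theorem chain_vs_cube_ramsey (n t : ℕ) (hn : 1 ≤ n) (ht : 1 ≤ t) :
    posetRamsey (Fin t) (Finset (Fin n)) = n + t - 1 := by
  obtain ⟨s, rfl⟩ : ∃ s, t = s + 1 := ⟨t - 1, by omega⟩
  have hN : n + (s + 1) - 1 = n + s := by omega
  rw [hN]
  unfold posetRamsey
  have hmem : (n + s) ∈ {N : ℕ | ∀ c : Finset (Fin N) → Bool,
      (∃ f : Fin (s + 1) ↪o Finset (Fin N), ∀ x, c (f x) = true) ∨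
      (∃ f : Finset (Fin n) ↪o Finset (Fin N), ∀ x, c (f x) = false)} :=
    fun c => ChainCube.upper n s c
  apply le_antisymm
  · exact Nat.sInf_le hmem
  · apply le_csInf ⟨_, hmem⟩
    intro m hm
    by_contra h
    push_neg at h
    obtain ⟨c, hc1, hc2⟩ := ChainCube.lower n s m h
    rcases hm c with h1 | h2
    · exact hc1 h1
    · exact hc2 h2
end

section
/- For all natural numbers n ≥ 1 and t₁ ≥ t₂ ≥ 1, the poset Ramsey number of the chain composition C_{t₁,t₂} versus the Boolean lattice satisfies R(C_{t₁,t₂}, Q_n) = n + t₁ + 1. -/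
open Finset in

/-- **Chain lemma**: every blue/red coloring of `Q_{n+m}` contains a red copy of `Q_n`
or a blue chain with `m+1` elements. -/
lemma chainLemma (n m : ℕ) (c : Finset (Fin (n + m)) → Bool) :
    (∃ f : Finset (Fin n) ↪o Finset (Fin (n + m)), ∀ S, c (f S) = false) ∨
    (∃ g : Fin (m + 1) → Finset (Fin (n + m)), StrictMono g ∧ ∀ i, c (g i) = true) := by
  classical
  by_cases hBC : ∃ g : Fin (m + 1) → Finset (Fin (n + m)), StrictMono g ∧ ∀ i, c (g i) = true
  · exact Or.inr hBC
  left
  -- embedding of the X-coordinates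
  have hinj : Function.Injective (fun x : Fin n => (⟨x.1, by omega⟩ : Fin (n + m))) := by
    intro a b h
    simpa [Fin.ext_iff] using h
  set emb : Fin n ↪ Fin (n + m) := ⟨fun x => ⟨x.1, by omega⟩, hinj⟩ with hemb
  have hembval : ∀ x : Fin n, (emb x).1 = x.1 := fun x => rfl
  set SX : Finset (Fin n) → Finset (Fin (n + m)) := fun S => S.map emb with hSX
  have hSXlt : ∀ (S : Finset (Fin n)) (y : Fin (n + m)), y ∈ SX S → y.1 < n := by
    intro S y hy
    rcases Finset.mem_map.1 hy with ⟨x, _, rfl⟩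
    exact x.2
  have hSXmono : ∀ {S T : Finset (Fin n)}, S ⊆ T → SX S ⊆ SX T := by
    intro S T h
    exact Finset.map_subset_map.2 h
  set Y : ℕ → Finset (Fin (n + m)) := fun j => univ.filter fun y => n ≤ y.1 ∧ y.1 < n + j
    with hY
  have hYmem : ∀ (j : ℕ) (y : Fin (n + m)), y ∈ Y j ↔ n ≤ y.1 ∧ y.1 < n + j := by
    intro j y; simp [hY]
  have hYmono : ∀ {i j : ℕ}, i ≤ j → Y i ⊆ Y j := by
    intro i j hij y hy
    rw [hYmem] at hy ⊢
    omega
  -- good chains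
  set P : Finset (Fin n) → ℕ → Prop := fun S k =>
    ∃ Z : ℕ → Finset (Fin (n + m)),
      (∀ i j, i < j → j < k → Z i ⊂ Z j) ∧ (∀ i < k, c (Z i) = true) ∧
      (∀ i < k, Z i ⊆ SX S ∪ Y i) with hP
  have hP0 : ∀ S, P S 0 := by
    intro S
    exact ⟨fun _ => ∅, by omega, by omega, by omega⟩
  have hPtrunc : ∀ S k k', k' ≤ k → P S k → P S k' := by
    rintro S k k' hk ⟨Z, h1, h2, h3⟩
    exact ⟨Z, fun i j hij hj => h1 i j hij (by omega), fun i hi => h2 i (by omega),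
      fun i hi => h3 i (by omega)⟩
  have hPm : ∀ S, ¬ P S (m + 1) := by
    rintro S ⟨Z, h1, h2, h3⟩
    refine hBC ⟨fun i => Z i.1, ?_, fun i => h2 i.1 i.2⟩
    intro i j hij
    exact h1 i.1 j.1 hij j.2
  have hPle : ∀ S k, P S k → k ≤ m := by
    intro S k hk
    by_contra h
    exact hPm S (hPtrunc S k (m + 1) (by omega) hk)
  set kk : Finset (Fin n) → ℕ := fun S => Nat.findGreatest (P S) m with hkk
  have hPkk : ∀ S, P S (kk S) := fun S => Nat.findGreatest_spec (Nat.zero_le m) (hP0 S)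
  have hkkle : ∀ S, kk S ≤ m := fun S => Nat.findGreatest_le m
  have hkkmax : ∀ S k, kk S < k → ¬ P S k := by
    intro S k hk hPk
    rcases le_or_gt k m with h | h
    · exact Nat.findGreatest_is_greatest hk h hPk
    · exact absurd (hPle S k hPk) (by omega)
  have hPmono : ∀ {S T : Finset (Fin n)}, S ⊆ T → ∀ k, P S k → P T k := by
    rintro S T hST k ⟨Z, h1, h2, h3⟩
    exact ⟨Z, h1, h2, fun i hi =>
      (h3 i hi).trans (Finset.union_subset_union (hSXmono hST) (le_refl _))⟩
  have hkkmono : ∀ {S T : Finset (Fin n)}, S ⊆ T → kk S ≤ kk T := by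
    intro S T hST
    exact Nat.le_findGreatest (hkkle S) (hPmono hST _ (hPkk S))
  set F : Finset (Fin n) → Finset (Fin (n + m)) := fun S => SX S ∪ Y (kk S) with hF
  have hFle : ∀ S T : Finset (Fin n), F S ⊆ F T ↔ S ⊆ T := by
    intro S T
    constructor
    · intro h x hx
      have hx' : emb x ∈ SX S := Finset.mem_map_of_mem emb hx
      have := h (Finset.mem_union_left _ hx')
      rcases Finset.mem_union.1 this with h' | h'
      · rcases Finset.mem_map.1 h' with ⟨x', hx', he⟩
        have : x' = x := by
          apply hinj
          exact he
        rwa [← this]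
      · have := (hYmem _ _).1 h'
        have := hembval x
        have := x.2
        omega
    · intro h
      exact Finset.union_subset_union (hSXmono h) (hYmono (hkkmono h))
  -- all F S are red
  have hred : ∀ S, c (F S) = false := by
    intro S
    by_contra hc
    have hc : c (F S) = true := by
      cases h : c (F S)
      · exact absurd h hc
      · rfl
    obtain ⟨Z, h1, h2, h3⟩ := hPkk S
    set k := kk S with hk
    -- extended chain
    set Z' : ℕ → Finset (Fin (n + m)) := fun i => if i < k then Z i else F S with hZ'
    apply hkkmax S (k + 1) (by omega)
    refine ⟨Z', ?_, ?_, ?_⟩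
    · intro i j hij hj
      rcases lt_or_ge j k with hjk | hjk
      · have : i < k := by omega
        simp only [hZ', if_pos hjk, if_pos this]
        exact h1 i j hij hjk
      · have hjk' : j = k := by omega
        have hik : i < k := by omega
        have hk1 : 1 ≤ k := by omega
        simp only [hZ', if_pos hik, if_neg (by omega : ¬ j < k)]
        constructor
        · exact (h3 i hik).trans (Finset.union_subset_union (le_refl _)
            (hYmono (by omega : i ≤ k)))
        · intro hsub
          -- the witness element of value n + (k-1)
          have hkm : k ≤ m := hkkle S
          set w : Fin (n + m) := ⟨n + (k - 1), by omega⟩ with hw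
          have hwF : w ∈ F S := by
            apply Finset.mem_union_right
            rw [hYmem]
            show n ≤ n + (k - 1) ∧ n + (k - 1) < n + k
            omega
          have hwZ : w ∉ Z i := by
            intro hmem
            have := h3 i hik hmem
            rcases Finset.mem_union.1 this with h' | h'
            · have h2 : n + (k - 1) < n := hSXlt S w h'
              omega
            · have h2 : n ≤ n + (k - 1) ∧ n + (k - 1) < n + i := (hYmem _ _).1 h'
              omega
          exact hwZ (hsub hwF)
    · intro i hi
      rcases lt_or_ge i k with hik | hik
      · simp only [hZ', if_pos hik]; exact h2 i hik
      · simp only [hZ', if_neg (by omega : ¬ i < k)]; exact hc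
    · intro i hi
      rcases lt_or_ge i k with hik | hik
      · simp only [hZ', if_pos hik]; exact h3 i hik
      · have hik' : i = k := by omega
        subst hik'
        simp only [hZ', if_neg (lt_irrefl k), hF]
        rw [← hk]
  exact ⟨OrderEmbedding.ofMapLEIff F (fun S T => hFle S T), hred⟩


open Finset in
lemma upperBound (n t₁ t₂ : ℕ) (ht₁ : 1 ≤ t₁) (ht₂ : 1 ≤ t₂) (ht : t₂ ≤ t₁)
    (c : Finset (Fin (n + t₁ + 1)) → Bool) :
    (∃ f : (Fin t₁ ⊕ Fin t₂) ↪o Finset (Fin (n + t₁ + 1)), ∀ x, c (f x) = true) ∨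
    (∃ f : Finset (Fin n) ↪o Finset (Fin (n + t₁ + 1)), ∀ x, c (f x) = false) := by
  classical
  set m := t₁ - 1 with hm
  have hmt : m + 1 = t₁ := by omega
  have hinj : Function.Injective
      (fun x : Fin (n + m) => (⟨x.1, by omega⟩ : Fin (n + t₁ + 1))) := by
    intro x y h
    simpa [Fin.ext_iff] using h
  set emb : Fin (n + m) ↪ Fin (n + t₁ + 1) := ⟨fun x => ⟨x.1, by omega⟩, hinj⟩ with hemb
  have hmaplt : ∀ (T : Finset (Fin (n + m))) (y : Fin (n + t₁ + 1)),
      y ∈ T.map emb → y.1 < n + m := by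
    intro T y hy
    rcases Finset.mem_map.1 hy with ⟨x, _, rfl⟩
    exact x.2
  set a : Fin (n + t₁ + 1) := ⟨n + m, by omega⟩ with ha
  set b : Fin (n + t₁ + 1) := ⟨n + m + 1, by omega⟩ with hb
  set eA : Finset (Fin (n + m)) → Finset (Fin (n + t₁ + 1)) :=
    fun T => insert a (T.map emb) with heA
  set eB : Finset (Fin (n + m)) → Finset (Fin (n + t₁ + 1)) :=
    fun T => insert b (T.map emb) with heB
  -- generic subcube-embedding fact
  have hsub : ∀ (x : Fin (n + t₁ + 1)), n + m ≤ x.1 →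
      ∀ T T' : Finset (Fin (n + m)),
      insert x (T.map emb) ⊆ insert x (T'.map emb) ↔ T ⊆ T' := by
    intro x hx T T'
    constructor
    · intro h y hy
      have hy' : emb y ∈ T.map emb := Finset.mem_map_of_mem emb hy
      have := h (Finset.mem_insert_of_mem hy')
      rcases Finset.mem_insert.1 this with h' | h'
      · exfalso
        have : (emb y).1 = x.1 := by rw [h']
        have : y.1 = x.1 := this
        have := y.2
        omega
      · rcases Finset.mem_map.1 h' with ⟨z, hz, hze⟩
        have : z = y := hinj hze
        rwa [← this]
    · intro h
      exact Finset.insert_subset_insert _ (Finset.map_subset_map.2 h)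
  have hA : ∀ T T', eA T ⊆ eA T' ↔ T ⊆ T' := hsub a (le_refl _)
  have hB : ∀ T T', eB T ⊆ eB T' ↔ T ⊆ T' := hsub b (by show n + m ≤ n + m + 1; omega)
  have hAB : ∀ T T', ¬ eA T ⊆ eB T' := by
    intro T T' h
    have haT : a ∈ eA T := Finset.mem_insert_self _ _
    have := h haT
    rcases Finset.mem_insert.1 this with h' | h'
    · have : (n + m : ℕ) = n + m + 1 := congrArg Fin.val h'
      omega
    · have := hmaplt T' a h'
      simp [ha] at this
  have hBA : ∀ T T', ¬ eB T ⊆ eA T' := by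
    intro T T' h
    have hbT : b ∈ eB T := Finset.mem_insert_self _ _
    have := h hbT
    rcases Finset.mem_insert.1 this with h' | h'
    · have : (n + m + 1 : ℕ) = n + m := congrArg Fin.val h'
      omega
    · have := hmaplt T' b h'
      simp [hb] at this
  rcases chainLemma n m (fun T => c (eA T)) with ⟨f0, hf0⟩ | ⟨gA, hgAm, hgAb⟩
  · right
    exact ⟨f0.trans (OrderEmbedding.ofMapLEIff eA hA), fun S => hf0 S⟩
  rcases chainLemma n m (fun T => c (eB T)) with ⟨f0, hf0⟩ | ⟨gB, hgBm, hgBb⟩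
  · right
    exact ⟨f0.trans (OrderEmbedding.ofMapLEIff eB hB), fun S => hf0 S⟩
  left
  have key : ∀ (i : Fin (m+1)) (i' : Fin (m+1)), eA (gA i) ≤ eA (gA i') ↔ i ≤ i' := by
    intro i i'
    rw [show (eA (gA i) ≤ eA (gA i')) = (eA (gA i) ⊆ eA (gA i')) from rfl, hA,
      ← hgAm.le_iff_le]
  have keyB : ∀ (i : Fin (m+1)) (i' : Fin (m+1)), eB (gB i) ≤ eB (gB i') ↔ i ≤ i' := by
    intro i i'
    rw [show (eB (gB i) ≤ eB (gB i')) = (eB (gB i) ⊆ eB (gB i')) from rfl, hB,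
      ← hgBm.le_iff_le]
  have hFiff : ∀ x y : Fin t₁ ⊕ Fin t₂,
      Sum.elim (fun i : Fin t₁ => eA (gA ⟨i.1, by omega⟩))
        (fun j : Fin t₂ => eB (gB ⟨j.1, by omega⟩)) x ≤
      Sum.elim (fun i : Fin t₁ => eA (gA ⟨i.1, by omega⟩))
        (fun j : Fin t₂ => eB (gB ⟨j.1, by omega⟩)) y ↔ x ≤ y := by
    rintro (i | j) (i' | j')
    · simp only [Sum.elim_inl, Sum.inl_le_inl_iff, key]
      exact Iff.rfl
    · simp only [Sum.elim_inl, Sum.elim_inr]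
      exact iff_of_false (hAB _ _) Sum.not_inl_le_inr
    · simp only [Sum.elim_inl, Sum.elim_inr]
      exact iff_of_false (hBA _ _) Sum.not_inr_le_inl
    · simp only [Sum.elim_inr, Sum.inr_le_inr_iff, keyB]
      exact Iff.rfl
  refine ⟨OrderEmbedding.ofMapLEIff _ hFiff, ?_⟩
  rintro (i | j)
  · exact hgAb _
  · exact hgBb _

open Finset in
lemma lowerBound (n t₁ t₂ N : ℕ) (ht₁ : 1 ≤ t₁) (ht₂ : 1 ≤ t₂) (hN : N ≤ n + t₁) :
    ¬ (∀ c : Finset (Fin N) → Bool,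
      (∃ f : (Fin t₁ ⊕ Fin t₂) ↪o Finset (Fin N), ∀ x, c (f x) = true) ∨
      (∃ f : Finset (Fin n) ↪o Finset (Fin N), ∀ x, c (f x) = false)) := by
  classical
  intro hc
  rcases hc (fun S => decide (S = ∅) || decide (n + 1 ≤ S.card)) with ⟨f, hf⟩ | ⟨f, hf⟩
  · -- blue copy of the two chains
    have hblue : ∀ x, f x = ∅ ∨ n + 1 ≤ (f x).card := by
      intro x
      simpa [Bool.or_eq_true, decide_eq_true_iff] using hf x
    have hcross : ∀ (i : Fin t₁) (j : Fin t₂), ¬ f (Sum.inl i) ≤ f (Sum.inr j) := by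
      intro i j h
      exact Sum.not_inl_le_inr (f.le_iff_le.mp h)
    have hcross2 : ∀ (i : Fin t₁) (j : Fin t₂), ¬ f (Sum.inr j) ≤ f (Sum.inl i) := by
      intro i j h
      exact Sum.not_inr_le_inl (f.le_iff_le.mp h)
    have hne : ∀ i : Fin t₁, f (Sum.inl i) ≠ ∅ := by
      intro i h
      apply hcross i ⟨0, ht₂⟩
      rw [h]
      exact Finset.empty_subset _
    have hcard : ∀ i : Fin t₁, n + 1 ≤ (f (Sum.inl i)).card := by
      intro i
      rcases hblue (Sum.inl i) with h | h
      · exact absurd h (hne i)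
      · exact h
    have hgrow : ∀ k : ℕ, ∀ hk : k < t₁, n + 1 + k ≤ (f (Sum.inl ⟨k, hk⟩)).card := by
      intro k
      induction k with
      | zero => intro hk; simpa using hcard ⟨0, hk⟩
      | succ k ih =>
        intro hk
        have h1 := ih (by omega)
        have hlt : f (Sum.inl ⟨k, by omega⟩) < f (Sum.inl ⟨k + 1, hk⟩) := by
          apply f.strictMono
          apply Sum.inl_lt_inl_iff.mpr
          simp [Fin.lt_def]
        have h2 : (f (Sum.inl ⟨k, by omega⟩)).card < (f (Sum.inl ⟨k + 1, hk⟩)).card :=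
          Finset.card_lt_card hlt
        omega
    have hfin := hgrow (t₁ - 1) (by omega)
    have hle : (f (Sum.inl ⟨t₁ - 1, by omega⟩)).card ≤ N := by
      have := Finset.card_le_univ (f (Sum.inl ⟨t₁ - 1, by omega⟩))
      simpa using this
    have huniv : f (Sum.inl ⟨t₁ - 1, by omega⟩) = Finset.univ := by
      apply Finset.eq_univ_of_card
      rw [Fintype.card_fin]
      omega
    apply hcross2 ⟨t₁ - 1, by omega⟩ ⟨0, ht₂⟩
    rw [huniv]
    exact Finset.subset_univ _
  · -- red copy of the cube
    have hred : ∀ S, f S ≠ ∅ ∧ (f S).card < n + 1 := by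
      intro S
      have := hf S
      simp only [Bool.or_eq_false_iff, decide_eq_false_iff_not, not_le] at this
      exact this
    set q : ℕ → Finset (Fin n) := fun k => univ.filter (fun j => j.1 < k) with hq
    have hqlt : ∀ k, k < n → q k < q (k + 1) := by
      intro k hk
      constructor
      · intro x hx
        simp only [hq, Finset.mem_filter, Finset.mem_univ, true_and] at hx ⊢
        omega
      · intro hsub
        have h1 : (⟨k, hk⟩ : Fin n) ∈ q (k + 1) := by
          simp [hq]
        have h2 := hsub h1
        simp [hq] at h2
    have hgrow : ∀ k, k ≤ n → k + 1 ≤ (f (q k)).card := by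
      intro k
      induction k with
      | zero =>
        intro _
        have h1 : (f (q 0)).Nonempty := Finset.nonempty_iff_ne_empty.mpr (hred (q 0)).1
        simpa using Finset.card_pos.mpr h1
      | succ k ih =>
        intro hk
        have h1 := ih (by omega)
        have hlt : f (q k) < f (q (k + 1)) := f.strictMono (hqlt k (by omega))
        have h2 := Finset.card_lt_card hlt
        omega
    have h1 := hgrow n (le_refl n)
    have h2 := (hred (q n)).2
    omega

/-- `R(C_{t₁,t₂}, Q_n) = n + t₁ + 1`: the chain composition of two parallel chains
(on `Fin t₁ ⊕ Fin t₂` with the disjoint-sum order) versus the Boolean lattice. -/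
theorem two_chain_composition_vs_cube_ramsey (n t₁ t₂ : ℕ) (hn : 1 ≤ n)
    (ht₂ : 1 ≤ t₂) (ht : t₂ ≤ t₁) :
    posetRamsey (Fin t₁ ⊕ Fin t₂) (Finset (Fin n)) = n + t₁ + 1 := by
  have ht₁ : 1 ≤ t₁ := le_trans ht₂ ht
  unfold posetRamsey
  apply le_antisymm
  · apply Nat.sInf_le
    intro c
    exact upperBound n t₁ t₂ ht₁ ht₂ ht c
  · apply le_csInf
    · exact ⟨n + t₁ + 1, fun c => upperBound n t₁ t₂ ht₁ ht₂ ht c⟩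
    · intro N hN
      by_contra hlt
      exact lowerBound n t₁ t₂ N ht₁ ht₂ (by omega) hN
end

section
/- For all natural numbers n ≥ 1, t and t′ with t − 1 ≥ t′ ≥ 1, the poset Ramsey number of the chain composition C_{t,t−1,t′} versus the Boolean lattice satisfies R(C_{t,t−1,t′}, Q_n) = n + t + 2. -/
open Finset

namespace ThreeChainAux

variable {n k : ℕ}

/-- Embed `Finset (Fin n)` into `Finset (Fin (n+k))`. -/
def lift (k : ℕ) (S : Finset (Fin n)) : Finset (Fin (n + k)) :=
  S.map (Fin.castAddEmb k)

/-- The set `{n, n+1, ..., n+j-1}` inside `Fin (n+k)`. -/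
def zset (n : ℕ) (j : ℕ) : Finset (Fin (n + k)) :=
  univ.filter (fun x => n ≤ x.val ∧ x.val < n + j)

lemma mem_lift_val {S : Finset (Fin n)} {x : Fin (n+k)} (hx : x ∈ lift k S) : x.val < n := by
  simp only [lift, mem_map] at hx
  obtain ⟨y, _, rfl⟩ := hx
  simpa using y.isLt

lemma mem_lift_iff {S : Finset (Fin n)} {y : Fin n} :
    (Fin.castAddEmb k) y ∈ lift k S ↔ y ∈ S := by
  simp [lift]

lemma mem_zset {j : ℕ} {x : Fin (n+k)} : x ∈ zset n j ↔ n ≤ x.val ∧ x.val < n + j := by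
  simp [zset]

lemma lift_mono {S T : Finset (Fin n)} (h : S ⊆ T) : lift k S ⊆ lift (n := n) k T :=
  Finset.map_subset_map.mpr h

lemma zset_mono {j j' : ℕ} (h : j ≤ j') : zset n j ⊆ (zset n j' : Finset (Fin (n+k))) := by
  intro x hx
  rw [mem_zset] at hx ⊢
  omega

lemma union_mono {S T : Finset (Fin n)} {j j' : ℕ} (hST : S ⊆ T) (hj : j ≤ j') :
    lift k S ∪ zset n j ⊆ lift k T ∪ zset n j' :=
  Finset.union_subset_union (lift_mono hST) (zset_mono hj)

lemma union_ssub {S T : Finset (Fin n)} {j j' : ℕ} (hST : S ⊆ T) (hj : j < j') (hj' : j' ≤ k) :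
    lift k S ∪ zset n j ⊂ lift k T ∪ zset n j' := by
  refine ⟨union_mono hST (le_of_lt hj), ?_⟩
  intro hcon
  have hxlt : n + j < n + k := by omega
  have hxv : (⟨n + j, hxlt⟩ : Fin (n+k)).val = n + j := rfl
  have hx2 : (⟨n + j, hxlt⟩ : Fin (n+k)) ∈ lift k T ∪ zset n j' := by
    rw [mem_union, mem_zset]
    right
    exact ⟨by omega, by omega⟩
  have hx3 := hcon hx2
  rw [mem_union] at hx3
  rcases hx3 with h | h
  · have := mem_lift_val h
    omega
  · rw [mem_zset] at h
    omega

lemma subset_extract {S T : Finset (Fin n)} {j j' : ℕ}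
    (h : lift k S ∪ zset n j ⊆ lift k T ∪ zset n j') : S ⊆ T := by
  intro y hy
  have h1 : (Fin.castAddEmb k) y ∈ lift k S ∪ zset n j := by
    rw [mem_union]; left; exact mem_lift_iff.mpr hy
  have h2 := h h1
  rw [mem_union] at h2
  rcases h2 with h2 | h2
  · exact mem_lift_iff.mp h2
  · rw [mem_zset] at h2
    have : ((Fin.castAddEmb k) y).val < n := by simpa using y.isLt
    omega



/-- Witness predicate: a blue chain of length `ℓ` of sets `lift S_p ∪ zset j_p`
with `S_p ⊆ S` and `j_p ≤ p`. -/
def wit (c : Finset (Fin (n + k)) → Bool) (S : Finset (Fin n)) (ℓ : ℕ) : Prop :=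
  ∃ (SS : Fin ℓ → Finset (Fin n)) (jj : Fin ℓ → ℕ),
    (∀ p, SS p ⊆ S) ∧ (∀ p, jj p ≤ p.val) ∧
    StrictMono (fun p => lift k (SS p) ∪ zset n (jj p)) ∧
    (∀ p, c (lift k (SS p) ∪ zset n (jj p)) = true)

lemma wit_zero (c : Finset (Fin (n + k)) → Bool) (S : Finset (Fin n)) : wit c S 0 :=
  ⟨Fin.elim0, Fin.elim0, fun p => p.elim0, fun p => p.elim0,
    fun p => p.elim0, fun p => p.elim0⟩

lemma wit_mono (c : Finset (Fin (n + k)) → Bool) {S T : Finset (Fin n)} (hST : S ⊆ T)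
    {ℓ : ℕ} (h : wit c S ℓ) : wit c T ℓ := by
  obtain ⟨SS, jj, h1, h2, h3, h4⟩ := h
  exact ⟨SS, jj, fun p => (h1 p).trans hST, h2, h3, h4⟩

/-- The chain lemma: if `Q_{n+k}` contains no red induced copy of `Q_n`, then it
contains a blue chain with `k+1` elements. -/
theorem chain_lemma (c : Finset (Fin (n + k)) → Bool)
    (hred : ¬ ∃ f : Finset (Fin n) ↪o Finset (Fin (n + k)), ∀ x, c (f x) = false) :
    ∃ X : Fin (k + 1) → Finset (Fin (n + k)), StrictMono X ∧ ∀ p, c (X p) = true := by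
  classical
  by_contra hblue
  set b : Finset (Fin n) → ℕ := fun S => Nat.findGreatest (wit c S) k with hbdef
  have hb_le : ∀ S, b S ≤ k := fun S => Nat.findGreatest_le k
  have hb_wit : ∀ S, wit c S (b S) := fun S =>
    Nat.findGreatest_spec (Nat.zero_le k) (wit_zero c S)
  have hb_mono : ∀ {S T : Finset (Fin n)}, S ⊆ T → b S ≤ b T := by
    intro S T hST
    exact Nat.le_findGreatest (hb_le S) (wit_mono c hST (hb_wit S))
  -- key: every `lift S ∪ zset (b S)` is red
  have key : ∀ S, c (lift k S ∪ zset n (b S)) = false := by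
    intro S
    by_contra hc
    rw [Bool.not_eq_false] at hc
    obtain ⟨SS, jj, h1, h2, h3, h4⟩ := hb_wit S
    -- extended witness of length b S + 1
    have hw : wit c S (b S + 1) := by
      refine ⟨Fin.snoc SS S, Fin.snoc jj (b S), ?_, ?_, ?_, ?_⟩
      · intro p
        refine Fin.lastCases ?_ ?_ p
        · rw [Fin.snoc_last]
        · intro q; rw [Fin.snoc_castSucc]; exact h1 q
      · intro p
        refine Fin.lastCases ?_ ?_ p
        · rw [Fin.snoc_last]; exact le_of_eq rfl
        · intro q; rw [Fin.snoc_castSucc]; exact (h2 q).trans (by simp)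
      · intro p q hpq
        revert hpq
        refine Fin.lastCases ?_ ?_ q
        · intro hpq
          have hp : p ≠ Fin.last (b S) := Fin.ne_last_of_lt hpq
          obtain ⟨p', rfl⟩ := Fin.exists_castSucc_eq.mpr hp
          simp only [Fin.snoc_castSucc, Fin.snoc_last]
          exact union_ssub (h1 p') (lt_of_le_of_lt (h2 p') p'.isLt) (hb_le S)
        · intro q' hpq
          have hp : p ≠ Fin.last (b S) := Fin.ne_last_of_lt hpq
          obtain ⟨p', rfl⟩ := Fin.exists_castSucc_eq.mpr hp
          simp only [Fin.snoc_castSucc]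
          exact h3 (by exact_mod_cast hpq)
      · intro p
        refine Fin.lastCases ?_ ?_ p
        · simp only [Fin.snoc_last]; exact hc
        · intro q; simp only [Fin.snoc_castSucc]; exact h4 q
    rcases lt_or_eq_of_le (hb_le S) with hlt | heq
    · exact Nat.findGreatest_is_greatest (Nat.lt_succ_self _) hlt hw
    · -- b S = k : the witness is a blue chain of length k+1
      obtain ⟨SS', jj', _, _, g3, g4⟩ := hw
      have e : k + 1 = b S + 1 := by omega
      refine hblue ⟨fun p => lift k (SS' (Fin.cast e p)) ∪ zset n (jj' (Fin.cast e p)), ?_, ?_⟩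
      · intro a b hab
        exact g3 (by simp only [Fin.lt_def, Fin.coe_cast]; exact Fin.lt_def.mp hab)
      · intro p
        exact g4 (Fin.cast e p)
  -- otherwise we get a red copy of Q_n
  refine hred ⟨OrderEmbedding.ofMapLEIff (fun S => lift k S ∪ zset n (b S)) ?_, ?_⟩
  · intro S T
    constructor
    · intro h
      rw [Finset.le_iff_subset] at h ⊢
      exact subset_extract h
    · intro h
      rw [Finset.le_iff_subset] at h ⊢
      exact union_mono h (hb_mono h)
  · intro S
    exact key S

section Upper

variable (n k : ℕ)

/-- Coordinate `n+k+w` in `Fin (n+k+3)`. -/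
def coord3 (w : Fin 3) : Fin (n + k + 3) := ⟨n + k + w.val, by omega⟩

/-- Embedding of the subcube `Q_{n+k}` of sets containing exactly the extra
coordinate `n+k+w` among the last three coordinates. -/
def emb3 (w : Fin 3) (S : Finset (Fin (n + k))) : Finset (Fin (n + k + 3)) :=
  insert (coord3 n k w) (S.map (Fin.castAddEmb 3))

variable {n k}

lemma mem_map3_val {S : Finset (Fin (n+k))} {x : Fin (n+k+3)}
    (hx : x ∈ S.map (Fin.castAddEmb 3)) : x.val < n + k := by
  simp only [mem_map] at hx
  obtain ⟨y, _, rfl⟩ := hx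
  simpa using y.isLt

lemma coord3_not_mem {w : Fin 3} {S : Finset (Fin (n+k))} :
    coord3 n k w ∉ S.map (Fin.castAddEmb 3) := by
  intro h
  have := mem_map3_val h
  simp only [coord3] at this
  omega

lemma emb3_subset_iff {w : Fin 3} {S T : Finset (Fin (n+k))} :
    emb3 n k w S ⊆ emb3 n k w T ↔ S ⊆ T := by
  constructor
  · intro h y hy
    have h1 : (Fin.castAddEmb 3) y ∈ emb3 n k w S := by
      simp only [emb3, mem_insert, mem_map]
      right; exact ⟨y, hy, rfl⟩
    have h2 := h h1
    simp only [emb3, mem_insert] at h2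
    rcases h2 with h2 | h2
    · exfalso
      have : ((Fin.castAddEmb 3) y).val < n + k := by simpa using y.isLt
      rw [h2] at this
      simp only [coord3] at this
      omega
    · simp only [mem_map] at h2
      obtain ⟨z, hz, hzy⟩ := h2
      have : z = y := (Fin.castAddEmb 3).injective hzy
      rwa [this] at hz
  · intro h
    exact Finset.insert_subset_insert _ (Finset.map_subset_map.mpr h)

lemma emb3_cross {w w' : Fin 3} (hww : w ≠ w') {S T : Finset (Fin (n+k))} :
    ¬ emb3 n k w S ⊆ emb3 n k w' T := by
  intro h
  have h1 : coord3 n k w ∈ emb3 n k w S := mem_insert_self _ _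
  have h2 := h h1
  simp only [emb3, mem_insert] at h2
  rcases h2 with h2 | h2
  · apply hww
    have : n + k + w.val = n + k + w'.val := congrArg Fin.val h2
    exact Fin.ext (by omega)
  · exact coord3_not_mem h2

/-- `emb3` as an order embedding. -/
def E3 (w : Fin 3) : Finset (Fin (n + k)) ↪o Finset (Fin (n + k + 3)) :=
  OrderEmbedding.ofMapLEIff (emb3 n k w) (fun S T => by
    rw [Finset.le_iff_subset, Finset.le_iff_subset]
    exact emb3_subset_iff)

lemma E3_apply (w : Fin 3) (S : Finset (Fin (n+k))) : E3 w S = emb3 n k w S := rfl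

/-- Upper bound: in `Q_{n+k+3}`, any coloring yields a blue copy of three parallel
chains of lengths `≤ k+1` or a red copy of `Q_n`. -/
theorem upper_bound (t1 t2 t3 : ℕ) (h1 : t1 ≤ k + 1) (h2 : t2 ≤ k + 1) (h3 : t3 ≤ k + 1)
    (c : Finset (Fin (n + k + 3)) → Bool) :
    (∃ F : (Fin t1 ⊕ Fin t2 ⊕ Fin t3) ↪o Finset (Fin (n + k + 3)), ∀ x, c (F x) = true) ∨
    (∃ f : Finset (Fin n) ↪o Finset (Fin (n + k + 3)), ∀ x, c (f x) = false) := by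
  classical
  by_cases hr : ∃ w : Fin 3, ∃ f : Finset (Fin n) ↪o Finset (Fin (n + k)),
      ∀ x, c (E3 w (f x)) = false
  · obtain ⟨w, f, hf⟩ := hr
    exact Or.inr ⟨f.trans (E3 w), hf⟩
  · push_neg at hr
    -- each subcube has a blue chain of length k+1
    have hch : ∀ w : Fin 3, ∃ X : Fin (k + 1) → Finset (Fin (n + k)),
        StrictMono X ∧ ∀ p, c (E3 w (X p)) = true := by
      intro w
      have := chain_lemma (fun S => c (E3 w S)) (by
        intro ⟨f, hf⟩
        obtain ⟨x, hx⟩ := hr w f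
        exact hx (hf x))
      exact this
    obtain ⟨X0, hX0m, hX0b⟩ := hch 0
    obtain ⟨X1, hX1m, hX1b⟩ := hch 1
    obtain ⟨X2, hX2m, hX2b⟩ := hch 2
    set G : (Fin t1 ⊕ Fin t2 ⊕ Fin t3) → Finset (Fin (n + k + 3)) := fun p =>
      match p with
      | Sum.inl i => E3 0 (X0 (Fin.castLE h1 i))
      | Sum.inr (Sum.inl i) => E3 1 (X1 (Fin.castLE h2 i))
      | Sum.inr (Sum.inr i) => E3 2 (X2 (Fin.castLE h3 i)) with hGdef
    have hsame : ∀ (r : ℕ) (hr' : r ≤ k + 1) (X : Fin (k+1) → Finset (Fin (n+k)))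
        (hX : StrictMono X) (w : Fin 3) (i j : Fin r),
        E3 (n := n) (k := k) w (X (Fin.castLE hr' i)) ≤ E3 w (X (Fin.castLE hr' j)) ↔ i ≤ j := by
      intro r hr' X hX w i j
      rw [Finset.le_iff_subset, E3_apply, E3_apply, emb3_subset_iff]
      constructor
      · intro h
        by_contra hij
        push_neg at hij
        have : X (Fin.castLE hr' j) ⊂ X (Fin.castLE hr' i) := hX (by
          rw [Fin.lt_def]; simpa using Fin.lt_def.mp hij)
        exact absurd h this.2
      · intro h
        rcases lt_or_eq_of_le h with h' | h'
        · exact (hX (show Fin.castLE hr' i < Fin.castLE hr' j by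
            rw [Fin.lt_def]; simpa using Fin.lt_def.mp h')).1
        · rw [h']
    have hcross : ∀ (p q : Fin t1 ⊕ Fin t2 ⊕ Fin t3), ¬ p ≤ q → ¬ G p ≤ G q → True := fun _ _ _ _ => trivial
    refine Or.inl ⟨OrderEmbedding.ofMapLEIff G ?_, ?_⟩
    · rintro (i | i | i) (j | j | j)
      · exact hsame t1 h1 X0 hX0m 0 i j |>.trans Sum.inl_le_inl_iff.symm
      · refine iff_of_false ?_ Sum.not_inl_le_inr
        rw [Finset.le_iff_subset]; exact emb3_cross (by decide)
      · refine iff_of_false ?_ Sum.not_inl_le_inr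
        rw [Finset.le_iff_subset]; exact emb3_cross (by decide)
      · refine iff_of_false ?_ Sum.not_inr_le_inl
        rw [Finset.le_iff_subset]; exact emb3_cross (by decide)
      · exact hsame t2 h2 X1 hX1m 1 i j |>.trans
          (Sum.inr_le_inr_iff.trans Sum.inl_le_inl_iff).symm
      · refine iff_of_false ?_ ?_
        · rw [Finset.le_iff_subset]; exact emb3_cross (by decide)
        · intro hcon
          rw [Sum.inr_le_inr_iff] at hcon
          exact Sum.not_inl_le_inr hcon
      · refine iff_of_false ?_ Sum.not_inr_le_inl
        rw [Finset.le_iff_subset]; exact emb3_cross (by decide)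
      · refine iff_of_false ?_ ?_
        · rw [Finset.le_iff_subset]; exact emb3_cross (by decide)
        · intro hcon
          rw [Sum.inr_le_inr_iff] at hcon
          exact Sum.not_inr_le_inl hcon
      · exact hsame t3 h3 X2 hX2m 2 i j |>.trans
          (Sum.inr_le_inr_iff.trans Sum.inr_le_inr_iff).symm
    · rintro (i | i | i)
      · exact hX0b _
      · exact hX1b _
      · exact hX2b _

end Upper

section Lower

/-- For a strictly monotone `g : Fin r → ℕ` we have `g i + (j - i) ≤ g j`. -/
lemma sm_card {r : ℕ} {g : Fin r → ℕ} (hg : StrictMono g) :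
    ∀ (d : ℕ) (i j : Fin r), j.val = i.val + d → g i + d ≤ g j := by
  intro d
  induction d with
  | zero =>
    intro i j h
    have : i = j := Fin.ext (by omega)
    subst this
    omega
  | succ d ih =>
    intro i j h
    have hj' : i.val + d < r := by have := j.isLt; omega
    have h1 := ih i ⟨i.val + d, hj'⟩ rfl
    have h2 : g ⟨i.val + d, hj'⟩ < g j := hg (by rw [Fin.lt_def]; simp; omega)
    omega

/-- The lower-bound coloring on `Q_{n+t+1}`: blue iff the size is at most `t-1`
or at least `n+t`. -/
def lowC (n t : ℕ) : Finset (Fin (n + t + 1)) → Bool :=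
  fun S => decide (S.card ≤ t - 1 ∨ n + t ≤ S.card)

lemma no_red (n t : ℕ)
    (f : Finset (Fin n) ↪o Finset (Fin (n + t + 1)))
    (hf : ∀ x, lowC n t (f x) = false) : False := by
  have hcards : ∀ x, t ≤ (f x).card ∧ (f x).card < n + t := by
    intro x
    have := hf x
    simp only [lowC, decide_eq_false_iff_not, not_or, not_le] at this
    omega
  -- the standard chain in Q_n
  set g : Fin (n + 1) → Finset (Fin n) := fun i => univ.filter (fun x => x.val < i.val)
    with hgdef
  have hgm : StrictMono g := by
    intro i j hij
    rw [Finset.lt_iff_ssubset]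
    have hsub : g i ⊆ g j := by
      intro x hx
      simp only [hgdef, mem_filter, mem_univ, true_and] at hx ⊢
      have := Fin.lt_def.mp hij
      omega
    refine Finset.ssubset_iff_of_subset hsub |>.mpr ?_
    have hiv : i.val < n := by
      have := Fin.lt_def.mp hij
      have := j.isLt
      omega
    refine ⟨⟨i.val, hiv⟩, ?_, ?_⟩
    · simp [hgdef, Fin.lt_def.mp hij]
    · simp [hgdef]
  have hcm : StrictMono (fun i : Fin (n + 1) => (f (g i)).card) := by
    intro i j hij
    exact Finset.card_lt_card (Finset.lt_iff_ssubset.mp (f.lt_iff_lt.mpr (hgm hij)))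
  have h0 : (⟨n, by omega⟩ : Fin (n+1)).val = (⟨0, by omega⟩ : Fin (n+1)).val + n := by simp
  have h1 := sm_card hcm n ⟨0, by omega⟩ ⟨n, by omega⟩ h0
  have h2 := hcards (g ⟨0, by omega⟩)
  have h3 := hcards (g ⟨n, by omega⟩)
  omega

lemma no_blue (n t t' : ℕ) (ht' : 1 ≤ t') (ht : t' ≤ t - 1) (ht2 : 2 ≤ t)
    (F : (Fin t ⊕ Fin (t - 1) ⊕ Fin t') ↪o Finset (Fin (n + t + 1)))
    (hF : ∀ x, lowC n t (F x) = true) : False := by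
  have hblue : ∀ x, (F x).card ≤ t - 1 ∨ n + t ≤ (F x).card := by
    intro x
    have := hF x
    simpa only [lowC, decide_eq_true_eq] using this
  have hinc : ∀ p q, ¬ p ≤ q → ¬ F p ⊆ F q := by
    intro p q h hc
    exact h (F.le_iff_le.mp (Finset.le_iff_subset.mpr hc))
  have hcard_le : ∀ S : Finset (Fin (n + t + 1)), S.card ≤ n + t + 1 := by
    intro S
    have := Finset.card_le_univ S
    simpa using this
  set i0 : Fin t := ⟨0, by omega⟩
  set iS : Fin t := ⟨t - 2, by omega⟩
  set iL : Fin t := ⟨t - 1, by omega⟩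
  set j0 : Fin (t - 1) := ⟨0, by omega⟩
  set jL : Fin (t - 1) := ⟨t - 2, by omega⟩
  set k0 : Fin t' := ⟨0, by omega⟩
  -- strict monotonicity of cards along each chain
  have sm1 : StrictMono (fun i : Fin t => (F (Sum.inl i)).card) := by
    intro a b hab
    exact Finset.card_lt_card (Finset.lt_iff_ssubset.mp
      (F.lt_iff_lt.mpr (Sum.inl_lt_inl_iff.mpr hab)))
  have sm2 : StrictMono (fun j : Fin (t - 1) => (F (Sum.inr (Sum.inl j))).card) := by
    intro a b hab
    exact Finset.card_lt_card (Finset.lt_iff_ssubset.mp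
      (F.lt_iff_lt.mpr (Sum.inr_lt_inr_iff.mpr (Sum.inl_lt_inl_iff.mpr hab))))
  -- bottoms are nonempty
  have hne1 : 1 ≤ (F (Sum.inl i0)).card := by
    rcases Nat.eq_zero_or_pos (F (Sum.inl i0)).card with h | h
    · exfalso
      apply hinc (Sum.inl i0) (Sum.inr (Sum.inl j0)) Sum.not_inl_le_inr
      rw [Finset.card_eq_zero.mp h]
      exact Finset.empty_subset _
    · exact h
  have hne2 : 1 ≤ (F (Sum.inr (Sum.inl j0))).card := by
    rcases Nat.eq_zero_or_pos (F (Sum.inr (Sum.inl j0))).card with h | h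
    · exfalso
      apply hinc (Sum.inr (Sum.inl j0)) (Sum.inl i0) Sum.not_inr_le_inl
      rw [Finset.card_eq_zero.mp h]
      exact Finset.empty_subset _
    · exact h
  -- the top of the first chain
  have htop1 : t ≤ (F (Sum.inl iL)).card := by
    have := sm_card sm1 (t - 1) i0 iL (by simp [i0, iL])
    omega
  have htopblue := hblue (Sum.inl iL)
  have htop_card : (F (Sum.inl iL)).card = n + t := by
    have hle := hcard_le (F (Sum.inl iL))
    rcases htopblue with h | h
    · omega
    · rcases Nat.lt_or_ge (F (Sum.inl iL)).card (n + t + 1) with h' | h'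
      · omega
      · exfalso
        have huniv : F (Sum.inl iL) = univ := Finset.eq_univ_of_card _ (by
          have := hcard_le (F (Sum.inl iL)); simp; omega)
        apply hinc (Sum.inr (Sum.inl j0)) (Sum.inl iL) Sum.not_inr_le_inl
        rw [huniv]
        exact Finset.subset_univ _
  obtain ⟨x1, hx1⟩ : ∃ x1, (F (Sum.inl iL))ᶜ = {x1} := by
    apply Finset.card_eq_one.mp
    rw [Finset.card_compl, htop_card]
    simp
  have hmem1 : ∀ y, y ∉ F (Sum.inl iL) ↔ y = x1 := by
    intro y
    rw [← Finset.mem_compl, hx1, Finset.mem_singleton]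
  -- the bottom of the first chain is a singleton {a}
  have hsec : (F (Sum.inl iS)).card ≤ t - 1 := by
    have hlt : (F (Sum.inl iS)).card < (F (Sum.inl iL)).card :=
      sm1 (show iS < iL by rw [Fin.lt_def]; simp [iS, iL]; omega)
    rcases hblue (Sum.inl iS) with h | h
    · exact h
    · omega
  have hbot1 : (F (Sum.inl i0)).card = 1 := by
    have := sm_card sm1 (t - 2) i0 iS (by simp [i0, iS])
    omega
  obtain ⟨a, ha⟩ := Finset.card_eq_one.mp hbot1
  -- elements of the other two chains avoid a and contain x1
  have havoid : ∀ p, (¬ Sum.inl i0 ≤ p) → (¬ p ≤ Sum.inl iL) → a ∉ F p ∧ x1 ∈ F p := by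
    intro p hp1 hp2
    constructor
    · intro hmem
      apply hinc (Sum.inl i0) p hp1
      rw [ha]
      exact Finset.singleton_subset_iff.mpr hmem
    · by_contra hmem
      apply hinc p (Sum.inl iL) hp2
      intro y hy
      by_contra hyn
      have hyx : y = x1 := (hmem1 y).mp hyn
      subst hyx
      exact hmem hy
  have hav2 : ∀ j : Fin (t - 1), a ∉ F (Sum.inr (Sum.inl j)) ∧ x1 ∈ F (Sum.inr (Sum.inl j)) :=
    fun j => havoid _ Sum.not_inl_le_inr Sum.not_inr_le_inl
  have hav3 : ∀ j : Fin t', a ∉ F (Sum.inr (Sum.inr j)) ∧ x1 ∈ F (Sum.inr (Sum.inr j)) :=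
    fun j => havoid _ Sum.not_inl_le_inr Sum.not_inr_le_inl
  -- all elements of the second chain are small
  have hsmall2 : ∀ j : Fin (t - 1), (F (Sum.inr (Sum.inl j))).card ≤ t - 1 := by
    intro j
    by_contra hbig
    push_neg at hbig
    have hge : n + t ≤ (F (Sum.inr (Sum.inl j))).card := by
      rcases hblue (Sum.inr (Sum.inl j)) with h | h
      · omega
      · exact h
    have hle := hcard_le (F (Sum.inr (Sum.inl j)))
    rcases Nat.lt_or_ge (F (Sum.inr (Sum.inl j))).card (n + t + 1) with h' | h'
    · -- card = n + t : complement is a singleton, which must be {a}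
      obtain ⟨w, hw⟩ : ∃ w, (F (Sum.inr (Sum.inl j)))ᶜ = {w} := by
        apply Finset.card_eq_one.mp
        rw [Finset.card_compl]
        simp
        omega
      have hwa : w = a := by
        have h1 : a ∈ (F (Sum.inr (Sum.inl j)))ᶜ := Finset.mem_compl.mpr (hav2 j).1
        rw [hw, Finset.mem_singleton] at h1
        exact h1.symm
      subst hwa
      apply hinc (Sum.inr (Sum.inr k0)) (Sum.inr (Sum.inl j)) (by
        intro hcon
        rw [Sum.inr_le_inr_iff] at hcon
        exact Sum.not_inr_le_inl hcon)
      intro y hy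
      by_contra hyn
      have hyw : y ∈ (F (Sum.inr (Sum.inl j)))ᶜ := Finset.mem_compl.mpr hyn
      rw [hw, Finset.mem_singleton] at hyw
      subst hyw
      exact (hav3 k0).1 hy
    · exfalso
      have huniv : F (Sum.inr (Sum.inl j)) = univ := Finset.eq_univ_of_card _ (by simp; omega)
      apply hinc (Sum.inr (Sum.inr k0)) (Sum.inr (Sum.inl j)) (by
        intro hcon
        rw [Sum.inr_le_inr_iff] at hcon
        exact Sum.not_inr_le_inl hcon)
      rw [huniv]
      exact Finset.subset_univ _
  -- bottom of the second chain is {x1}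
  have hbot2 : (F (Sum.inr (Sum.inl j0))).card = 1 := by
    have := sm_card sm2 (t - 2) j0 jL (by simp [j0, jL])
    have := hsmall2 jL
    omega
  obtain ⟨b, hb⟩ := Finset.card_eq_one.mp hbot2
  have hbx1 : b = x1 := by
    have := (hav2 j0).2
    rw [hb, Finset.mem_singleton] at this
    exact this.symm
  subst hbx1
  apply hinc (Sum.inr (Sum.inl j0)) (Sum.inr (Sum.inr k0)) (by
    intro hcon
    rw [Sum.inr_le_inr_iff] at hcon
    exact Sum.not_inl_le_inr hcon)
  rw [hb]
  exact Finset.singleton_subset_iff.mpr (hav3 k0).2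

end Lower

/-- The Ramsey property is upward closed in the dimension. -/
lemma up_closed {P₁ P₂ : Type*} [PartialOrder P₁] [PartialOrder P₂] {a b : ℕ} (hab : a ≤ b)
    (h : ∀ c : Finset (Fin a) → Bool,
      (∃ f : P₁ ↪o Finset (Fin a), ∀ x, c (f x) = true) ∨
      (∃ f : P₂ ↪o Finset (Fin a), ∀ x, c (f x) = false)) :
    ∀ c : Finset (Fin b) → Bool,
      (∃ f : P₁ ↪o Finset (Fin b), ∀ x, c (f x) = true) ∨
      (∃ f : P₂ ↪o Finset (Fin b), ∀ x, c (f x) = false) := by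
  intro c
  set E : Finset (Fin a) ↪o Finset (Fin b) :=
    Finset.mapEmbedding (Fin.castLEEmb hab) with hE
  rcases h (fun S => c (E S)) with ⟨f, hf⟩ | ⟨f, hf⟩
  · exact Or.inl ⟨f.trans E, hf⟩
  · exact Or.inr ⟨f.trans E, hf⟩

end ThreeChainAux


/-- `R(C_{t,t-1,t'}, Q_n) = n + t + 2`: the chain composition of three parallel chains
with `t`, `t-1` and `t'` elements (where `t - 1 ≥ t' ≥ 1`) versus the Boolean lattice. -/
theorem three_chain_composition_vs_cube_ramsey (n t t' : ℕ) (hn : 1 ≤ n)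
    (ht' : 1 ≤ t') (ht : t' ≤ t - 1) :
    posetRamsey (Fin t ⊕ Fin (t - 1) ⊕ Fin t') (Finset (Fin n)) = n + t + 2 := by
  have ht2 : 2 ≤ t := by omega
  unfold posetRamsey
  have hmem : (n + t + 2) ∈ {N : ℕ | ∀ c : Finset (Fin N) → Bool,
      (∃ f : (Fin t ⊕ Fin (t - 1) ⊕ Fin t') ↪o Finset (Fin N), ∀ x, c (f x) = true) ∨
      (∃ f : Finset (Fin n) ↪o Finset (Fin N), ∀ x, c (f x) = false)} := by
    simp only [Set.mem_setOf_eq]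
    have hEq : n + t + 2 = n + (t - 1) + 3 := by omega
    rw [hEq]
    intro c
    exact ThreeChainAux.upper_bound t (t - 1) t' (by omega) (by omega) (by omega) c
  apply le_antisymm
  · exact Nat.sInf_le hmem
  · apply le_csInf ⟨_, hmem⟩
    intro N hN
    by_contra hcon
    push_neg at hcon
    have hN' : N ≤ n + t + 1 := by omega
    simp only [Set.mem_setOf_eq] at hN
    have h2 := ThreeChainAux.up_closed hN' hN
    rcases h2 (ThreeChainAux.lowC n t) with ⟨F, hF⟩ | ⟨f, hf⟩
    · exact ThreeChainAux.no_blue n t t' ht' ht ht2 F hF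
    · exact ThreeChainAux.no_red n t f hf
end

section
/- Let s, t ≥ 1 be fixed natural numbers. For every real ε > 0 there exists n₀ such that for all n ≥ n₀, the poset Ramsey number of the (s,t)-subdivided diamond versus the Boolean lattice satisfies R(SD_{s,t}, Q_n) ≤ n + (2 + ε)·n/log₂ n. -/
/-- The `(s,t)`-subdivided diamond: two parallel chains with `s` and `t` elements,
together with a common minimum and a common maximum. -/
abbrev SubdividedDiamond (s t : ℕ) : Type := WithBot (WithTop (Fin s ⊕ Fin t))

namespace SDR

variable {n m : ℕ}

/-! ### Coordinates -/

def eX (n m : ℕ) : Fin n ↪ Fin (n+m) := ⟨Fin.castAdd m, Fin.castAdd_injective n m⟩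
def eY (n m : ℕ) : Fin m ↪ Fin (n+m) :=
  ⟨Fin.natAdd n, fun a b hab => by simpa [Fin.ext_iff] using hab⟩

/-- the joint set `S ⊔ P ⊆ [n+m]` -/
def J (S : Finset (Fin n)) (P : Finset (Fin m)) : Finset (Fin (n+m)) :=
  S.map (eX n m) ∪ P.map (eY n m)

lemma mem_J_X {S : Finset (Fin n)} {P : Finset (Fin m)} (x : Fin n) :
    (eX n m) x ∈ J S P ↔ x ∈ S := by
  simp only [J, Finset.mem_union, Finset.mem_map]
  constructor
  · rintro (⟨a, ha, h⟩ | ⟨a, ha, h⟩)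
    · rwa [← (eX n m).injective h]
    · exfalso
      have h1 : ((eX n m x) : ℕ) < n := (x.isLt : (x:ℕ) < n)
      have h2 : n ≤ ((eY n m a) : ℕ) := Nat.le_add_right n a
      rw [h] at h2; omega
  · intro h; exact Or.inl ⟨x, h, rfl⟩

lemma mem_J_Y {S : Finset (Fin n)} {P : Finset (Fin m)} (y : Fin m) :
    (eY n m) y ∈ J S P ↔ y ∈ P := by
  simp only [J, Finset.mem_union, Finset.mem_map]
  constructor
  · rintro (⟨a, ha, h⟩ | ⟨a, ha, h⟩)
    · exfalso
      have h1 : ((eX n m a) : ℕ) < n := (a.isLt : (a:ℕ) < n)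
      have h2 : n ≤ ((eY n m y) : ℕ) := Nat.le_add_right n y
      rw [h] at h1; omega
    · rwa [← (eY n m).injective h]
  · intro h; exact Or.inr ⟨y, h, rfl⟩

lemma J_subset_J {S S' : Finset (Fin n)} {P P' : Finset (Fin m)} :
    J S P ⊆ J S' P' ↔ S ⊆ S' ∧ P ⊆ P' := by
  constructor
  · intro h
    constructor
    · intro x hx; exact (mem_J_X x).1 (h ((mem_J_X x).2 hx))
    · intro y hy; exact (mem_J_Y y).1 (h ((mem_J_Y y).2 hy))
  · rintro ⟨h1, h2⟩ z hz
    rcases Finset.mem_union.1 hz with hz | hz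
    · rcases Finset.mem_map.1 hz with ⟨a, ha, rfl⟩
      exact (mem_J_X a).2 (h1 ha)
    · rcases Finset.mem_map.1 hz with ⟨a, ha, rfl⟩
      exact (mem_J_Y a).2 (h2 ha)

/-! ### Prefix sets of a permutation (maximal chains of the Y-cube) -/

/-- prefix set of a permutation: the first `v` elements -/
def Pre (σ : Equiv.Perm (Fin m)) (v : ℕ) : Finset (Fin m) :=
  Finset.univ.filter (fun j => ((σ.symm j : Fin m) : ℕ) < v)

lemma mem_Pre {σ : Equiv.Perm (Fin m)} {v : ℕ} {j : Fin m} :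
    j ∈ Pre σ v ↔ ((σ.symm j : Fin m) : ℕ) < v := by
  simp [Pre]

lemma Pre_zero (σ : Equiv.Perm (Fin m)) : Pre σ 0 = ∅ := by
  ext j; simp [mem_Pre]

lemma Pre_mono (σ : Equiv.Perm (Fin m)) : Monotone (Pre σ) := by
  intro v v' hv j hj
  rw [mem_Pre] at *
  omega

lemma Pre_univ (σ : Equiv.Perm (Fin m)) {v : ℕ} (hv : m ≤ v) : Pre σ v = Finset.univ := by
  ext j; simp only [mem_Pre, Finset.mem_univ, iff_true]
  exact lt_of_lt_of_le (σ.symm j).isLt hv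

lemma card_Pre (σ : Equiv.Perm (Fin m)) (v : ℕ) : (Pre σ v).card = min v m := by
  classical
  have h1 : Pre σ v = (Finset.univ.filter (fun i : Fin m => (i : ℕ) < v)).image σ := by
    ext j
    simp only [mem_Pre, Finset.mem_image, Finset.mem_filter, Finset.mem_univ, true_and]
    constructor
    · intro h; exact ⟨σ.symm j, h, by simp⟩
    · rintro ⟨i, hi, rfl⟩; simpa using hi
  rw [h1, Finset.card_image_of_injective _ σ.injective]
  have h2 : (Finset.univ.filter (fun i : Fin m => (i : ℕ) < v)) =
      (Finset.range (min v m)).attachFin (by intro a ha; simp at ha; omega) := by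
    ext i
    simp only [Finset.mem_filter, Finset.mem_univ, true_and, Finset.mem_attachFin,
      Finset.mem_range]
    omega
  rw [h2, Finset.card_attachFin, Finset.card_range]

lemma Pre_subset_Pre_card {σ σ' : Equiv.Perm (Fin m)} {v v' : ℕ}
    (hv : v ≤ m) (hv' : v' ≤ m) (h : Pre σ v ⊆ Pre σ' v') : v ≤ v' := by
  have := Finset.card_le_card h
  rw [card_Pre, card_Pre] at this
  omega

/-- a permutation is determined by its prefix sets -/
lemma perm_eq_of_pre_eq {σ σ' : Equiv.Perm (Fin m)}
    (h : ∀ v ≤ m, Pre σ v = Pre σ' v) : σ = σ' := by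
  have hsymm : ∀ j, σ.symm j = σ'.symm j := by
    intro j
    set a : Fin m := σ.symm j with ha
    have h1 : j ∈ Pre σ ((a:ℕ)+1) := by rw [mem_Pre, ← ha]; omega
    have h2 : j ∉ Pre σ (a:ℕ) := by rw [mem_Pre, ← ha]; omega
    rw [h _ (by omega)] at h1
    rw [h _ (by omega)] at h2
    rw [mem_Pre] at h1 h2
    have : ((σ'.symm j : Fin m) : ℕ) = a := by omega
    exact (Fin.ext this).symm
  have hs : σ.symm = σ'.symm := Equiv.ext hsymm
  have := congrArg Equiv.symm hs
  simpa using this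

/-! ### The greedy embedding -/

section Eta
variable (c : Finset (Fin (n+m)) → Bool) (σ : Equiv.Perm (Fin m))

/-- greedy dodge level -/
def eta : Finset (Fin n) → ℕ := fun S =>
  Nat.find (p := fun v => (S.ssubsets.attach.sup (fun T => eta T.1) ≤ v) ∧
      (m < v ∨ c (J S (Pre σ v)) = false))
    ⟨max (S.ssubsets.attach.sup (fun T => eta T.1)) (m+1), le_max_left _ _, Or.inl (by omega)⟩
termination_by S => S.card
decreasing_by
  all_goals exact Finset.card_lt_card (Finset.mem_ssubsets.1 T.2)

def etaHat (S : Finset (Fin n)) : ℕ := S.ssubsets.attach.sup (fun T => eta c σ T.1)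

lemma eta_least (S : Finset (Fin n)) :
    (etaHat c σ S ≤ eta c σ S ∧ (m < eta c σ S ∨ c (J S (Pre σ (eta c σ S))) = false)) ∧
    (∀ v < eta c σ S, ¬(etaHat c σ S ≤ v ∧ (m < v ∨ c (J S (Pre σ v)) = false))) := by
  have h := Nat.find_spec (p := fun v => (S.ssubsets.attach.sup (fun T => eta c σ T.1) ≤ v) ∧
      (m < v ∨ c (J S (Pre σ v)) = false))
    ⟨max (S.ssubsets.attach.sup (fun T => eta c σ T.1)) (m+1), le_max_left _ _, Or.inl (by omega)⟩
  have h2 := fun v hv => Nat.find_min (p := fun v => (S.ssubsets.attach.sup (fun T => eta c σ T.1) ≤ v) ∧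
      (m < v ∨ c (J S (Pre σ v)) = false))
    ⟨max (S.ssubsets.attach.sup (fun T => eta c σ T.1)) (m+1), le_max_left _ _, Or.inl (by omega)⟩
    (hv : v < _)
  simp only [etaHat]
  rw [eta]
  exact ⟨h, h2⟩

lemma etaHat_le_eta (S : Finset (Fin n)) : etaHat c σ S ≤ eta c σ S :=
  (eta_least c σ S).1.1

lemma eta_spec (S : Finset (Fin n)) :
    m < eta c σ S ∨ c (J S (Pre σ (eta c σ S))) = false :=
  (eta_least c σ S).1.2

lemma eta_blue {S : Finset (Fin n)} {v : ℕ} (h1 : etaHat c σ S ≤ v) (h2 : v < eta c σ S) :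
    v ≤ m ∧ c (J S (Pre σ v)) = true := by
  have := (eta_least c σ S).2 v h2
  push_neg at this
  obtain ⟨hv, hc⟩ := this h1
  exact ⟨by omega, by simpa using hc⟩

lemma eta_le_of_ssubset {T S : Finset (Fin n)} (h : T ⊂ S) : eta c σ T ≤ etaHat c σ S := by
  have hm : (⟨T, Finset.mem_ssubsets.2 h⟩ : {x // x ∈ S.ssubsets}) ∈ S.ssubsets.attach :=
    Finset.mem_attach _ _
  exact Finset.le_sup (f := fun T => eta c σ T.1) hm

lemma eta_mono {T S : Finset (Fin n)} (h : T ⊆ S) : eta c σ T ≤ eta c σ S := by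
  rcases eq_or_ne T S with rfl | hne
  · exact le_refl _
  · exact le_trans (eta_le_of_ssubset c σ ((Finset.ssubset_iff_subset_ne).2 ⟨h, hne⟩))
      (etaHat_le_eta c σ S)

lemma etaHat_lt_cases {S : Finset (Fin n)} {v : ℕ} (h : v < etaHat c σ S) :
    ∃ T, T ⊂ S ∧ v < eta c σ T := by
  rw [etaHat, Finset.lt_sup_iff] at h
  obtain ⟨T, _, h2⟩ := h
  exact ⟨T.1, Finset.mem_ssubsets.1 T.2, h2⟩

/-- descent: find a subset blocked at level v -/
lemma eta_descend : ∀ (S : Finset (Fin n)) (v : ℕ), v < eta c σ S →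
    ∃ S', S' ⊆ S ∧ etaHat c σ S' ≤ v ∧ v < eta c σ S' := by
  classical
  intro S
  induction S using Finset.strongInduction with
  | _ S ih =>
    intro v hv
    by_cases h : etaHat c σ S ≤ v
    · exact ⟨S, Finset.Subset.refl S, h, hv⟩
    · push_neg at h
      obtain ⟨T, hT', hvT⟩ := etaHat_lt_cases c σ h
      obtain ⟨S', hS1, hS2, hS3⟩ := ih T hT' v hvT
      exact ⟨S', hS1.trans hT'.subset, hS2, hS3⟩

/-- certificate extraction -/
lemma cert_exists {Sstar : Finset (Fin n)} (hS : m < eta c σ Sstar) :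
    ∃ T : ℕ → Finset (Fin n), Monotone T ∧
      ∀ v ≤ m, c (J (T v) (Pre σ v)) = true := by
  classical
  have key : ∀ k ≤ m, ∃ T : ℕ → Finset (Fin n), Monotone T ∧
      (∀ v, m - k ≤ v → v ≤ m → (etaHat c σ (T v) ≤ v ∧ v < eta c σ (T v))) ∧
      (∀ v ≤ m - k, T v = T (m - k)) := by
    intro k hk
    induction k with
    | zero =>
      obtain ⟨S0, _, h2, h3⟩ := eta_descend c σ Sstar m hS
      refine ⟨fun _ => S0, monotone_const, ?_, fun _ _ => rfl⟩
      intro v hv1 hv2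
      have : v = m := by omega
      subst this
      exact ⟨h2, h3⟩
    | succ k ih =>
      obtain ⟨T, hmono, hgood, hconst⟩ := ih (by omega)
      set v₀ := m - k with hv₀
      set v₁ := m - (k+1) with hv₁
      have hv01 : v₁ + 1 = v₀ := by omega
      have hA := hgood v₀ (le_refl _) (by omega)
      have hnew : ∃ A', A' ⊆ T v₀ ∧ etaHat c σ A' ≤ v₁ ∧ v₁ < eta c σ A' := by
        by_cases h : etaHat c σ (T v₀) ≤ v₁
        · exact ⟨T v₀, Finset.Subset.refl _, h, by omega⟩
        · push_neg at h
          obtain ⟨Tsub, hsub, hlt⟩ := etaHat_lt_cases c σ h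
          obtain ⟨S', h1, h2, h3⟩ := eta_descend c σ Tsub v₁ hlt
          exact ⟨S', h1.trans hsub.subset, h2, h3⟩
      obtain ⟨A', hA'sub, hA'1, hA'2⟩ := hnew
      refine ⟨fun v => if v ≤ v₁ then A' else T v, ?_, ?_, ?_⟩
      · intro a b hab
        by_cases ha : a ≤ v₁ <;> by_cases hb : b ≤ v₁ <;> simp [ha, hb]
        · exact hA'sub.trans (hmono (by omega : v₀ ≤ b))
        · omega
        · exact hmono hab
      · intro v hv1 hv2
        by_cases h : v ≤ v₁
        · have : v = v₁ := by omega
          subst this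
          simp only [if_pos (le_refl v₁)]
          exact ⟨hA'1, hA'2⟩
        · simp only [if_neg h]
          exact hgood v (by omega) hv2
      · intro v hv
        simp [hv, le_refl]
  obtain ⟨T, hmono, hgood, _⟩ := key m (le_refl _)
  refine ⟨T, hmono, ?_⟩
  intro v hv
  exact (eta_blue c σ (hgood v (by omega) hv).1 (hgood v (by omega) hv).2).2

end Eta

/-! ### Sustained divergence and absorption -/

/-- sustained divergence of two chains -/
def Good (k₀ : ℕ) (σ σ' : Equiv.Perm (Fin m)) : Prop :=
  ∃ u v : ℕ, ∃ x y : Fin m, u + k₀ ≤ m ∧ v + k₀ ≤ m ∧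
    x ∈ Pre σ u ∧ x ∉ Pre σ' (v + k₀ - 1) ∧ y ∈ Pre σ' v ∧ y ∉ Pre σ (u + k₀ - 1)

lemma absorb_of_not_good {k₀ : ℕ} (hk : 1 ≤ k₀) {σ σ' : Equiv.Perm (Fin m)}
    (h : ¬ Good k₀ σ σ') : ∀ tt, Pre σ' tt ⊆ Pre σ (tt + 2 * k₀) := by
  intro tt
  by_cases hr : m ≤ tt + 2 * k₀
  · rw [Pre_univ σ hr]; exact Finset.subset_univ _
  · push_neg at hr
    set u := tt + k₀ with hu
    set v := tt with hv
    have hum : u + k₀ ≤ m := by omega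
    have hvm : v + k₀ ≤ m := by omega
    have hdisj : Pre σ u ⊆ Pre σ' (v + k₀ - 1) ∨ Pre σ' v ⊆ Pre σ (u + k₀ - 1) := by
      by_contra hcon
      push_neg at hcon
      obtain ⟨h1, h2⟩ := hcon
      rw [Finset.not_subset] at h1 h2
      obtain ⟨x, hx1, hx2⟩ := h1
      obtain ⟨y, hy1, hy2⟩ := h2
      exact h ⟨u, v, x, y, hum, hvm, hx1, hx2, hy1, hy2⟩
    rcases hdisj with h1 | h2
    · exfalso
      have := Finset.card_le_card h1
      rw [card_Pre, card_Pre] at this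
      omega
    · refine h2.trans (Pre_mono σ (by omega))

lemma fiber_card_le {w : ℕ} (σs : Equiv.Perm (Fin m)) (F : Finset (Equiv.Perm (Fin m)))
    (habs : ∀ σ ∈ F, (∀ tt, Pre σ tt ⊆ Pre σs (tt + w)) ∧
      (∀ tt, Pre σs tt ⊆ Pre σ (tt + w))) :
    F.card ≤ (2 ^ (2 * w)) ^ (m + 1) := by
  classical
  have hsubwin : ∀ σ ∈ F, ∀ v : ℕ, Pre σs (v - w) ⊆ Pre σ v := by
    intro σ hσ v
    by_cases hvw : w ≤ v
    · have := (habs σ hσ).2 (v - w)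
      have heq : v - w + w = v := by omega
      rwa [heq] at this
    · have : v - w = 0 := by omega
      rw [this, Pre_zero]
      exact Finset.empty_subset _
  have hmaps : ∀ σ ∈ F, (fun v : Fin (m+1) => Pre σ (v : ℕ) \ Pre σs ((v : ℕ) - w)) ∈
      Fintype.piFinset (fun v : Fin (m+1) =>
        (Pre σs ((v : ℕ) + w) \ Pre σs ((v : ℕ) - w)).powerset) := by
    intro σ hσ
    rw [Fintype.mem_piFinset]
    intro v
    rw [Finset.mem_powerset]
    intro a ha
    rw [Finset.mem_sdiff] at ha ⊢
    exact ⟨(habs σ hσ).1 _ ha.1, ha.2⟩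
  have hinj : Set.InjOn (fun σ => (fun v : Fin (m+1) => Pre σ (v : ℕ) \ Pre σs ((v : ℕ) - w)))
      F := by
    intro σa ha σb hb heq
    apply perm_eq_of_pre_eq
    intro v hvm
    have h1 : Pre σa v \ Pre σs (v - w) = Pre σb v \ Pre σs (v - w) := by
      have := congrFun heq (⟨v, by omega⟩ : Fin (m+1))
      simpa using this
    have recover : ∀ σ, σ ∈ F → Pre σ v = Pre σs (v - w) ∪ (Pre σ v \ Pre σs (v - w)) := by
      intro σ hσ
      rw [Finset.union_sdiff_of_subset (hsubwin σ hσ v)]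
    rw [recover σa ha, recover σb hb, h1]
  calc F.card ≤ (Fintype.piFinset (fun v : Fin (m+1) =>
        (Pre σs ((v : ℕ) + w) \ Pre σs ((v : ℕ) - w)).powerset)).card :=
        Finset.card_le_card_of_injOn _ hmaps hinj
    _ = ∏ v : Fin (m+1), 2 ^ (Pre σs ((v : ℕ) + w) \ Pre σs ((v : ℕ) - w)).card := by
        rw [Fintype.card_piFinset]
        congr 1
        ext v
        rw [Finset.card_powerset]
    _ ≤ ∏ _v : Fin (m+1), 2 ^ (2 * w) := by
        apply Finset.prod_le_prod
        · intro i _; positivity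
        · intro v _
          apply Nat.pow_le_pow_right (by omega)
          have hsub : Pre σs ((v:ℕ) - w) ⊆ Pre σs ((v:ℕ) + w) := Pre_mono σs (by omega)
          rw [Finset.card_sdiff_of_subset hsub, card_Pre, card_Pre]
          omega
    _ = (2 ^ (2*w)) ^ (m+1) := by
        rw [Finset.prod_const]
        congr 1
        simp

/-! ### Building the blue subdivided diamond -/

lemma exists_sd_embedding (s t : ℕ) (hs : 1 ≤ s) (ht : 1 ≤ t)
    (c : Finset (Fin (n+m)) → Bool) (σ σ' : Equiv.Perm (Fin m))
    (TC TC' : ℕ → Finset (Fin n))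
    (hTmono : Monotone TC) (hTmono' : Monotone TC')
    (hblue : ∀ v ≤ m, c (J (TC v) (Pre σ v)) = true)
    (hblue' : ∀ v ≤ m, c (J (TC' v) (Pre σ' v)) = true)
    (h0 : TC 0 = TC' 0) (hm : TC m = TC' m)
    (u v : ℕ) (x y : Fin m)
    (hu : u + max s t ≤ m) (hv : v + max s t ≤ m)
    (hx1 : x ∈ Pre σ u) (hx2 : x ∉ Pre σ' (v + max s t - 1))
    (hy1 : y ∈ Pre σ' v) (hy2 : y ∉ Pre σ (u + max s t - 1)) :
    ∃ f : (WithBot (WithTop (Fin s ⊕ Fin t))) ↪o Finset (Fin (n+m)),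
      ∀ z, c (f z) = true := by
  classical
  set k₀ := max s t with hk₀
  have hk₀s : s ≤ k₀ := le_max_left _ _
  have hk₀t : t ≤ k₀ := le_max_right _ _
  have hk₀1 : 1 ≤ k₀ := le_trans hs hk₀s
  set bot : Finset (Fin (n+m)) := J (TC 0) (Pre σ 0) with hbotdef
  set top : Finset (Fin (n+m)) := J (TC' m) (Pre σ' m) with htopdef
  set A : Fin s → Finset (Fin (n+m)) := fun i => J (TC (u + i)) (Pre σ (u + i)) with hAdef
  set B : Fin t → Finset (Fin (n+m)) := fun j => J (TC' (v + j)) (Pre σ' (v + j)) with hBdef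
  have hui : ∀ i : Fin s, u + (i : ℕ) ≤ m ∧ u + (i:ℕ) ≤ u + k₀ - 1 := by
    intro i; have := i.isLt; omega
  have hvj : ∀ j : Fin t, v + (j : ℕ) ≤ m ∧ v + (j:ℕ) ≤ v + k₀ - 1 := by
    intro j; have := j.isLt; omega
  have hm1 : 1 ≤ m := by omega
  have f1 : ∀ i, bot ⊆ A i := by
    intro i
    rw [hbotdef, hAdef, J_subset_J]
    exact ⟨hTmono (by omega), Pre_mono σ (by omega)⟩
  have f2 : ∀ j, bot ⊆ B j := by
    intro j
    rw [hbotdef, hBdef, J_subset_J, h0]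
    refine ⟨hTmono' (by omega), ?_⟩
    rw [Pre_zero]
    exact Finset.empty_subset _
  have f3 : bot ⊆ top := by
    rw [hbotdef, htopdef, J_subset_J, h0, Pre_zero]
    exact ⟨hTmono' (by omega), Finset.empty_subset _⟩
  have f4 : ∀ i i' : Fin s, (A i ⊆ A i' ↔ i ≤ i') := by
    intro i i'
    rw [hAdef]; simp only []
    rw [J_subset_J]
    constructor
    · rintro ⟨-, h2⟩
      have := Pre_subset_Pre_card (σ := σ) (σ' := σ) (hui i).1 (hui i').1 h2
      rw [Fin.le_def]; omega
    · intro h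
      rw [Fin.le_def] at h
      exact ⟨hTmono (by omega), Pre_mono σ (by omega)⟩
  have f5 : ∀ j j' : Fin t, (B j ⊆ B j' ↔ j ≤ j') := by
    intro j j'
    rw [hBdef]; simp only []
    rw [J_subset_J]
    constructor
    · rintro ⟨-, h2⟩
      have := Pre_subset_Pre_card (σ := σ') (σ' := σ') (hvj j).1 (hvj j').1 h2
      rw [Fin.le_def]; omega
    · intro h
      rw [Fin.le_def] at h
      exact ⟨hTmono' (by omega), Pre_mono σ' (by omega)⟩
  have f6 : ∀ i j, ¬ (A i ⊆ B j) := by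
    intro i j h
    rw [hAdef, hBdef, J_subset_J] at h
    have hx : x ∈ Pre σ (u + (i:ℕ)) := Pre_mono σ (by omega) hx1
    have := h.2 hx
    exact hx2 (Pre_mono σ' (by omega : v + (j:ℕ) ≤ v + k₀ - 1) this)
  have f7 : ∀ i j, ¬ (B j ⊆ A i) := by
    intro i j h
    rw [hAdef, hBdef, J_subset_J] at h
    have hy : y ∈ Pre σ' (v + (j:ℕ)) := Pre_mono σ' (by omega) hy1
    have := h.2 hy
    exact hy2 (Pre_mono σ (by omega : u + (i:ℕ) ≤ u + k₀ - 1) this)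
  have f8 : ∀ i, A i ⊆ top := by
    intro i
    rw [hAdef, htopdef, J_subset_J, ← hm]
    refine ⟨hTmono (by omega), ?_⟩
    rw [Pre_univ σ' (le_refl m)]
    exact Finset.subset_univ _
  have f9 : ∀ j, B j ⊆ top := by
    intro j
    rw [hBdef, htopdef, J_subset_J]
    refine ⟨hTmono' (by omega), Pre_mono σ' (by omega)⟩
  have f10 : ∀ i, ¬ (top ⊆ A i) := by
    intro i h
    rw [hAdef, htopdef, J_subset_J] at h
    have hy' : y ∈ Pre σ' m := by rw [Pre_univ σ' (le_refl m)]; exact Finset.mem_univ _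
    exact hy2 (Pre_mono σ (by omega : u + (i:ℕ) ≤ u + k₀ - 1) (h.2 hy'))
  have f11 : ∀ j, ¬ (top ⊆ B j) := by
    intro j h
    rw [hBdef, htopdef, J_subset_J] at h
    have hx' : x ∈ Pre σ' m := by rw [Pre_univ σ' (le_refl m)]; exact Finset.mem_univ _
    exact hx2 (Pre_mono σ' (by omega : v + (j:ℕ) ≤ v + k₀ - 1) (h.2 hx'))
  have f12 : ¬ (top ⊆ bot) := by
    intro h
    rw [hbotdef, htopdef, J_subset_J, Pre_zero] at h
    have hx' : x ∈ Pre σ' m := by rw [Pre_univ σ' (le_refl m)]; exact Finset.mem_univ _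
    simpa using h.2 hx'
  have f13 : ∀ i, ¬ (A i ⊆ bot) := by
    intro i h
    rw [hbotdef, hAdef, J_subset_J, Pre_zero] at h
    have hx : x ∈ Pre σ (u + (i:ℕ)) := Pre_mono σ (by omega) hx1
    simpa using h.2 hx
  have f14 : ∀ j, ¬ (B j ⊆ bot) := by
    intro j h
    rw [hbotdef, hBdef, J_subset_J, Pre_zero] at h
    have hy : y ∈ Pre σ' (v + (j:ℕ)) := Pre_mono σ' (by omega) hy1
    simpa using h.2 hy
  set F : WithBot (WithTop (Fin s ⊕ Fin t)) → Finset (Fin (n+m)) :=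
    WithBot.recBotCoe bot (WithTop.recTopCoe top (Sum.elim A B)) with hFdef
  have hFbot : F ⊥ = bot := rfl
  have hFtop : F ((⊤ : WithTop (Fin s ⊕ Fin t)) : WithBot (WithTop (Fin s ⊕ Fin t))) = top := rfl
  have hFA : ∀ i : Fin s, F (((Sum.inl i : Fin s ⊕ Fin t) : WithTop (Fin s ⊕ Fin t)) :
      WithBot (WithTop (Fin s ⊕ Fin t))) = A i := fun i => rfl
  have hFB : ∀ j : Fin t, F (((Sum.inr j : Fin s ⊕ Fin t) : WithTop (Fin s ⊕ Fin t)) :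
      WithBot (WithTop (Fin s ⊕ Fin t))) = B j := fun j => rfl
  have hiff : ∀ a b : WithBot (WithTop (Fin s ⊕ Fin t)), F a ≤ F b ↔ a ≤ b := by
    intro a b
    induction a using WithBot.recBotCoe with
    | bot =>
      simp only [hFbot, bot_le, iff_true]
      induction b using WithBot.recBotCoe with
      | bot => exact le_refl _
      | coe b =>
        induction b using WithTop.recTopCoe with
        | top => exact f3
        | coe b => cases b with
          | inl i => exact f1 i
          | inr j => exact f2 j
    | coe a =>
      induction b using WithBot.recBotCoe with
      | bot =>
        simp only [hFbot, le_bot_iff]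
        rw [iff_false_intro (by simp : ¬ ((a : WithBot (WithTop (Fin s ⊕ Fin t))) = ⊥))]
        simp only [iff_false]
        induction a using WithTop.recTopCoe with
        | top => exact f12
        | coe a => cases a with
          | inl i => exact f13 i
          | inr j => exact f14 j
      | coe b =>
        rw [WithBot.coe_le_coe]
        induction a using WithTop.recTopCoe with
        | top =>
          induction b using WithTop.recTopCoe with
          | top => simp
          | coe b =>
            rw [iff_false_intro (by simp : ¬ ((⊤ : WithTop (Fin s ⊕ Fin t)) ≤ (b : WithTop _)))]
            simp only [iff_false]
            cases b with
            | inl i => exact f10 i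
            | inr j => exact f11 j
        | coe a =>
          induction b using WithTop.recTopCoe with
          | top =>
            simp only [le_top, iff_true]
            cases a with
            | inl i => exact f8 i
            | inr j => exact f9 j
          | coe b =>
            rw [WithTop.coe_le_coe]
            cases a with
            | inl i => cases b with
              | inl i' => rw [hFA, hFA, Sum.inl_le_inl_iff]; exact f4 i i'
              | inr j =>
                rw [iff_false_intro (by simp : ¬ ((Sum.inl i : Fin s ⊕ Fin t) ≤ Sum.inr j))]
                simp only [iff_false]
                rw [hFA, hFB]
                exact f6 i j
            | inr j => cases b with
              | inl i =>
                rw [iff_false_intro (by simp : ¬ ((Sum.inr j : Fin s ⊕ Fin t) ≤ Sum.inl i))]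
                simp only [iff_false]
                rw [hFA, hFB]
                exact f7 i j
              | inr j' => rw [hFB, hFB, Sum.inr_le_inr_iff]; exact f5 j j'
  refine ⟨OrderEmbedding.ofMapLEIff F hiff, ?_⟩
  intro z
  show c (F z) = true
  induction z using WithBot.recBotCoe with
  | bot => exact hblue 0 (by omega)
  | coe z =>
    induction z using WithTop.recTopCoe with
    | top => exact hblue' m (le_refl m)
    | coe z => cases z with
      | inl i => exact hblue (u + i) (hui i).1
      | inr j => exact hblue' (v + j) (hvj j).1

/-! ### The main combinatorial theorem -/

theorem main (s t : ℕ) (hs : 1 ≤ s) (ht : 1 ≤ t)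
    (hcount : 2^n * 2^n * (2 ^ (4 * max s t)) ^ (m+1) < Nat.factorial m) :
    ∀ c : Finset (Fin (n+m)) → Bool,
      (∃ f : WithBot (WithTop (Fin s ⊕ Fin t)) ↪o Finset (Fin (n+m)),
        ∀ z, c (f z) = true) ∨
      (∃ f : Finset (Fin n) ↪o Finset (Fin (n+m)), ∀ S, c (f S) = false) := by
  classical
  intro c
  by_cases hSD : ∃ f : WithBot (WithTop (Fin s ⊕ Fin t)) ↪o Finset (Fin (n+m)),
      ∀ z, c (f z) = true
  · exact Or.inl hSD
  right
  by_cases hDodge : ∃ σ : Equiv.Perm (Fin m), ∀ S : Finset (Fin n), eta c σ S ≤ m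
  · obtain ⟨σ, hσ⟩ := hDodge
    refine ⟨OrderEmbedding.ofMapLEIff (fun S => J S (Pre σ (eta c σ S))) ?_, ?_⟩
    · intro a b
      constructor
      · intro h; exact (J_subset_J.1 h).1
      · intro h
        exact J_subset_J.2 ⟨h, Pre_mono σ (eta_mono c σ h)⟩
    · intro S
      rcases eta_spec c σ S with h | h
      · exact absurd (hσ S) (by omega)
      · exact h
  · exfalso
    push_neg at hDodge
    have hcert : ∀ σ : Equiv.Perm (Fin m), ∃ T : ℕ → Finset (Fin n),
        Monotone T ∧ ∀ v ≤ m, c (J (T v) (Pre σ v)) = true := by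
      intro σ
      obtain ⟨S, hS⟩ := hDodge σ
      exact cert_exists c σ (Sstar := S) (by omega)
    set TF : Equiv.Perm (Fin m) → ℕ → Finset (Fin n) := fun σ => (hcert σ).choose with hTF
    have hTFmono : ∀ σ, Monotone (TF σ) := fun σ => (hcert σ).choose_spec.1
    have hTFblue : ∀ σ, ∀ v ≤ m, c (J (TF σ v) (Pre σ v)) = true :=
      fun σ => (hcert σ).choose_spec.2
    set k₀ := max s t with hk₀
    have hk₀1 : 1 ≤ k₀ := le_trans hs (le_max_left _ _)
    set E : ℕ := (2 ^ (4 * k₀)) ^ (m+1) with hE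
    set Φ : Equiv.Perm (Fin m) → Finset (Fin n) × Finset (Fin n) :=
      fun σ => (TF σ 0, TF σ m) with hΦ
    have hmaps : ∀ σ ∈ (Finset.univ : Finset (Equiv.Perm (Fin m))),
        Φ σ ∈ (Finset.univ : Finset (Finset (Fin n) × Finset (Fin n))) :=
      fun σ _ => Finset.mem_univ _
    have hcard : (Finset.univ : Finset (Finset (Fin n) × Finset (Fin n))).card * E <
        (Finset.univ : Finset (Equiv.Perm (Fin m))).card := by
      rw [Finset.card_univ, Finset.card_univ, Fintype.card_perm, Fintype.card_prod,
        Fintype.card_finset, Fintype.card_fin, Fintype.card_fin]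
      simpa using hcount
    obtain ⟨yv, -, hfib⟩ :=
      Finset.exists_lt_card_fiber_of_mul_lt_card_of_maps_to hmaps hcard
    set F : Finset (Equiv.Perm (Fin m)) :=
      Finset.univ.filter (fun σ => Φ σ = yv) with hF
    by_cases hGood : ∃ σa ∈ F, ∃ σb ∈ F, Good k₀ σa σb
    · obtain ⟨σa, ha, σb, hb, u, v, x, y, hum, hvm, hx1, hx2, hy1, hy2⟩ := hGood
      have hΦa : Φ σa = yv := (Finset.mem_filter.1 ha).2
      have hΦb : Φ σb = yv := (Finset.mem_filter.1 hb).2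
      have h0 : TF σa 0 = TF σb 0 := by
        have := congrArg Prod.fst (hΦa.trans hΦb.symm)
        simpa [hΦ] using this
      have hmm : TF σa m = TF σb m := by
        have := congrArg Prod.snd (hΦa.trans hΦb.symm)
        simpa [hΦ] using this
      exact hSD (exists_sd_embedding s t hs ht c σa σb (TF σa) (TF σb)
        (hTFmono σa) (hTFmono σb) (hTFblue σa) (hTFblue σb) h0 hmm
        u v x y hum hvm hx1 hx2 hy1 hy2)
    · push_neg at hGood
      have hFne : F.Nonempty := by
        rw [← Finset.card_pos]
        omega
      obtain ⟨σs, hσs⟩ := hFne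
      have habs : ∀ σ ∈ F, (∀ tt, Pre σ tt ⊆ Pre σs (tt + 2 * k₀)) ∧
          (∀ tt, Pre σs tt ⊆ Pre σ (tt + 2 * k₀)) := by
        intro σ hσ
        constructor
        · exact absorb_of_not_good hk₀1 (hGood σs hσs σ hσ)
        · exact absorb_of_not_good hk₀1 (hGood σ hσ σs hσs)
      have := fiber_card_le (w := 2 * k₀) σs F habs
      have h4 : (2:ℕ) ^ (2 * (2 * k₀)) = 2 ^ (4 * k₀) := by ring_nf
      rw [h4] at this
      omega

/-! ### Factorial lower bound -/

lemma factorial_lower (M : ℕ) : ((M:ℝ)/3)^M ≤ (Nat.factorial M : ℝ) := by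
  induction M with
  | zero => simp
  | succ M ih =>
    rcases Nat.eq_zero_or_pos M with rfl | hM
    · norm_num
    have h3 : ((M:ℝ)+1)^M ≤ 3 * (M:ℝ)^M := by
      have hMpos : (0:ℝ) < M := by positivity
      have h1 : ((M:ℝ)+1) = M * (1 + 1/M) := by field_simp
      have h2 : (1 + 1/(M:ℝ))^M ≤ 3 := by
        have he : (1 + 1/(M:ℝ)) ≤ Real.exp (1/M) := by
          have := Real.add_one_le_exp (1/(M:ℝ))
          linarith
        have he2 : (1 + 1/(M:ℝ))^M ≤ Real.exp (1/M) ^ M := by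
          apply pow_le_pow_left₀ (by positivity) he
        have he3 : Real.exp (1/(M:ℝ)) ^ M = Real.exp 1 := by
          rw [← Real.exp_nat_mul]
          congr 1
          field_simp
        rw [he3] at he2
        have := Real.exp_one_lt_d9
        linarith
      calc ((M:ℝ)+1)^M = (M:ℝ)^M * (1 + 1/M)^M := by rw [h1, mul_pow]
        _ ≤ (M:ℝ)^M * 3 := by
            apply mul_le_mul_of_nonneg_left h2 (by positivity)
        _ = 3 * (M:ℝ)^M := by ring
    have key : (((M:ℕ)+1:ℝ)/3)^(M+1) ≤ ((M:ℝ)+1) * ((M:ℝ)/3)^M := by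
      have : (((M:ℝ)+1)/3)^(M+1) = (((M:ℝ)+1)/3) * (((M:ℝ)+1)^M / 3^M) := by
        rw [pow_succ]
        rw [div_pow]
        ring
      rw [this]
      have h4 : ((M:ℝ)+1)^M / 3^M ≤ 3 * ((M:ℝ)^M / 3^M) := by
        rw [← mul_div_assoc]
        apply div_le_div_of_nonneg_right h3 (by positivity)
      calc (((M:ℝ)+1)/3) * (((M:ℝ)+1)^M / 3^M) ≤ (((M:ℝ)+1)/3) * (3 * ((M:ℝ)^M / 3^M)) := by
            apply mul_le_mul_of_nonneg_left h4 (by positivity)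
        _ = ((M:ℝ)+1) * ((M:ℝ)^M / 3^M) := by ring
        _ = ((M:ℝ)+1) * ((M:ℝ)/3)^M := by rw [div_pow]
    calc ((((M+1):ℕ):ℝ)/3)^(M+1) = (((M:ℝ)+1)/3)^(M+1) := by push_cast; ring_nf
      _ ≤ ((M:ℝ)+1) * ((M:ℝ)/3)^M := key
      _ ≤ ((M:ℝ)+1) * (Nat.factorial M : ℝ) := by
          apply mul_le_mul_of_nonneg_left ih (by positivity)
      _ = (Nat.factorial (M+1) : ℝ) := by
          rw [Nat.factorial_succ]
          push_cast
          ring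


/-! ### Asymptotics -/

section Asymptotic
open Filter Real

lemma tendsto_logb_div : Tendsto (fun x : ℝ => Real.logb 2 x / x) atTop (nhds 0) := by
  have h := Real.isLittleO_log_id_atTop.tendsto_div_nhds_zero
  have h2 : Tendsto (fun x : ℝ => (Real.log x / x) * (Real.log 2)⁻¹) atTop
      (nhds (0 * (Real.log 2)⁻¹)) := h.mul_const _
  rw [zero_mul] at h2
  have heq : (fun x : ℝ => Real.logb 2 x / x) =
      (fun x : ℝ => (Real.log x / x) * (Real.log 2)⁻¹) := by
    funext x
    rw [Real.logb]
    ring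
  rw [heq]
  exact h2

lemma tendsto_x_div_logb : Tendsto (fun x : ℝ => x / Real.logb 2 x) atTop atTop := by
  have hpos : ∀ᶠ x : ℝ in atTop, Real.logb 2 x / x ∈ Set.Ioi (0:ℝ) := by
    filter_upwards [eventually_ge_atTop (2:ℝ)] with x hx
    have hx0 : (0:ℝ) < x := by linarith
    have h1 : (1:ℝ) ≤ Real.logb 2 x := by
      have := Real.logb_le_logb_of_le one_lt_two (by norm_num : (0:ℝ) < 2) hx
      rwa [Real.logb_self_eq_one one_lt_two] at this
    exact Set.mem_Ioi.2 (by positivity)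
  have h := (tendsto_nhdsWithin_iff.2 ⟨tendsto_logb_div, hpos⟩).inv_tendsto_nhdsGT_zero
  have heq : (fun x : ℝ => Real.logb 2 x / x)⁻¹ = (fun x : ℝ => x / Real.logb 2 x) := by
    funext x
    simp [Pi.inv_apply, inv_div]
  rwa [heq] at h

end Asymptotic

set_option maxHeartbeats 1600000 in
lemma pointwise (k₀ : ℕ) (hk₀1 : 1 ≤ k₀) (ε : ℝ) (hε : 0 < ε) (n : ℕ)
    (h2n : 2 ≤ n)
    (hyε : 2/ε ≤ (n:ℝ)/Real.logb 2 n) (hy4 : 4 ≤ (n:ℝ)/Real.logb 2 n)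
    (hkey : 2 + 4*(k₀:ℝ)*(3+ε)/Real.logb 2 n <
      (2+ε/2)*(1 - (Real.logb 2 (Real.logb 2 n) + 2)/Real.logb 2 n)) :
    ∃ M : ℕ, (2^n * 2^n * (2 ^ (4 * k₀)) ^ (M+1) < Nat.factorial M) ∧
      ((M:ℝ) ≤ (2+ε) * n / Real.logb 2 n) := by
  have hn2 : (2:ℝ) ≤ (n:ℝ) := by exact_mod_cast h2n
  have hn0 : (0:ℝ) < (n:ℝ) := by linarith
  obtain ⟨L, hLdef⟩ : ∃ L, L = Real.logb 2 (n:ℝ) := ⟨_, rfl⟩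
  have hL1 : (1:ℝ) ≤ L := by
    rw [hLdef]
    have := Real.logb_le_logb_of_le one_lt_two (by norm_num : (0:ℝ) < 2) hn2
    rwa [Real.logb_self_eq_one one_lt_two] at this
  have hL0 : (0:ℝ) < L := by linarith
  obtain ⟨y, hydef⟩ : ∃ y, y = (n:ℝ) / L := ⟨_, rfl⟩
  rw [← hLdef] at hkey
  rw [← hLdef, ← hydef] at hyε hy4
  have hy0 : (0:ℝ) < y := by rw [hydef]; positivity
  obtain ⟨M, hM1, hMlt⟩ : ∃ M : ℕ, (2+ε/2)*y ≤ (M:ℝ) ∧ (M:ℝ) < (2+ε/2)*y + 1 :=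
    ⟨⌈(2+ε/2)*y⌉₊, Nat.le_ceil _, Nat.ceil_lt_add_one (by positivity)⟩
  have hεy : (1:ℝ) ≤ (ε/2)*y := by
    have h1 : (ε/2)*(2/ε) ≤ (ε/2)*y :=
      mul_le_mul_of_nonneg_left hyε (by positivity)
    have h2 : (ε/2)*(2/ε) = 1 := by field_simp
    linarith
  have hM2 : (M:ℝ) ≤ (2+ε)*y := by nlinarith
  have hM8 : (8:ℝ) ≤ (M:ℝ) := by nlinarith
  have hMpos : (0:ℝ) < (M:ℝ) := by linarith
  refine ⟨M, ?_, ?_⟩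
  swap
  · rw [hLdef] at hydef
    rw [hydef] at hM2
    calc (M:ℝ) ≤ (2+ε) * ((n:ℝ)/Real.logb 2 (n:ℝ)) := hM2
      _ = (2+ε) * n / Real.logb 2 n := by ring
  -- counting inequality
  have hk₀0 : (0:ℝ) ≤ (k₀:ℝ) := by positivity
  have hD : (0:ℝ) ≤ 4*(k₀:ℝ)*(3+ε)/L := by positivity
  have hfac : 0 < 1 - (Real.logb 2 L + 2)/L := by
    by_contra hcon
    push_neg at hcon
    have h1 : (2+ε/2)*(1 - (Real.logb 2 L + 2)/L) ≤ 0 :=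
      mul_nonpos_of_nonneg_of_nonpos (by linarith) hcon
    linarith
  have hX0 : (0:ℝ) ≤ L - Real.logb 2 L - 2 := by
    have h1 : (Real.logb 2 L + 2)/L < 1 := by linarith
    have := (div_lt_one hL0).1 h1
    linarith
  have hyne : y ≠ 0 := ne_of_gt hy0
  have hnne : (n:ℝ) ≠ 0 := ne_of_gt hn0
  have hLne : L ≠ 0 := ne_of_gt hL0
  have hy4log : Real.logb 2 (y/4) = L - Real.logb 2 L - 2 := by
    rw [Real.logb_div hyne (by norm_num), hydef, Real.logb_div hnne hLne, ← hLdef]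
    have h4 : Real.logb 2 (4:ℝ) = 2 := by
      rw [(by norm_num : (4:ℝ) = 2^(2:ℕ)), Real.logb_pow, Real.logb_self_eq_one one_lt_two]
      norm_num
    rw [h4]
  have hM3 : (M:ℝ) + 1 ≤ (3+ε)*y := by nlinarith
  have hchain1 : y/4 ≤ (M:ℝ)/3 := by nlinarith
  have hlogMlb : L - Real.logb 2 L - 2 ≤ Real.logb 2 ((M:ℝ)/3) := by
    rw [← hy4log]
    exact Real.logb_le_logb_of_le one_lt_two (by positivity) hchain1
  have hident1 : (2+ε/2)*y*(L - Real.logb 2 L - 2) =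
      (2+ε/2)*(n:ℝ)*(1 - (Real.logb 2 L + 2)/L) := by
    rw [hydef]
    field_simp
    ring
  have hident2 : 2*(n:ℝ) + 4*(k₀:ℝ)*((3+ε)*y) =
      (n:ℝ)*(2 + (4*(k₀:ℝ)*(3+ε))/L) := by
    rw [hydef]
    field_simp
  have hkeyexp : 2*(n:ℝ) + 4*(k₀:ℝ)*((M:ℝ)+1) < (M:ℝ) * Real.logb 2 ((M:ℝ)/3) := by
    have s1 : 2*(n:ℝ) + 4*(k₀:ℝ)*((M:ℝ)+1) ≤ 2*(n:ℝ) + 4*(k₀:ℝ)*((3+ε)*y) := by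
      have h0 : (0:ℝ) ≤ 4*(k₀:ℝ) := by positivity
      nlinarith
    have s2 : (n:ℝ)*(2 + (4*(k₀:ℝ)*(3+ε))/L) <
        (n:ℝ)*((2+ε/2)*(1 - (Real.logb 2 L + 2)/L)) :=
      mul_lt_mul_of_pos_left hkey hn0
    have s3 : (n:ℝ)*((2+ε/2)*(1 - (Real.logb 2 L + 2)/L)) =
        (2+ε/2)*y*(L - Real.logb 2 L - 2) := by
      rw [hident1]; ring
    have s4 : (2+ε/2)*y*(L - Real.logb 2 L - 2) ≤ (M:ℝ)*(L - Real.logb 2 L - 2) :=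
      mul_le_mul_of_nonneg_right hM1 hX0
    have s5 : (M:ℝ)*(L - Real.logb 2 L - 2) ≤ (M:ℝ) * Real.logb 2 ((M:ℝ)/3) :=
      mul_le_mul_of_nonneg_left hlogMlb (by positivity)
    calc 2*(n:ℝ) + 4*(k₀:ℝ)*((M:ℝ)+1) ≤ 2*(n:ℝ) + 4*(k₀:ℝ)*((3+ε)*y) := s1
      _ = (n:ℝ)*(2 + (4*(k₀:ℝ)*(3+ε))/L) := hident2
      _ < (2+ε/2)*y*(L - Real.logb 2 L - 2) := by rw [← s3]; exact s2
      _ ≤ (M:ℝ)*(L - Real.logb 2 L - 2) := s4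
      _ ≤ (M:ℝ) * Real.logb 2 ((M:ℝ)/3) := s5
  have hApos : (0:ℝ) < (2:ℝ)^n * 2^n * ((2:ℝ)^(4*k₀))^(M+1) := by positivity
  have hBpos : (0:ℝ) < ((M:ℝ)/3)^M := by positivity
  have hlogA : Real.logb 2 ((2:ℝ)^n * 2^n * ((2:ℝ)^(4*k₀))^(M+1)) =
      2*(n:ℝ) + 4*(k₀:ℝ)*((M:ℝ)+1) := by
    have hne1 : (2:ℝ)^n * 2^n ≠ 0 := by positivity
    have hne2 : ((2:ℝ)^(4*k₀))^(M+1) ≠ 0 := by positivity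
    have hne3 : (2:ℝ)^n ≠ 0 := by positivity
    rw [Real.logb_mul hne1 hne2, Real.logb_mul hne3 hne3,
      Real.logb_pow, Real.logb_pow, Real.logb_pow,
      Real.logb_self_eq_one one_lt_two]
    push_cast
    ring
  have hlogB : Real.logb 2 (((M:ℝ)/3)^M) = (M:ℝ) * Real.logb 2 ((M:ℝ)/3) := by
    rw [Real.logb_pow]
  have hAB : (2:ℝ)^n * 2^n * ((2:ℝ)^(4*k₀))^(M+1) < ((M:ℝ)/3)^M := by
    by_contra hc
    push_neg at hc
    have := Real.logb_le_logb_of_le one_lt_two hBpos hc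
    rw [hlogA, hlogB] at this
    linarith
  have hfin : (2:ℝ)^n * 2^n * ((2:ℝ)^(4*k₀))^(M+1) < (Nat.factorial M : ℝ) :=
    lt_of_lt_of_le hAB (factorial_lower M)
  have hcast : ((2^n * 2^n * (2 ^ (4 * k₀)) ^ (M+1) : ℕ) : ℝ) =
      (2:ℝ)^n * 2^n * ((2:ℝ)^(4*k₀))^(M+1) := by push_cast; ring
  rw [← hcast] at hfin
  exact_mod_cast hfin


end SDR

/-- For fixed `s, t ≥ 1` and every `ε > 0`, for all sufficiently large `n`,
`R(SD_{s,t}, Q_n) ≤ n + (2 + ε) n / log₂ n`. -/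
theorem subdivided_diamond_vs_cube_ramsey_upper (s t : ℕ) (hs : 1 ≤ s) (ht : 1 ≤ t)
    (ε : ℝ) (hε : 0 < ε) :
    ∃ n₀ : ℕ, ∀ n : ℕ, n₀ ≤ n →
      (posetRamsey (SubdividedDiamond s t) (Finset (Fin n)) : ℝ) ≤
        n + (2 + ε) * n / Real.logb 2 n := by
  classical
  set k₀ := max s t with hk₀def
  have hk₀1 : 1 ≤ k₀ := le_trans hs (le_max_left _ _)
  have hℓ : Filter.Tendsto (fun n : ℕ => Real.logb 2 (n:ℝ)) Filter.atTop Filter.atTop :=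
    (Real.tendsto_logb_atTop one_lt_two).comp tendsto_natCast_atTop_atTop
  have hy : Filter.Tendsto (fun n : ℕ => (n:ℝ) / Real.logb 2 (n:ℝ)) Filter.atTop Filter.atTop :=
    SDR.tendsto_x_div_logb.comp tendsto_natCast_atTop_atTop
  have hE4' : ∀ᶠ L : ℝ in Filter.atTop,
      2 + 4*(k₀:ℝ)*(3+ε)/L < (2+ε/2)*(1 - (Real.logb 2 L + 2)/L) := by
    have hL1 : Filter.Tendsto (fun L : ℝ => 2 + 4*(k₀:ℝ)*(3+ε)/L) Filter.atTop
        (nhds (2 + 0)) :=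
      tendsto_const_nhds.add (tendsto_const_nhds.div_atTop Filter.tendsto_id)
    have hδ : Filter.Tendsto (fun L : ℝ => (Real.logb 2 L + 2)/L) Filter.atTop (nhds 0) := by
      have h1 : Filter.Tendsto (fun L : ℝ => Real.logb 2 L / L + 2 / L) Filter.atTop
          (nhds (0+0)) :=
        SDR.tendsto_logb_div.add (tendsto_const_nhds.div_atTop Filter.tendsto_id)
      rw [add_zero] at h1
      have heq : (fun L : ℝ => (Real.logb 2 L + 2)/L) =
          (fun L : ℝ => Real.logb 2 L / L + 2 / L) := by
        funext L; ring
      rwa [heq]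
    have hL2 : Filter.Tendsto (fun L : ℝ => (2+ε/2)*(1 - (Real.logb 2 L + 2)/L)) Filter.atTop
        (nhds ((2+ε/2)*(1-0))) :=
      tendsto_const_nhds.mul (tendsto_const_nhds.sub hδ)
    exact hL1.eventually_lt hL2 (by nlinarith)
  have hE4 : ∀ᶠ n : ℕ in Filter.atTop,
      2 + 4*(k₀:ℝ)*(3+ε)/Real.logb 2 (n:ℝ) <
        (2+ε/2)*(1 - (Real.logb 2 (Real.logb 2 (n:ℝ)) + 2)/Real.logb 2 (n:ℝ)) :=
    hℓ.eventually hE4'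
  have hP : ∀ᶠ n : ℕ in Filter.atTop,
      (posetRamsey (SubdividedDiamond s t) (Finset (Fin n)) : ℝ) ≤
        n + (2 + ε) * n / Real.logb 2 n := by
    filter_upwards [Filter.eventually_ge_atTop 2, hy.eventually_ge_atTop (2/ε),
      hy.eventually_ge_atTop 4, hE4] with n h2n hyε hy4 hkey
    obtain ⟨M, hcount, hM2⟩ := SDR.pointwise k₀ hk₀1 ε hε n h2n hyε hy4 hkey
    have hmem : (n + M) ∈ {N : ℕ | ∀ c : Finset (Fin N) → Bool,
        (∃ f : SubdividedDiamond s t ↪o Finset (Fin N), ∀ x, c (f x) = true) ∨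
        (∃ f : Finset (Fin n) ↪o Finset (Fin N), ∀ x, c (f x) = false)} := by
      intro c
      exact SDR.main s t hs ht hcount c
    have hle : posetRamsey (SubdividedDiamond s t) (Finset (Fin n)) ≤ n + M :=
      Nat.sInf_le hmem
    have hle' : (posetRamsey (SubdividedDiamond s t) (Finset (Fin n)) : ℝ) ≤ (n:ℝ) + M := by
      have := (Nat.cast_le (α := ℝ)).2 hle
      push_cast at this
      linarith
    linarith
  obtain ⟨n₀, hn₀⟩ := Filter.eventually_atTop.1 hP
  exact ⟨n₀, hn₀⟩
end

section
/- Let P be a finite trivial poset with width w(P) ≥ 2. Then for every n ≥ 1 the poset Ramsey number satisfies n + h(P) + 1 ≤ R(P, Q_n) < n + h(P) + log₂ w(P) + (1/2)·log₂ log₂ w(P) + 1, where h(P) is the height of P. -/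
/-- The height of a poset: the maximum size of a chain. -/
noncomputable def posetHeight (P : Type*) [PartialOrder P] : ℕ :=
  sSup {m : ℕ | ∃ s : Finset P, IsChain (· ≤ ·) (s : Set P) ∧ s.card = m}

/-- The width of a poset: the maximum size of an antichain. -/
noncomputable def posetWidth (P : Type*) [PartialOrder P] : ℕ :=
  sSup {m : ℕ | ∃ s : Finset P, IsAntichain (· ≤ ·) (s : Set P) ∧ s.card = m}

/-- A poset is trivial if it contains no copy of `V` (two incomparable elements above
a common element) and no copy of `Λ` (two incomparable elements below a common element). -/
def IsTrivialPoset (P : Type*) [PartialOrder P] : Prop :=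
  (¬ ∃ a b c : P, c ≤ a ∧ c ≤ b ∧ ¬ a ≤ b ∧ ¬ b ≤ a) ∧
  (¬ ∃ a b c : P, a ≤ c ∧ b ≤ c ∧ ¬ a ≤ b ∧ ¬ b ≤ a)


lemma choose_symm_half (m : ℕ) : Nat.choose (2*m+1) (m+1) = Nat.choose (2*m+1) m := by
  have := (Nat.choose_symm (n := 2*m+1) (k := m+1) (by omega)).symm
  simpa [show 2*m+1-(m+1) = m by omega] using this

lemma lemA : ∀ m : ℕ, 1 ≤ m → 16^m ≤ (Nat.choose (2*m) m)^2 * (4*m) := by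
  intro m hm
  induction m with
  | zero => omega
  | succ m ih =>
    rcases Nat.eq_or_lt_of_le hm with h1 | h1
    · norm_num [← h1]
    · have hm1 : 1 ≤ m := by omega
      have ih' := ih hm1
      set b := Nat.choose (2*m) m with hb
      set b' := Nat.choose (2*(m+1)) (m+1) with hb'
      have key : b' * ((m+1)*(m+1)) = (2*m+2)*((2*m+1) * b) := by
        have h2 : (2*m+1+1) * Nat.choose (2*m+1) m = Nat.choose (2*m+2) (m+1) * (m+1) := by
          simpa [Nat.succ_eq_add_one] using Nat.add_one_mul_choose_eq (2*m+1) m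
        have h3 : (2*m+1) * Nat.choose (2*m) m = Nat.choose (2*m+1) (m+1) * (m+1) := by
          simpa [Nat.succ_eq_add_one] using Nat.add_one_mul_choose_eq (2*m) m
        have h4 := choose_symm_half m
        have hb'eq : b' = Nat.choose (2*m+2) (m+1) := by rw [hb']; ring_nf
        rw [hb'eq]
        nlinarith [h2, h3, h4]
      have hineq : (2*m+1)^2 ≥ 4*m*(m+1) := by nlinarith
      have : 16^(m+1) * ((m+1)*(m+1))^2 ≤ b'^2 * (4*(m+1)) * ((m+1)*(m+1))^2 := by
        calc 16^(m+1) * ((m+1)*(m+1))^2 = 16 * ((m+1)*(m+1))^2 * 16^m := by ring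
        _ ≤ 16 * ((m+1)*(m+1))^2 * (b^2 * (4*m)) := by
              exact Nat.mul_le_mul_left _ ih'
        _ ≤ (2*m+2)^2 * ((2*m+1)*b)^2 * (4*(m+1)) := by nlinarith [hineq, sq_nonneg b]
        _ = (b' * ((m+1)*(m+1)))^2 * (4*(m+1)) := by rw [key]; ring
        _ = b'^2 * (4*(m+1)) * ((m+1)*(m+1))^2 := by ring
      exact Nat.le_of_mul_le_mul_right this (by positivity)

lemma lemB : ∀ c : ℕ, 1 ≤ c → 4^c ≤ (Nat.choose c (c/2))^2 * (2*c+2) := by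
  intro c hc
  rcases Nat.even_or_odd c with ⟨m, hm⟩ | ⟨m, hm⟩
  · subst hm
    have hm1 : 1 ≤ m := by omega
    have := lemA m hm1
    have hdiv : (m+m)/2 = m := by omega
    calc 4^(m+m) = 16^m := by rw [show m+m = 2*m by ring, pow_mul]; norm_num
    _ ≤ (Nat.choose (2*m) m)^2 * (4*m) := this
    _ ≤ (Nat.choose (m+m) ((m+m)/2))^2 * (2*(m+m)+2) := by
        rw [hdiv, show m+m = 2*m by ring]
        exact Nat.mul_le_mul_left _ (by omega)
  · subst hm
    have hdiv : (2*m+1)/2 = m := by omega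
    have hA := lemA (m+1) (by omega)
    have h2 : 2 * Nat.choose (2*m+1) m = Nat.choose (2*m+2) (m+1) := by
      have hp : Nat.choose (2*m+2) (m+1) = Nat.choose (2*m+1) m + Nat.choose (2*m+1) (m+1) := by
        simpa [Nat.succ_eq_add_one] using Nat.choose_succ_succ (2*m+1) m
      have h4 := choose_symm_half m
      omega
    have key : 4 * ((Nat.choose (2*m+1) m)^2 * (2*(2*m+1)+2)) = (Nat.choose (2*(m+1)) (m+1))^2 * (4*(m+1)) := by
      have h5 : Nat.choose (2*(m+1)) (m+1) = 2 * Nat.choose (2*m+1) m := by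
        rw [h2]; ring_nf
      rw [h5]; ring
    have hstep : 4 * 4^(2*m+1) ≤ 4 * ((Nat.choose (2*m+1) m)^2 * (2*(2*m+1)+2)) := by
      rw [key]
      calc 4*4^(2*m+1) = 16^(m+1) := by
            rw [show (16:ℕ) = 4^2 by norm_num, ← pow_mul]
            rw [show 2*(m+1) = (2*m+1)+1 by ring]
            ring
      _ ≤ _ := hA
    rw [hdiv]
    exact Nat.le_of_mul_le_mul_left hstep (by norm_num)

lemma binc_mono : Monotone (fun c => Nat.choose c (c/2)) := by
  apply monotone_nat_of_le_succ
  intro c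
  rcases Nat.even_or_odd c with ⟨m, hm⟩ | ⟨m, hm⟩
  · subst hm
    have h1 : (m+m)/2 = m := by omega
    have h2 : (m+m+1)/2 = m := by omega
    simp only [h1, h2]
    exact Nat.choose_le_choose m (by omega)
  · subst hm
    have h1 : (2*m+1)/2 = m := by omega
    have h2 : (2*m+1+1)/2 = m+1 := by omega
    simp only [h1, h2]
    have hp : Nat.choose (2*m+2) (m+1) = Nat.choose (2*m+1) m + Nat.choose (2*m+1) (m+1) := by
      simpa [Nat.succ_eq_add_one] using Nat.choose_succ_succ (2*m+1) m
    have h4 := choose_symm_half m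
    have : 2*m+1+1 = 2*m+2 := by ring
    rw [this, hp]
    omega


lemma rpow_div_lt {p q : ℕ} {c : ℝ} (hc : 0 < c) (hq : 0 < q) (h : (2:ℝ)^p < c^q) :
    (2:ℝ)^((p:ℝ)/(q:ℝ)) < c := by
  by_contra hle
  push_neg at hle
  have h2 : c^q ≤ ((2:ℝ)^((p:ℝ)/(q:ℝ)))^q := pow_le_pow_left₀ hc.le hle q
  rw [← Real.rpow_natCast ((2:ℝ)^((p:ℝ)/(q:ℝ))) q, ← Real.rpow_mul (by norm_num)] at h2
  rw [div_mul_cancel₀ (p:ℝ) (by positivity : (q:ℝ) ≠ 0)] at h2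
  rw [Real.rpow_natCast] at h2
  linarith

lemma main_numeric (w : ℕ) (hw : 2 ≤ w) :
    ∃ c : ℕ, 1 ≤ c ∧ w ≤ Nat.choose c (c/2) ∧
      (c:ℝ) < Real.logb 2 w + (1/2) * Real.logb 2 (Real.logb 2 w) + 2 := by
  have hWpos : (0:ℝ) < (w:ℝ) := by positivity
  set L : ℝ := Real.logb 2 (w:ℝ) with hL
  -- lower bounds for L from lower bounds on w
  have hLlt : ∀ r : ℝ, (2:ℝ)^r < (w:ℝ) → r < L := by
    intro r h
    rw [hL, Real.lt_logb_iff_rpow_lt (by norm_num) hWpos]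
    exact h
  have hLle : ∀ r : ℝ, (2:ℝ)^r ≤ (w:ℝ) → r ≤ L := by
    intro r h
    rw [hL, Real.le_logb_iff_rpow_le (by norm_num) hWpos]
    exact h
  have hL1 : 1 ≤ L := by
    apply hLle
    rw [Real.rpow_one]
    exact_mod_cast hw
  have hLpos : 0 < L := by linarith
  have hMlt : ∀ r : ℝ, (2:ℝ)^r < L → r < Real.logb 2 L := by
    intro r h
    rw [Real.lt_logb_iff_rpow_lt (by norm_num) hLpos]
    exact h
  have hMle : ∀ r : ℝ, (2:ℝ)^r ≤ L → r ≤ Real.logb 2 L := by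
    intro r h
    rw [Real.le_logb_iff_rpow_le (by norm_num) hLpos]
    exact h
  have hlogL0 : 0 ≤ Real.logb 2 L := by
    apply hMle
    rw [Real.rpow_zero]
    exact hL1
  set β : ℝ := L + (1/2) * Real.logb 2 L with hβ
  have hβ1 : 1 ≤ β := by rw [hβ]; linarith
  refine ⟨⌈β⌉₊ + 1, by omega, ?_, ?_⟩
  swap
  · have h := Nat.ceil_lt_add_one (show (0:ℝ) ≤ β by linarith)
    push_cast
    linarith [h]
  set c : ℕ := ⌈β⌉₊ + 1 with hc
  have hcβ : β + 1 ≤ (c:ℝ) := by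
    have := Nat.le_ceil β
    rw [hc]
    push_cast
    linarith
  have hcβ' : (c:ℝ) < β + 2 := by
    have := Nat.ceil_lt_add_one (by linarith : (0:ℝ) ≤ β)
    rw [hc]
    push_cast
    linarith
  have hkc : ∀ k : ℕ, (k:ℝ) < β + 1 → k + 1 ≤ c := by
    intro k hk
    have : (k:ℝ) < (c:ℝ) := lt_of_lt_of_le hk hcβ
    exact_mod_cast Nat.succ_le_of_lt (by exact_mod_cast this)
  by_cases h16 : 16 ≤ w
  · -- big case
    have hL4 : (4:ℝ) ≤ L := by
      apply hLle
      rw [show (4:ℝ) = ((4:ℕ):ℝ) by norm_num, Real.rpow_natCast]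
      calc (2:ℝ)^(4:ℕ) = ((16:ℕ):ℝ) := by norm_num
      _ ≤ (w:ℝ) := by exact_mod_cast h16
    have hlogL : Real.logb 2 L ≤ 2*L - 6 := by
      have hLle2 : L ≤ (2:ℝ)^(2*L-6) := by
        have e1 : (2:ℝ)^(2*L-6) = 4 * (2:ℝ)^(2*L-8) := by
          rw [show 2*L-6 = 2 + (2*L-8) by ring, Real.rpow_add (by norm_num)]
          have : (2:ℝ)^(2:ℝ) = 4 := by
            rw [show (2:ℝ) = ((2:ℕ):ℝ) from by norm_num]
            rw [Real.rpow_natCast]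
            norm_num
          rw [this]
        have e2 : (2:ℝ)^(2*L-8) = Real.exp (Real.log 2 * (2*L-8)) :=
          Real.rpow_def_of_pos (by norm_num) _
        have e3 : Real.log 2 * (2*L-8) + 1 ≤ Real.exp (Real.log 2 * (2*L-8)) :=
          Real.add_one_le_exp _
        have hlog2 : (1/4 : ℝ) ≤ Real.log 2 := by
          have := Real.log_two_gt_d9
          linarith
        rw [e1, e2]
        nlinarith [hlog2, hL4]
      calc Real.logb 2 L ≤ Real.logb 2 ((2:ℝ)^(2*L-6)) := by
            rw [Real.logb_le_logb (by norm_num) hLpos (by positivity)]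
            exact hLle2
      _ = 2*L - 6 := Real.logb_rpow (by norm_num) (by norm_num)
    have hc2L : (c:ℝ) ≤ 2*L - 1 := by
      rw [hβ] at hcβ'
      linarith
    have h2c : 2 * (w:ℝ) * (2:ℝ)^((1/2) * Real.logb 2 L) ≤ (2:ℝ)^(c:ℝ) := by
      have e4 : (2:ℝ)^(β+1) = 2 * (w:ℝ) * (2:ℝ)^((1/2) * Real.logb 2 L) := by
        rw [hβ, show L + (1/2)*Real.logb 2 L + 1 = L + ((1/2)*Real.logb 2 L + 1) by ring,
          Real.rpow_add (by norm_num), Real.rpow_add (by norm_num)]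
        rw [show (2:ℝ)^L = (w:ℝ) from by rw [hL]; exact Real.rpow_logb (by norm_num) (by norm_num) hWpos]
        rw [Real.rpow_one]
        ring
      rw [← e4]
      exact (Real.rpow_le_rpow_left_iff (by norm_num)).2 (by linarith)
    have hsqL : ((2:ℝ)^((1/2) * Real.logb 2 L))^2 = L := by
      rw [← Real.rpow_natCast ((2:ℝ)^((1/2) * Real.logb 2 L)) 2, ← Real.rpow_mul (by norm_num)]
      rw [show (1/2) * Real.logb 2 L * ((2:ℕ):ℝ) = Real.logb 2 L by push_cast; ring]
      exact Real.rpow_logb (by norm_num) (by norm_num) hLpos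
    have hBnat := lemB c (by omega)
    set B : ℝ := (Nat.choose c (c/2) : ℝ) with hB0
    have hBpos : 0 ≤ B := by rw [hB0]; positivity
    have hB : (4:ℝ)^c ≤ B^2 * (2*c+2) := by
      rw [hB0]
      exact_mod_cast hBnat
    have h4c : ((2:ℝ)^(c:ℝ))^2 = (4:ℝ)^c := by
      rw [Real.rpow_natCast, ← pow_mul, show c*2 = 2*c by ring, pow_mul]
      norm_num
    have hge : 4 * (w:ℝ)^2 * L ≤ B^2 * (2*c+2) := by
      calc 4 * (w:ℝ)^2 * L = (2 * (w:ℝ) * (2:ℝ)^((1/2) * Real.logb 2 L))^2 := by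
            rw [mul_pow, mul_pow, hsqL]; ring
      _ ≤ ((2:ℝ)^(c:ℝ))^2 := pow_le_pow_left₀ (by positivity) h2c 2
      _ = (4:ℝ)^c := h4c
      _ ≤ _ := hB
    have h2c2 : (2*(c:ℝ)+2) ≤ 4 * L := by linarith
    have hWB : (w:ℝ)^2 ≤ B^2 := by
      nlinarith [mul_le_mul_of_nonneg_left h2c2 (sq_nonneg B), hge, hLpos]
    have hfin : (w:ℝ) ≤ B := by
      exact (pow_le_pow_iff_left₀ (by positivity) hBpos two_ne_zero).1 hWB
    rw [hB0] at hfin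
    exact_mod_cast hfin
  · -- small cases w ≤ 15
    push_neg at h16
    have bincc : ∀ k v : ℕ, k ≤ c → v ≤ Nat.choose k (k/2) → v ≤ Nat.choose c (c/2) :=
      fun k v hk hv => le_trans hv (binc_mono hk)
    by_cases h3 : w ≤ 2
    · have h2c : 2 ≤ c := by
        have h' := hkc 1 (by push_cast; linarith)
        omega
      have hm := binc_mono h2c
      have he : Nat.choose 2 (2/2) = 2 := by decide
      simp only [] at hm
      omega
    by_cases h4 : w ≤ 3
    · have hLgt : (1:ℝ) < L := by
        apply hLlt
        rw [Real.rpow_one]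
        exact_mod_cast (by omega : 2 < w)
      have hlogLpos : 0 < Real.logb 2 L := by
        apply hMlt
        rw [Real.rpow_zero]
        exact hLgt
      have h3c : 3 ≤ c := hkc 2 (by rw [hβ]; push_cast; linarith)
      have hm := binc_mono h3c
      have he : Nat.choose 3 (3/2) = 3 := by decide
      simp only [] at hm
      omega
    by_cases h5 : w ≤ 5
    · have hLge : (2:ℝ) ≤ L := by
        apply hLle
        rw [show (2:ℝ) = ((2:ℕ):ℝ) by norm_num, Real.rpow_natCast]
        calc (2:ℝ)^(2:ℕ) = ((4:ℕ):ℝ) := by norm_num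
        _ ≤ (w:ℝ) := by exact_mod_cast (by omega : 4 ≤ w)
      have hlogL1 : (1:ℝ) ≤ Real.logb 2 L := by
        apply hMle
        rw [Real.rpow_one]
        exact hLge
      have h4c : 4 ≤ c := hkc 3 (by rw [hβ]; push_cast; linarith)
      have hm := binc_mono h4c
      have he : Nat.choose 4 (4/2) = 6 := by decide
      simp only [] at hm
      omega
    by_cases h10 : w ≤ 10
    · have hLgt : (5:ℝ)/2 < L := by
        have h52 : (2:ℝ)^(((5:ℕ):ℝ)/((2:ℕ):ℝ)) < (6:ℝ) := by
          apply rpow_div_lt (by norm_num) (by norm_num)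
          norm_num
        apply hLlt
        have h6w : (6:ℝ) ≤ (w:ℝ) := by exact_mod_cast (by omega : 6 ≤ w)
        calc (2:ℝ)^((5:ℝ)/2) = (2:ℝ)^(((5:ℕ):ℝ)/((2:ℕ):ℝ)) := by norm_num
        _ < 6 := h52
        _ ≤ (w:ℝ) := h6w
      have hlogL1 : (1:ℝ) < Real.logb 2 L := by
        apply hMlt
        rw [Real.rpow_one]
        linarith
      have h5c : 5 ≤ c := hkc 4 (by rw [hβ]; push_cast; linarith)
      have hm := binc_mono h5c
      have he : Nat.choose 5 (5/2) = 10 := by decide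
      simp only [] at hm
      omega
    · -- 11 ≤ w ≤ 15
      have hLgt : (10:ℝ)/3 < L := by
        have h103 : (2:ℝ)^(((10:ℕ):ℝ)/((3:ℕ):ℝ)) < (11:ℝ) := by
          apply rpow_div_lt (by norm_num) (by norm_num)
          norm_num
        apply hLlt
        have h11w : (11:ℝ) ≤ (w:ℝ) := by exact_mod_cast (by omega : 11 ≤ w)
        calc (2:ℝ)^((10:ℝ)/3) = (2:ℝ)^(((10:ℕ):ℝ)/((3:ℕ):ℝ)) := by norm_num
        _ < 11 := h103
        _ ≤ (w:ℝ) := h11w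
      have hlogL2 : (5:ℝ)/3 < Real.logb 2 L := by
        have h53 : (2:ℝ)^(((5:ℕ):ℝ)/((3:ℕ):ℝ)) < (10:ℝ)/3 := by
          apply rpow_div_lt (by norm_num) (by norm_num)
          norm_num
        apply hMlt
        calc (2:ℝ)^((5:ℝ)/3) = (2:ℝ)^(((5:ℕ):ℝ)/((3:ℕ):ℝ)) := by norm_num
        _ < (10:ℝ)/3 := h53
        _ < L := hLgt
      have h6c : 6 ≤ c := hkc 5 (by rw [hβ]; push_cast; linarith)
      have hm := binc_mono h6c
      have he : Nat.choose 6 (6/2) = 20 := by decide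
      simp only [] at hm
      omega

section PosetBasics

variable {P : Type*} [PartialOrder P] [Fintype P]

lemma height_bdd : BddAbove {m : ℕ | ∃ s : Finset P, IsChain (· ≤ ·) (s : Set P) ∧ s.card = m} := by
  refine ⟨Fintype.card P, fun m hm => ?_⟩
  obtain ⟨s, _, hc⟩ := hm
  rw [← hc]
  exact Finset.card_le_univ s

lemma width_bdd : BddAbove {m : ℕ | ∃ s : Finset P, IsAntichain (· ≤ ·) (s : Set P) ∧ s.card = m} := by
  refine ⟨Fintype.card P, fun m hm => ?_⟩
  obtain ⟨s, _, hc⟩ := hm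
  rw [← hc]
  exact Finset.card_le_univ s

lemma exists_chain_card_height :
    ∃ s : Finset P, IsChain (· ≤ ·) (s : Set P) ∧ s.card = posetHeight P := by
  have := Nat.sSup_mem (s := {m : ℕ | ∃ s : Finset P, IsChain (· ≤ ·) (s : Set P) ∧ s.card = m})
    ⟨0, ∅, by simp [IsChain]⟩ height_bdd
  exact this

lemma chain_card_le_height (s : Finset P) (h : IsChain (· ≤ ·) (s : Set P)) :
    s.card ≤ posetHeight P :=
  le_csSup height_bdd ⟨s, h, rfl⟩

lemma antichain_card_le_width (s : Finset P) (h : IsAntichain (· ≤ ·) (s : Set P)) :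
    s.card ≤ posetWidth P :=
  le_csSup width_bdd ⟨s, h, rfl⟩

/-- comparability -/
def PComp (a b : P) : Prop := a ≤ b ∨ b ≤ a

lemma pcomp_refl (a : P) : PComp a a := Or.inl le_rfl

lemma pcomp_symm {a b : P} (h : PComp a b) : PComp b a := h.symm

lemma pcomp_trans (htriv : IsTrivialPoset P) {a b c : P} (h1 : PComp a b) (h2 : PComp b c) :
    PComp a c := by
  obtain ⟨hV, hΛ⟩ := htriv
  rcases h1 with h1 | h1 <;> rcases h2 with h2 | h2
  · exact Or.inl (h1.trans h2)
  · by_contra hnc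
    rw [PComp] at hnc
    push_neg at hnc
    exact hΛ ⟨a, c, b, h1, h2, hnc.1, hnc.2⟩
  · by_contra hnc
    rw [PComp] at hnc
    push_neg at hnc
    exact hV ⟨a, c, b, h1, h2, hnc.1, hnc.2⟩
  · exact Or.inr (h2.trans h1)

lemma exists_two_incomp (hw : 2 ≤ posetWidth P) : ∃ u v : P, ¬ u ≤ v ∧ ¬ v ≤ u := by
  have := Nat.sSup_mem (s := {m : ℕ | ∃ s : Finset P, IsAntichain (· ≤ ·) (s : Set P) ∧ s.card = m})
    ⟨0, ∅, by simp [IsAntichain, Set.Pairwise]⟩ width_bdd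
  obtain ⟨s, hanti, hcard⟩ := this
  have h2 : 2 ≤ s.card := by rw [hcard]; exact hw
  obtain ⟨u, hu, v, hv, huv⟩ := Finset.one_lt_card.1 (show 1 < s.card by omega)
  exact ⟨u, v, hanti hu hv huv, hanti hv hu (Ne.symm huv)⟩

lemma height_pos (hw : 2 ≤ posetWidth P) : 1 ≤ posetHeight P := by
  obtain ⟨u, _, _, _⟩ := exists_two_incomp hw
  have : ({u} : Finset P).card ≤ posetHeight P :=
    chain_card_le_height {u} (by simp [IsChain, Set.Pairwise])
  simpa using this

open Classical in
/-- rank of an element: number of elements strictly below it -/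
noncomputable def prank (p : P) : ℕ := (Finset.univ.filter (· < p)).card

open Classical in
lemma prank_lt {p q : P} (h : p < q) : prank p < prank q := by
  classical
  apply Finset.card_lt_card
  constructor
  · intro x hx
    simp only [Finset.mem_filter] at hx ⊢
    exact ⟨hx.1, hx.2.trans h⟩
  · intro hsub
    have : p ∈ Finset.univ.filter (· < q) := by simp [h]
    have := hsub this
    simp at this

lemma prank_le (htriv : IsTrivialPoset P) (p : P) : prank p + 1 ≤ posetHeight P := by
  classical
  have hchain : IsChain (· ≤ ·) ((insert p (Finset.univ.filter (· < p)) : Finset P) : Set P) := by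
    intro x hx y hy hxy
    simp only [Finset.coe_insert, Set.mem_insert_iff, Finset.coe_filter, Set.mem_setOf_eq,
      Finset.mem_univ, true_and] at hx hy
    rcases hx with rfl | hx <;> rcases hy with rfl | hy
    · exact absurd rfl hxy
    · exact Or.inr hy.le
    · exact Or.inl hx.le
    · -- both < p : no-Λ
      have := pcomp_trans htriv (Or.inl hx.le) (Or.inr hy.le)
      exact this
  have hcard : (insert p (Finset.univ.filter (· < p))).card = prank p + 1 := by
    rw [Finset.card_insert_of_notMem (by simp)]
    rfl
  have := chain_card_le_height _ hchain
  omega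

end PosetBasics


open Finset

variable {n m cc : ℕ}

/-- The embedded set: A-block from `X`, E-block initial segment of length `j`,
C-block from `D`. -/
def emb (n m cc : ℕ) (X : Finset (Fin n)) (j : ℕ) (D : Finset (Fin cc)) :
    Finset (Fin (n+m+cc)) :=
  Finset.univ.filter (fun x =>
    (∃ a ∈ X, (a:ℕ) = (x:ℕ)) ∨ (n ≤ (x:ℕ) ∧ (x:ℕ) < n + j) ∨ (∃ k ∈ D, n+m+(k:ℕ) = (x:ℕ)))

lemma mem_emb {X : Finset (Fin n)} {j : ℕ} {D : Finset (Fin cc)} {x : Fin (n+m+cc)} :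
    x ∈ emb n m cc X j D ↔
      (∃ a ∈ X, (a:ℕ) = (x:ℕ)) ∨ (n ≤ (x:ℕ) ∧ (x:ℕ) < n + j) ∨ (∃ k ∈ D, n+m+(k:ℕ) = (x:ℕ)) := by
  simp [emb]

lemma emb_subset_emb {X X' : Finset (Fin n)} {j j' : ℕ} {D D' : Finset (Fin cc)}
    (hj : j ≤ m) (hj' : j' ≤ m) :
    emb n m cc X j D ⊆ emb n m cc X' j' D' ↔ X ⊆ X' ∧ j ≤ j' ∧ D ⊆ D' := by
  constructor
  · intro hsub
    refine ⟨?_, ?_, ?_⟩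
    · intro a ha
      have hx : (⟨(a:ℕ), by omega⟩ : Fin (n+m+cc)) ∈ emb n m cc X j D := by
        rw [mem_emb]; exact Or.inl ⟨a, ha, rfl⟩
      have := hsub hx
      rw [mem_emb] at this
      rcases this with ⟨a', ha', he⟩ | ⟨h1, h2⟩ | ⟨k, hk, he⟩
      · have : a' = a := Fin.ext (by simpa using he)
        rwa [← this]
      · simp at h1 h2; omega
      · simp at he; omega
    · by_contra hlt
      push_neg at hlt
      have hj1 : 1 ≤ j := by omega
      have hx : (⟨n + j - 1, by omega⟩ : Fin (n+m+cc)) ∈ emb n m cc X j D := by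
        rw [mem_emb]; right; left; simp; omega
      have := hsub hx
      rw [mem_emb] at this
      rcases this with ⟨a', _, he⟩ | ⟨h1, h2⟩ | ⟨k, _, he⟩
      · have := a'.isLt; simp at he; omega
      · simp at h1 h2; omega
      · have := k.isLt; simp at he; omega
    · intro k hk
      have hx : (⟨n+m+(k:ℕ), by omega⟩ : Fin (n+m+cc)) ∈ emb n m cc X j D := by
        rw [mem_emb]; right; right; exact ⟨k, hk, rfl⟩
      have := hsub hx
      rw [mem_emb] at this
      rcases this with ⟨a', _, he⟩ | ⟨h1, h2⟩ | ⟨k', hk', he⟩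
      · have := a'.isLt; simp at he; omega
      · simp at h1 h2; omega
      · have : k' = k := Fin.ext (by simp at he; omega)
        rwa [← this]
  · rintro ⟨hX, hjj, hD⟩ x hx
    rw [mem_emb] at hx ⊢
    rcases hx with ⟨a, ha, he⟩ | ⟨h1, h2⟩ | ⟨k, hk, he⟩
    · exact Or.inl ⟨a, hX ha, he⟩
    · exact Or.inr (Or.inl ⟨h1, by omega⟩)
    · exact Or.inr (Or.inr ⟨k, hD hk, he⟩)

def Chainable (n m cc : ℕ) (col : Finset (Fin (n+m+cc)) → Bool) (D : Finset (Fin cc)) :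
    ℕ → Finset (Fin n) → Prop
  | 0, _ => True
  | ℓ+1, X => ∃ Y, Y ⊆ X ∧ col (emb n m cc Y ℓ D) = true ∧ Chainable n m cc col D ℓ Y

lemma chainable_mono {col D} {ℓ : ℕ} {X Y : Finset (Fin n)} (hXY : X ⊆ Y)
    (h : Chainable n m cc col D ℓ X) : Chainable n m cc col D ℓ Y := by
  cases ℓ with
  | zero => trivial
  | succ ℓ =>
    obtain ⟨Z, hZ, hc, hch⟩ := h
    exact ⟨Z, hZ.trans hXY, hc, hch⟩

lemma chain_extract {col D} : ∀ {ℓ : ℕ} {X : Finset (Fin n)}, Chainable n m cc col D ℓ X →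
    ∃ g : ℕ → Finset (Fin n),
      (∀ i i', i ≤ i' → i' < ℓ → g i ⊆ g i') ∧
      (∀ i, i < ℓ → g i ⊆ X) ∧
      (∀ i, i < ℓ → col (emb n m cc (g i) i D) = true) := by
  intro ℓ
  induction ℓ with
  | zero => exact fun _ => ⟨fun _ => ∅, by omega, by omega, by omega⟩
  | succ ℓ ih =>
    intro X h
    obtain ⟨Y, hYX, hcol, hch⟩ := h
    obtain ⟨g, hg1, hg2, hg3⟩ := ih hch
    refine ⟨fun i => if i < ℓ then g i else Y, ?_, ?_, ?_⟩
    · intro i i' hii hi'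
      by_cases h1 : i < ℓ <;> by_cases h2 : i' < ℓ <;> simp [h1, h2]
      · exact hg1 i i' hii h2
      · exact hg2 i h1
      · omega
    · intro i hi
      by_cases h1 : i < ℓ <;> simp [h1]
      · exact (hg2 i h1).trans hYX
      · exact hYX
    · intro i hi
      by_cases h1 : i < ℓ <;> simp [h1]
      · exact hg3 i h1
      · have : i = ℓ := by omega
        rw [this]
        exact hcol

open Classical in
lemma dichotomy (col : Finset (Fin (n+m+cc)) → Bool) (D : Finset (Fin cc)) :
    Chainable n m cc col D (m+1) Finset.univ ∨
    (∃ f : Finset (Fin n) ↪o Finset (Fin (n+m+cc)), ∀ X, col (f X) = false) := by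
  by_cases hch : Chainable n m cc col D (m+1) Finset.univ
  · exact Or.inl hch
  · right
    let s : Finset (Fin n) → ℕ := fun X => Nat.findGreatest (fun ℓ => Chainable n m cc col D ℓ X) (m+1)
    have hs_ch : ∀ X, Chainable n m cc col D (s X) X := by
      intro X
      show Chainable n m cc col D
        (Nat.findGreatest (fun ℓ => Chainable n m cc col D ℓ X) (m+1)) X
      exact Nat.findGreatest_spec (P := fun ℓ => Chainable n m cc col D ℓ X) (m := 0) (by omega) trivial
    have hs_le : ∀ X, s X ≤ m := by
      intro X
      have h1 : s X ≤ m + 1 := Nat.findGreatest_le _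
      rcases Nat.lt_or_ge (s X) (m+1) with h | h
      · omega
      · exfalso
        have heq : s X = m + 1 := by omega
        have := hs_ch X
        rw [heq] at this
        exact hch (chainable_mono (Finset.subset_univ X) this)
    have hs_mono : ∀ {X Y : Finset (Fin n)}, X ⊆ Y → s X ≤ s Y := by
      intro X Y hXY
      exact Nat.findGreatest_mono (fun ℓ h => chainable_mono hXY h) le_rfl
    have hred : ∀ X, col (emb n m cc X (s X) D) = false := by
      intro X
      by_contra hc
      have hc' : col (emb n m cc X (s X) D) = true := by
        cases h : col (emb n m cc X (s X) D)
        · exact absurd h hc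
        · rfl
      have hch1 : Chainable n m cc col D (s X + 1) X := ⟨X, Finset.Subset.refl X, hc', hs_ch X⟩
      have h2 : s X + 1 ≤ Nat.findGreatest (fun ℓ => Chainable n m cc col D ℓ X) (m+1) :=
        Nat.le_findGreatest (by have := hs_le X; omega) hch1
      have h3 : s X + 1 ≤ s X := h2
      omega
    refine ⟨OrderEmbedding.ofMapLEIff (fun X => emb n m cc X (s X) D) ?_, ?_⟩
    · intro X Y
      constructor
      · intro hle
        have := (emb_subset_emb (hs_le X) (hs_le Y)).1 hle
        exact this.1
      · intro hle
        exact (emb_subset_emb (hs_le X) (hs_le Y)).2 ⟨hle, hs_mono hle, Finset.Subset.refl D⟩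
    · intro X
      exact hred X

section Lower

variable {P : Type*} [PartialOrder P] [Fintype P]

lemma lower_coloring (htriv : IsTrivialPoset P) (hw : 2 ≤ posetWidth P) (n N : ℕ)
    (hN : N ≤ n + posetHeight P) :
    ¬ (∀ c : Finset (Fin N) → Bool,
      (∃ f : P ↪o Finset (Fin N), ∀ x, c (f x) = true) ∨
      (∃ f : Finset (Fin n) ↪o Finset (Fin N), ∀ x, c (f x) = false)) := by
  classical
  set h := posetHeight P with hh
  have hh1 : 1 ≤ h := height_pos hw
  intro hc
  set col : Finset (Fin N) → Bool :=
    fun X => decide (X.card ≤ h - 1) || decide (X = Finset.univ) with hcol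
  have hblue : ∀ X : Finset (Fin N), col X = true ↔ (X.card ≤ h - 1 ∨ X = Finset.univ) := by
    intro X; simp [hcol]
  have hred : ∀ X : Finset (Fin N), col X = false ↔ (h ≤ X.card ∧ X ≠ Finset.univ) := by
    intro X
    rw [← Bool.not_eq_true, hblue]
    push_neg
    constructor
    · rintro ⟨h1, h2⟩; exact ⟨by omega, h2⟩
    · rintro ⟨h1, h2⟩; exact ⟨by omega, h2⟩
  rcases hc col with ⟨f, hf⟩ | ⟨f, hf⟩
  · -- blue copy of P : contradiction
    obtain ⟨s, hchain, hcard⟩ := exists_chain_card_height (P := P)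
    -- find y incomparable to everything in s
    obtain ⟨u, v, huv1, huv2⟩ := exists_two_incomp hw
    have hy : ∃ y : P, ∀ x ∈ s, ¬ x ≤ y ∧ ¬ y ≤ x := by
      by_cases hu : ∀ x ∈ s, ¬ PComp x u
      · exact ⟨u, fun x hx => by have := hu x hx; rw [PComp] at this; push_neg at this; exact this⟩
      by_cases hv : ∀ x ∈ s, ¬ PComp x v
      · exact ⟨v, fun x hx => by have := hv x hx; rw [PComp] at this; push_neg at this; exact this⟩
      exfalso
      push_neg at hu hv
      obtain ⟨x₁, hx₁, hc₁⟩ := hu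
      obtain ⟨x₂, hx₂, hc₂⟩ := hv
      have hx12 : PComp x₁ x₂ := by
        by_cases he : x₁ = x₂
        · rw [he]; exact pcomp_refl x₂
        · exact hchain hx₁ hx₂ he
      have : PComp u v :=
        pcomp_trans htriv (pcomp_symm hc₁) (pcomp_trans htriv hx12 hc₂)
      rcases this with h' | h'
      · exact huv1 h'
      · exact huv2 h'
    obtain ⟨y, hy⟩ := hy
    by_cases hcase : ∃ x ∈ s, f x = Finset.univ
    · obtain ⟨x, hx, hfx⟩ := hcase
      have : f y ≤ f x := by
        rw [hfx]
        exact Finset.le_iff_subset.2 (Finset.subset_univ _)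
      have : y ≤ x := f.le_iff_le.1 this
      exact (hy x hx).2 this
    · push_neg at hcase
      have hsmall : ∀ x ∈ s, (f x).card ≤ h - 1 := by
        intro x hx
        rcases (hblue (f x)).1 (hf x) with h' | h'
        · exact h'
        · exact absurd h' (hcase x hx)
      set t := s.image (fun x => (f x).card) with ht
      have hinj : Set.InjOn (fun x => (f x).card) s := by
        intro x hx y' hy' he
        have he' : (f x).card = (f y').card := he
        by_contra hne
        rcases hchain hx hy' hne with hle | hle
        · have : f x < f y' := f.lt_iff_lt.2 (lt_of_le_of_ne hle hne)
          have := Finset.card_lt_card (Finset.lt_iff_ssubset.1 this)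
          omega
        · have : f y' < f x := f.lt_iff_lt.2 (lt_of_le_of_ne hle (Ne.symm hne))
          have := Finset.card_lt_card (Finset.lt_iff_ssubset.1 this)
          omega

      have htcard : t.card = h := by
        rw [ht, Finset.card_image_of_injOn hinj, hcard]
      have htsub : t ⊆ Finset.range h := by
        intro k hk
        rw [ht, Finset.mem_image] at hk
        obtain ⟨x, hx, hkx⟩ := hk
        rw [Finset.mem_range]
        have := hsmall x hx
        omega
      have hteq : t = Finset.range h :=
        Finset.eq_of_subset_of_card_le htsub (by rw [htcard, Finset.card_range])
      have h0 : (0:ℕ) ∈ t := by rw [hteq, Finset.mem_range]; omega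
      rw [ht, Finset.mem_image] at h0
      obtain ⟨x, hx, hx0⟩ := h0
      have hfx : f x = ∅ := Finset.card_eq_zero.1 hx0
      have : f x ≤ f y := by rw [hfx]; exact Finset.le_iff_subset.2 (Finset.empty_subset _)
      have : x ≤ y := f.le_iff_le.1 this
      exact (hy x hx).1 this
  · -- red copy of Q_n : contradiction
    set C : ℕ → Finset (Fin n) := fun i => Finset.univ.filter (fun x => (x:ℕ) < i) with hC
    have hCmono : ∀ i < n, C i < C (i+1) := by
      intro i hi
      rw [Finset.lt_iff_ssubset]
      constructor
      · intro x hx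
        rw [hC] at hx ⊢
        simp only [Finset.mem_filter] at hx ⊢
        exact ⟨hx.1, by omega⟩
      · intro hsub
        have h1 : (⟨i, hi⟩ : Fin n) ∈ C (i+1) := by rw [hC]; simp
        have := hsub h1
        rw [hC] at this
        simp at this
    have hg : ∀ i < n, (f (C i)).card < (f (C (i+1))).card := by
      intro i hi
      exact Finset.card_lt_card (Finset.lt_iff_ssubset.1 (f.lt_iff_lt.2 (hCmono i hi)))
    have hgn : ∀ i ≤ n, (f (C 0)).card + i ≤ (f (C i)).card := by
      intro i
      induction i with
      | zero => omega
      | succ i ih =>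
        intro hi
        have := hg i (by omega)
        have := ih (by omega)
        omega
    have h0 := (hred (f (C 0))).1 (hf (C 0))
    have hn' := (hred (f (C n))).1 (hf (C n))
    have hcardle : (f (C n)).card ≤ N := by
      have := Finset.card_le_univ (f (C n))
      simpa using this
    have hcardne : (f (C n)).card ≠ N := by
      intro he
      apply hn'.2
      rw [← Finset.card_eq_iff_eq_univ]
      simpa using he
    have := hgn n le_rfl
    omega

end Lower

section Upper

variable {P : Type*} [PartialOrder P] [Fintype P]

lemma upper_mem (htriv : IsTrivialPoset P) (hw : 2 ≤ posetWidth P) (n m cc : ℕ)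
    (hm : posetHeight P = m + 1) (hcc : posetWidth P ≤ Nat.choose cc (cc/2))
    (col : Finset (Fin (n+m+cc)) → Bool) :
    (∃ f : P ↪o Finset (Fin (n+m+cc)), ∀ x, col (f x) = true) ∨
    (∃ f : Finset (Fin n) ↪o Finset (Fin (n+m+cc)), ∀ x, col (f x) = false) := by
  classical
  let sd : Setoid P := ⟨PComp, ⟨pcomp_refl, pcomp_symm, pcomp_trans htriv⟩⟩
  let Q := Quotient sd
  letI : DecidableEq Q := Classical.decEq _
  letI : Fintype Q := Fintype.ofSurjective (Quotient.mk sd)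
    (fun q => Quotient.inductionOn q (fun p => ⟨p, rfl⟩))
  -- the classes form an antichain of representatives
  have hQw : Fintype.card Q ≤ posetWidth P := by
    have hinj : Function.Injective (Quotient.out : Q → P) := Quotient.out_injective
    set A : Finset P := Finset.univ.image (Quotient.out : Q → P) with hA
    have hanti : IsAntichain (· ≤ ·) (A : Set P) := by
      intro a ha b hb hne hle
      rw [hA, Finset.coe_image] at ha hb
      obtain ⟨θ, _, rfl⟩ := ha
      obtain ⟨θ', _, rfl⟩ := hb
      have hcomp : PComp θ.out θ'.out := Or.inl hle
      have : (Quotient.mk sd θ.out) = (Quotient.mk sd θ'.out) := Quotient.sound hcomp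
      rw [Quotient.out_eq, Quotient.out_eq] at this
      exact hne (by rw [this])
    have hcard : A.card = Fintype.card Q := by
      rw [hA, Finset.card_image_of_injective _ hinj, Finset.card_univ]
    rw [← hcard]
    exact antichain_card_le_width A hanti
  -- injection of classes into the middle layer of the C-cube
  have hcard2 : Fintype.card Q ≤
      Fintype.card ↥(Finset.powersetCard (cc/2) (Finset.univ : Finset (Fin cc))) := by
    rw [Fintype.card_coe, Finset.card_powersetCard, Finset.card_univ, Fintype.card_fin]
    exact le_trans hQw hcc
  obtain ⟨e⟩ := Function.Embedding.nonempty_of_card_le hcard2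
  set D : Q → Finset (Fin cc) := fun θ => (e θ).1 with hD
  have hDcard : ∀ θ, (D θ).card = cc/2 := by
    intro θ
    exact (Finset.mem_powersetCard.1 (e θ).2).2
  have hDinj : Function.Injective D := by
    intro θ θ' hDe
    exact e.injective (Subtype.ext hDe)
  by_cases hex : ∃ θ : Q, ¬ Chainable n m cc col (D θ) (m+1) Finset.univ
  · obtain ⟨θ, hθ⟩ := hex
    rcases dichotomy col (D θ) with hch | hf
    · exact absurd hch hθ
    · exact Or.inr hf
  · push_neg at hex
    have hch := fun θ : Q => chain_extract (hex θ)
    choose g hg1 hg2 hg3 using hch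
    have hrank : ∀ p : P, prank p ≤ m := by
      intro p
      have := prank_le htriv p
      omega
    set F : P → Finset (Fin (n+m+cc)) :=
      fun p => emb n m cc (g (Quotient.mk sd p) (prank p)) (prank p) (D (Quotient.mk sd p)) with hF
    have hiff : ∀ a b : P, F a ≤ F b ↔ a ≤ b := by
      intro a b
      rw [hF]
      rw [Finset.le_iff_subset, emb_subset_emb (hrank a) (hrank b)]
      constructor
      · rintro ⟨hX, hj, hDs⟩
        have hDeq : D (Quotient.mk sd a) = D (Quotient.mk sd b) :=
          Finset.eq_of_subset_of_card_le hDs (by rw [hDcard, hDcard])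
        have hQeq : (Quotient.mk sd a) = (Quotient.mk sd b) := hDinj hDeq
        have hcomp : PComp a b := Quotient.exact hQeq
        rcases hcomp with hab | hba
        · exact hab
        · rcases eq_or_lt_of_le hba with he | hlt
          · exact le_of_eq he.symm
          · have := prank_lt hlt
            omega
      · intro hab
        have hQab : (Quotient.mk sd a) = (Quotient.mk sd b) := Quotient.sound (Or.inl hab)
        have hprank : prank a ≤ prank b := by
          rcases eq_or_lt_of_le hab with he | hlt
          · rw [he]
          · exact (prank_lt hlt).le
        refine ⟨?_, hprank, ?_⟩
        · rw [hQab]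
          exact hg1 (Quotient.mk sd b) (prank a) (prank b) hprank (by have := hrank b; omega)
        · rw [hQab]
    refine Or.inl ⟨OrderEmbedding.ofMapLEIff F hiff, ?_⟩
    intro p
    show col (F p) = true
    rw [hF]
    exact hg3 (Quotient.mk sd p) (prank p) (by have := hrank p; omega)

end Upper


/-- For a finite trivial poset `P` of width at least 2, and every `n ≥ 1`,
`n + h(P) + 1 ≤ R(P, Q_n) < n + h(P) + log₂ w(P) + ½ log₂ log₂ w(P) + 1`. -/
theorem trivial_poset_vs_cube_ramsey_bounds (P : Type*) [PartialOrder P] [Fintype P]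
    (htriv : IsTrivialPoset P) (hw : 2 ≤ posetWidth P) (n : ℕ) (hn : 1 ≤ n) :
    n + posetHeight P + 1 ≤ posetRamsey P (Finset (Fin n)) ∧
    (posetRamsey P (Finset (Fin n)) : ℝ) <
      n + posetHeight P + Real.logb 2 (posetWidth P) +
        (1 / 2) * Real.logb 2 (Real.logb 2 (posetWidth P)) + 1 := by
  classical
  have hh1 : 1 ≤ posetHeight P := height_pos hw
  obtain ⟨m, hm⟩ : ∃ m, posetHeight P = m + 1 := ⟨posetHeight P - 1, by omega⟩
  obtain ⟨c, hc1, hc2, hc3⟩ := main_numeric (posetWidth P) hw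
  have hmem : (n + m + c) ∈ {N : ℕ | ∀ col : Finset (Fin N) → Bool,
      (∃ f : P ↪o Finset (Fin N), ∀ x, col (f x) = true) ∨
      (∃ f : Finset (Fin n) ↪o Finset (Fin N), ∀ x, col (f x) = false)} :=
    fun col => upper_mem htriv hw n m c hm hc2 col
  have hlow : n + posetHeight P + 1 ≤ posetRamsey P (Finset (Fin n)) := by
    rw [posetRamsey]
    apply le_csInf ⟨_, hmem⟩
    intro N hN
    by_contra hlt
    push_neg at hlt
    exact lower_coloring htriv hw n N (by omega) hN
  have hup : posetRamsey P (Finset (Fin n)) ≤ n + m + c := Nat.sInf_le hmem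
  refine ⟨hlow, ?_⟩
  have hupR : (posetRamsey P (Finset (Fin n)) : ℝ) ≤ n + m + c := by
    exact_mod_cast hup
  have hmR : (posetHeight P : ℝ) = m + 1 := by exact_mod_cast hm
  calc (posetRamsey P (Finset (Fin n)) : ℝ) ≤ n + m + c := hupR
  _ < n + m + (Real.logb 2 (posetWidth P) +
      (1/2) * Real.logb 2 (Real.logb 2 (posetWidth P)) + 2) := by linarith [hc3]
  _ = n + posetHeight P + Real.logb 2 (posetWidth P) +
      (1/2) * Real.logb 2 (Real.logb 2 (posetWidth P)) + 1 := by rw [hmR]; ring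
end

section
/- (Chain Lemma) Let X and Y be disjoint finite sets with |X| = n and |Y| = k, let the Boolean lattice Q(X ∪ Y) of all subsets of X ∪ Y be blue/red colored, and fix a linear ordering τ = (y₁,…,y_k) of Y. Then Q(X ∪ Y) contains either a red copy of Q_n, or a blue Y-chain corresponding to τ, i.e. sets X₀ ⊆ X₁ ⊆ … ⊆ X_k ⊆ X such that each of the k+1 sets X_i ∪ {y₁,…,y_i} (for i = 0,…,k, where the empty union is taken for i = 0) is colored blue. -/
/-- The set `{y 0, …, y (m-1)}`. -/
def chainYi {α : Type*} [DecidableEq α] {k : ℕ} (y : Fin k → α) (m : ℕ) : Finset α :=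
  (Finset.univ.filter fun ℓ : Fin k => (ℓ : ℕ) < m).image y

theorem chainYi_mono {α : Type*} [DecidableEq α] {k : ℕ} (y : Fin k → α) {a b : ℕ}
    (hab : a ≤ b) : chainYi y a ⊆ chainYi y b := by
  apply Finset.image_subset_image
  intro ℓ hℓ
  simp only [Finset.mem_filter] at *
  exact ⟨hℓ.1, lt_of_lt_of_le hℓ.2 hab⟩

/-- **Chain Lemma.** Let `X` and `Y` be disjoint finite sets with `|X| = n`, `|Y| = k`,
let the Boolean lattice of subsets of `X ∪ Y` be blue/red colored (`true` = blue,
`false` = red), and fix a linear ordering `y 0, …, y (k-1)` of `Y`. Then there is either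
a red induced copy of `Q_n` inside `Q(X ∪ Y)`, or a blue `Y`-chain corresponding to the
ordering: sets `Z 0 ⊆ Z 1 ⊆ … ⊆ Z k ⊆ X` such that each `Z i ∪ {y 0, …, y (i-1)}`
is colored blue. -/
theorem chain_lemma {α : Type*} [DecidableEq α] (n k : ℕ) (X Y : Finset α)
    (hdisj : Disjoint X Y) (hX : X.card = n) (hY : Y.card = k)
    (c : Finset α → Bool)
    (y : Fin k → α) (hyInj : Function.Injective y) (hyY : ∀ i, y i ∈ Y) :
    (∃ f : Finset (Fin n) ↪o Finset α,
        (∀ S, f S ⊆ X ∪ Y) ∧ (∀ S, c (f S) = false)) ∨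
    (∃ Z : Fin (k + 1) → Finset α,
        (∀ i j, i ≤ j → Z i ⊆ Z j) ∧ (∀ i, Z i ⊆ X) ∧
        (∀ i : Fin (k + 1),
          c (Z i ∪ (Finset.univ.filter fun ℓ : Fin k => (ℓ : ℕ) < (i : ℕ)).image y)
            = true)) := by
  classical
  have hYiY : ∀ m, chainYi y m ⊆ Y := by
    intro m x hx
    simp only [chainYi, Finset.mem_image, Finset.mem_filter] at hx
    obtain ⟨ℓ, _, rfl⟩ := hx
    exact hyY ℓ
  set good : Finset α → ℕ → Prop := fun A m =>
    ∃ Z : ℕ → Finset α, (∀ a b, a ≤ b → Z a ⊆ Z b) ∧ (∀ j, Z j ⊆ A) ∧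
      ∀ j < m, c (Z j ∪ chainYi y j) = true with hgood_def
  have good0 : ∀ A, good A 0 := fun A => ⟨fun _ => ∅, by simp, by simp, by omega⟩
  have goodMono : ∀ {A B : Finset α} {m}, A ⊆ B → good A m → good B m := by
    rintro A B m hAB ⟨Z, h1, h2, h3⟩
    exact ⟨Z, h1, fun j => (h2 j).trans hAB, h3⟩
  have goodStep : ∀ {A : Finset α} {m}, good A m → c (A ∪ chainYi y m) = true →
      good A (m + 1) := by
    rintro A m ⟨Z, h1, h2, h3⟩ hc
    refine ⟨fun j => if j < m then Z j else A, ?_, ?_, ?_⟩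
    · intro a b hab
      by_cases ha : a < m <;> by_cases hb : b < m <;> simp only [ha, hb, if_true, if_false]
      · exact h1 a b hab
      · exact h2 a
      · omega
      · exact subset_rfl
    · intro j
      by_cases hj : j < m <;> simp only [hj, if_true, if_false]
      · exact h2 j
      · exact subset_rfl
    · intro j hj
      by_cases hjm : j < m
      · simpa [hjm] using h3 j hjm
      · have hje : j = m := by omega
        subst hje
        simpa [hjm] using hc
  by_cases hgood : good X (k + 1)
  · right
    obtain ⟨Z, h1, h2, h3⟩ := hgood
    exact ⟨fun i => Z i, fun i j hij => h1 i j hij, fun i => h2 i, fun i => h3 i i.isLt⟩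
  · left
    set d : Finset α → ℕ := fun A => Nat.findGreatest (good A) k with hd_def
    have hd_le : ∀ A, d A ≤ k := fun A => Nat.findGreatest_le k
    have hd_good : ∀ A, good A (d A) := fun A =>
      Nat.findGreatest_spec (Nat.zero_le k) (good0 A)
    have hd_not : ∀ A : Finset α, A ⊆ X → ¬ good A (d A + 1) := by
      intro A hAX hbad
      by_cases hle : d A + 1 ≤ k
      · exact Nat.findGreatest_is_greatest (Nat.lt_succ_self _) hle hbad
      · have : d A = k := by have := hd_le A; omega
        exact hgood (goodMono hAX (this ▸ hbad))
    have hred : ∀ A : Finset α, A ⊆ X → c (A ∪ chainYi y (d A)) = false := by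
      intro A hAX
      by_contra hcon
      exact hd_not A hAX (goodStep (hd_good A) (by simpa using hcon))
    have hd_mono : ∀ {A B : Finset α}, A ⊆ B → d A ≤ d B := by
      intro A B hAB
      exact Nat.le_findGreatest (hd_le A) (goodMono hAB (hd_good A))
    -- the embedding of `Fin n` into `X`
    set e : Fin n → α := fun i => ((X.equivFinOfCardEq hX).symm i : α) with he_def
    have he_inj : Function.Injective e :=
      fun a b h => (X.equivFinOfCardEq hX).symm.injective (Subtype.coe_injective h)
    have he_mem : ∀ i, e i ∈ X := fun i => ((X.equivFinOfCardEq hX).symm i).2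
    set g : Finset (Fin n) → Finset α := fun S => S.image e with hg_def
    have hgX : ∀ S, g S ⊆ X := by
      intro S x hx
      simp only [hg_def, Finset.mem_image] at hx
      obtain ⟨i, _, rfl⟩ := hx
      exact he_mem i
    have hg_iff : ∀ S T, g S ⊆ g T ↔ S ⊆ T := fun S T =>
      Finset.image_subset_image_iff he_inj
    set F : Finset (Fin n) → Finset α := fun S => g S ∪ chainYi y (d (g S)) with hF_def
    have hF_iff : ∀ S T, F S ⊆ F T ↔ S ⊆ T := by
      intro S T
      constructor
      · intro h
        rw [← hg_iff]
        intro x hx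
        have hxX : x ∈ X := hgX S hx
        have : x ∈ F T := h (Finset.mem_union_left _ hx)
        rcases Finset.mem_union.1 this with h' | h'
        · exact h'
        · exact absurd hxX (Finset.disjoint_left.1 hdisj · (hYiY _ h'))
      · intro h
        have hg : g S ⊆ g T := (hg_iff S T).2 h
        exact Finset.union_subset
          (hg.trans Finset.subset_union_left)
          ((chainYi_mono y (hd_mono hg)).trans Finset.subset_union_right)
    refine ⟨OrderEmbedding.ofMapLEIff F (fun S T => hF_iff S T), ?_, ?_⟩
    · intro S
      exact Finset.union_subset ((hgX S).trans Finset.subset_union_left)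
        ((hYiY _).trans Finset.subset_union_right)
    · intro S
      exact hred (g S) (hgX S)
end

section
/- Let n and k be positive integers and let Q be a blue/red colored Boolean lattice of dimension n + k. Then Q contains a red copy of Q_n or a blue chain of k+1 elements, i.e. k+1 blue sets Z₀ ⊂ Z₁ ⊂ … ⊂ Z_k. -/
open Finset

/-- Every blue/red coloring (`true` = blue, `false` = red) of a Boolean lattice of
dimension `n + k` (with `n, k ≥ 1`) contains a red induced copy of `Q_n`
or a blue chain of `k + 1` sets `Z 0 ⊂ Z 1 ⊂ … ⊂ Z k`. -/
theorem red_cube_or_blue_chain (n k : ℕ) (hn : 1 ≤ n) (hk : 1 ≤ k)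
    (c : Finset (Fin (n + k)) → Bool) :
    (∃ f : Finset (Fin n) ↪o Finset (Fin (n + k)), ∀ S, c (f S) = false) ∨
    (∃ Z : Fin (k + 1) → Finset (Fin (n + k)), StrictMono Z ∧ ∀ i, c (Z i) = true) := by
  classical
  -- the copy of the ground set [n] inside [n+k]
  set ι : Finset (Fin n) → Finset (Fin (n + k)) :=
    fun S => S.map (Fin.castAddEmb k) with hιdef
  -- the "tail" sets T i = {n, n+1, ..., n+i-1}
  set T : ℕ → Finset (Fin (n + k)) :=
    fun i => univ.filter (fun x : Fin (n + k) => n ≤ (x : ℕ) ∧ (x : ℕ) < n + i) with hTdef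
  have hι_lt : ∀ {S : Finset (Fin n)} {x : Fin (n + k)}, x ∈ ι S → (x : ℕ) < n := by
    intro S x hx
    simp only [hιdef, mem_map, Fin.castAddEmb_apply] at hx
    obtain ⟨y, _, rfl⟩ := hx
    exact y.isLt
  have hι_mono : ∀ {S S' : Finset (Fin n)}, S ⊆ S' → ι S ⊆ ι S' := by
    intro S S' h
    exact Finset.map_subset_map.2 h
  have hT_mono : ∀ {i j : ℕ}, i ≤ j → T i ⊆ T j := by
    intro i j hij x hx
    simp only [hTdef, mem_filter, mem_univ, true_and] at hx ⊢
    exact ⟨hx.1, lt_of_lt_of_le hx.2 (by omega)⟩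
  -- strictness witness: the element n + i
  have hT_strict : ∀ {i j : ℕ}, i < j → j ≤ k →
      ∃ x : Fin (n + k), x ∈ T j ∧ x ∉ T i ∧ n ≤ (x : ℕ) := by
    intro i j hij hjk
    refine ⟨⟨n + i, by omega⟩, ?_, ?_, by simp⟩
    · simp only [hTdef, mem_filter, mem_univ, true_and]
      constructor <;> simp <;> omega
    · simp only [hTdef, mem_filter, mem_univ, true_and]
      push_neg
      intro _
      simp
  -- P m S : there is a blue "staircase" of length m below S
  set P : ℕ → Finset (Fin n) → Prop := fun m S =>
    ∃ Ss : Fin m → Finset (Fin n), Monotone Ss ∧ (∀ t, Ss t ⊆ S) ∧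
      ∀ t : Fin m, c (ι (Ss t) ∪ T (t : ℕ)) = true with hPdef
  by_cases hbig : ∃ S : Finset (Fin n), P (k + 1) S
  · -- a blue chain of k+1 elements
    obtain ⟨S, Ss, hmono, hsub, hblue⟩ := hbig
    right
    refine ⟨fun i => ι (Ss i) ∪ T (i : ℕ), ?_, fun i => hblue i⟩
    intro i j hij
    have hsubset : ι (Ss i) ∪ T (i : ℕ) ⊆ ι (Ss j) ∪ T (j : ℕ) :=
      Finset.union_subset_union (hι_mono (hmono (le_of_lt hij))) (hT_mono (by exact_mod_cast le_of_lt hij))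
    rw [Finset.lt_iff_ssubset]
    obtain ⟨x, hxj, hxi, hxn⟩ := hT_strict (show (i : ℕ) < (j : ℕ) from hij) (by omega)
    refine (Finset.ssubset_iff_of_subset hsubset).2 ⟨x, mem_union_right _ hxj, ?_⟩
    simp only [mem_union]
    push_neg
    exact ⟨fun h => absurd (hι_lt h) (by omega), hxi⟩
  · -- no big staircase: build a red copy of Q_n
    push_neg at hbig
    set b : Finset (Fin n) → ℕ := fun S => Nat.findGreatest (fun m => P m S) k with hbdef
    have hP0 : ∀ S, P 0 S := by
      intro S
      exact ⟨Fin.elim0, fun t => t.elim0, fun t => t.elim0, fun t => t.elim0⟩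
    have hPb : ∀ S, P (b S) S := fun S =>
      Nat.findGreatest_spec (P := fun m => P m S) (Nat.zero_le k) (hP0 S)
    have hble : ∀ S, b S ≤ k := fun S => Nat.findGreatest_le k
    have hbmono : ∀ {S S' : Finset (Fin n)}, S ⊆ S' → b S ≤ b S' := by
      intro S S' h
      obtain ⟨Ss, hmono, hsub, hblue⟩ := hPb S
      exact Nat.le_findGreatest (hble S)
        ⟨Ss, hmono, fun t => (hsub t).trans h, hblue⟩
    -- the selected set is red
    have hred : ∀ S, c (ι S ∪ T (b S)) = false := by
      intro S
      by_contra hBlue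
      rw [Bool.not_eq_false] at hBlue
      -- extend the staircase by S itself
      obtain ⟨Ss, hmono, hsub, hblue⟩ := hPb S
      have hP' : P (b S + 1) S := by
        refine ⟨Fin.snoc Ss S, ?_, ?_, ?_⟩
        · intro i j hij
          rcases Fin.eq_castSucc_or_eq_last j with ⟨j', rfl⟩ | rfl
          · rcases Fin.eq_castSucc_or_eq_last i with ⟨i', rfl⟩ | rfl
            · simp only [Fin.snoc_castSucc]
              exact hmono (by exact_mod_cast hij)
            · exact absurd hij (not_le.2 (Fin.castSucc_lt_last j'))
          · rcases Fin.eq_castSucc_or_eq_last i with ⟨i', rfl⟩ | rfl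
            · simp only [Fin.snoc_castSucc, Fin.snoc_last]
              exact hsub i'
            · simp
        · intro t
          rcases Fin.eq_castSucc_or_eq_last t with ⟨t', rfl⟩ | rfl
          · simpa using hsub t'
          · simp
        · intro t
          rcases Fin.eq_castSucc_or_eq_last t with ⟨t', rfl⟩ | rfl
          · simpa using hblue t'
          · simpa using hBlue
      rcases Nat.lt_or_ge (b S) k with hlt | hge
      · have := Nat.le_findGreatest (P := fun m => P m S) (show b S + 1 ≤ k by omega) hP'
        rw [show Nat.findGreatest (fun m => P m S) k = b S from rfl] at this
        omega
      · have hbk : b S = k := le_antisymm (hble S) hge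
        exact hbig S (hbk ▸ hP')
    left
    -- the red copy
    have hiff : ∀ S S' : Finset (Fin n),
        ι S ∪ T (b S) ⊆ ι S' ∪ T (b S') ↔ S ⊆ S' := by
      intro S S'
      constructor
      · intro h x hx
        have hx1 : Fin.castAddEmb k x ∈ ι S ∪ T (b S) :=
          mem_union_left _ (mem_map_of_mem _ hx)
        have hx2 := h hx1
        rcases mem_union.1 hx2 with h' | h'
        · simp only [hιdef, mem_map] at h'
          obtain ⟨y, hy, hyx⟩ := h'
          rwa [(Fin.castAddEmb k).injective hyx] at hy
        · simp only [hTdef, mem_filter] at h'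
          have : ((Fin.castAddEmb k x : Fin (n + k)) : ℕ) < n := by
            simp [Fin.castAddEmb_apply]
          omega
      · intro h
        exact Finset.union_subset_union (hι_mono h) (hT_mono (hbmono h))
    refine ⟨OrderEmbedding.ofMapLEIff (fun S => ι S ∪ T (b S)) (fun S S' => hiff S S'), hred⟩
end

section
/- Let r, k ≥ 1 be natural numbers. The number of r-proper permutations π : [k] → [k] is at most 2^{(r + log₂ r)·k}. -/
/-- A permutation `π` of `[k] = {1, …, k}` (modelled as `Fin k`, with
`i : Fin k` representing the element `i + 1` of `[k]`) is `r`-proper if for every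
`j ∈ [k]`, the number of indices `ℓ ≤ j` with `π(ℓ) ≥ j - 1` is at most `r`.
In the 0-based model, `ℓ ≤ j` stays `ℓ ≤ j` and `π(ℓ) ≥ j - 1` (1-based) becomes
`(π ℓ : ℕ) + 1 ≥ (j : ℕ)`. -/
def IsProperPerm (r k : ℕ) (π : Equiv.Perm (Fin k)) : Prop :=
  ∀ j : Fin k,
    (Finset.univ.filter fun ℓ : Fin k => ℓ ≤ j ∧ (j : ℕ) ≤ (π ℓ : ℕ) + 1).card ≤ r

namespace ProperAux

variable {k : ℕ}

/-- rank of `x` inside the finset `S`. -/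
def rk (S : Finset (Fin k)) (x : Fin k) : ℕ := (S.filter (fun y => y < x)).card

lemma rk_lt {S : Finset (Fin k)} {x : Fin k} (hx : x ∈ S) : rk S x < S.card := by
  apply Finset.card_lt_card
  rw [Finset.ssubset_iff_of_subset (Finset.filter_subset _ _)]
  exact ⟨x, hx, by simp⟩

lemma rk_strict_mono {S : Finset (Fin k)} {x y : Fin k} (hx : x ∈ S) (hxy : x < y) :
    rk S x < rk S y := by
  apply Finset.card_lt_card
  rw [Finset.ssubset_iff_of_subset (Finset.monotone_filter_right S (fun z _ hz => lt_trans hz hxy))]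
  exact ⟨x, by simp [hx, hxy], by simp⟩

lemma rk_inj {S : Finset (Fin k)} {x y : Fin k} (hx : x ∈ S) (hy : y ∈ S)
    (h : rk S x = rk S y) : x = y := by
  rcases lt_trichotomy x y with hlt | he | hlt
  · exact absurd h (Nat.ne_of_lt (rk_strict_mono hx hlt))
  · exact he
  · exact absurd h.symm (Nat.ne_of_lt (rk_strict_mono hy hlt))

/-- The "active set" at threshold `j`. -/
def Aset (π : Equiv.Perm (Fin k)) (j : Fin k) : Finset (Fin k) :=
  Finset.univ.filter fun ℓ : Fin k => ℓ ≤ j ∧ (j : ℕ) ≤ (π ℓ : ℕ) + 1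

lemma Aset_card_le {r : ℕ} {π : Equiv.Perm (Fin k)} (hπ : IsProperPerm r k π) (j : Fin k) :
    (Aset π j).card ≤ r := hπ j

/-- Small values not yet used before position `ℓ`. -/
def sU (π : Equiv.Perm (Fin k)) (ℓ : Fin k) : Finset (Fin k) :=
  Finset.univ.filter fun v : Fin k => (v : ℕ) + 1 < (ℓ : ℕ) ∧ (ℓ : ℕ) ≤ (π.symm v : ℕ)

/-- First code: `0` in case B (`π ℓ + 1 ≥ ℓ`), otherwise `rank + 1` of the value among
the small unused values. -/
def nc1 (π : Equiv.Perm (Fin k)) (ℓ : Fin k) : ℕ :=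
  if (ℓ : ℕ) ≤ (π ℓ : ℕ) + 1 then 0 else rk (sU π ℓ) (π ℓ) + 1

/-- Second code: rank, in the active set at threshold `j`, of the position that carries
value `j - 1` (if it lies in the active set), and `r` otherwise. -/
noncomputable def nc2 (r : ℕ) (π : Equiv.Perm (Fin k)) (j : Fin k) : ℕ :=
  if h : ∃ m ∈ Aset π j, (π m : ℕ) + 1 = (j : ℕ) then rk (Aset π j) h.choose else r

lemma sU_card {r : ℕ} {π : Equiv.Perm (Fin k)} (hπ : IsProperPerm r k π)
    {ℓ : Fin k} (hA : (π ℓ : ℕ) + 1 < (ℓ : ℕ)) : (sU π ℓ).card + 1 ≤ r := by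
  classical
  have hℓ1 : 1 ≤ (ℓ : ℕ) := by omega
  -- positions ≤ ℓ
  set P : Finset (Fin k) := Finset.univ.filter (fun m : Fin k => m ≤ ℓ) with hP
  have hPcard : P.card = (ℓ : ℕ) + 1 := by
    have : P = Finset.Iic ℓ := by ext m; simp [hP, Finset.mem_Iic]
    rw [this, Fin.card_Iic]
  have hsplitP : ((P.filter (fun m => (ℓ : ℕ) ≤ (π m : ℕ) + 1)).card
      + (P.filter (fun m => ¬ ((ℓ : ℕ) ≤ (π m : ℕ) + 1))).card) = P.card := by
    exact Finset.card_filter_add_card_filter_not (p := fun m => (ℓ : ℕ) ≤ (π m : ℕ) + 1)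
  have hPA : P.filter (fun m => (ℓ : ℕ) ≤ (π m : ℕ) + 1) = Aset π ℓ := by
    ext m; simp [hP, Aset, Finset.mem_filter, and_comm]
  set M' : Finset (Fin k) := P.filter (fun m => ¬ ((ℓ : ℕ) ≤ (π m : ℕ) + 1)) with hM'
  have hℓM' : ℓ ∈ M' := by simp [hM', hP]; omega
  set M : Finset (Fin k) := M'.erase ℓ with hM
  have hMcard : M.card = M'.card - 1 := Finset.card_erase_of_mem hℓM'
  -- small values
  set T : Finset (Fin k) := Finset.univ.filter (fun v : Fin k => (v : ℕ) + 1 < (ℓ : ℕ)) with hT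
  have hTcard : T.card = (ℓ : ℕ) - 1 := by
    have : T = Finset.Iio ⟨(ℓ : ℕ) - 1, lt_of_le_of_lt (Nat.sub_le _ _) ℓ.isLt⟩ := by
      ext v; simp [hT, Fin.lt_def]; omega
    rw [this, Fin.card_Iio]
  have hsplitT : ((T.filter (fun v => (ℓ : ℕ) ≤ (π.symm v : ℕ))).card
      + (T.filter (fun v => ¬ ((ℓ : ℕ) ≤ (π.symm v : ℕ)))).card) = T.card := by
    exact Finset.card_filter_add_card_filter_not (p := fun v => (ℓ : ℕ) ≤ (π.symm v : ℕ))
  have hTsU : T.filter (fun v => (ℓ : ℕ) ≤ (π.symm v : ℕ)) = sU π ℓ := by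
    ext v; simp [hT, sU, Finset.mem_filter, and_assoc]
  set B : Finset (Fin k) := T.filter (fun v => ¬ ((ℓ : ℕ) ≤ (π.symm v : ℕ))) with hB
  have hBM : B = M.image π := by
    ext v
    constructor
    · intro hvB
      rw [hB, Finset.mem_filter] at hvB
      obtain ⟨hvT, hv2⟩ := hvB
      rw [hT, Finset.mem_filter] at hvT
      have hv1 : (v : ℕ) + 1 < (ℓ : ℕ) := hvT.2
      push_neg at hv2
      rw [Finset.mem_image]
      refine ⟨π.symm v, ?_, π.apply_symm_apply v⟩
      rw [hM, Finset.mem_erase]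
      constructor
      · intro hcq
        rw [hcq] at hv2
        omega
      · rw [hM', Finset.mem_filter]
        constructor
        · rw [hP, Finset.mem_filter]
          exact ⟨Finset.mem_univ _, Fin.le_def.mpr (le_of_lt hv2)⟩
        · push_neg
          rw [π.apply_symm_apply]
          omega
    · intro hvI
      rw [Finset.mem_image] at hvI
      obtain ⟨m, hmM, rfl⟩ := hvI
      rw [hM, Finset.mem_erase] at hmM
      obtain ⟨hm1, hm2⟩ := hmM
      rw [hM', Finset.mem_filter] at hm2
      obtain ⟨hm3, hm4⟩ := hm2
      rw [hP, Finset.mem_filter] at hm3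
      push_neg at hm4
      rw [hB, Finset.mem_filter, hT, Finset.mem_filter]
      have hmℓ : (m : ℕ) < (ℓ : ℕ) := by
        rcases lt_or_eq_of_le (Fin.le_def.mp hm3.2) with h | h
        · exact h
        · exact absurd (Fin.eq_of_val_eq h) hm1
      refine ⟨⟨Finset.mem_univ _, by omega⟩, ?_⟩
      push_neg
      rw [π.symm_apply_apply]
      omega
  have hBcard : B.card = M.card := by rw [hBM]; exact Finset.card_image_of_injective _ π.injective
  have hAr : (Aset π ℓ).card ≤ r := Aset_card_le hπ ℓ
  have hM'pos : 0 < M'.card := Finset.card_pos.mpr ⟨ℓ, hℓM'⟩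
  rw [hPA, hPcard] at hsplitP
  rw [hTsU, hTcard] at hsplitT
  omega

lemma mem_sU_self {π : Equiv.Perm (Fin k)} {ℓ : Fin k} (hA : (π ℓ : ℕ) + 1 < (ℓ : ℕ)) :
    π ℓ ∈ sU π ℓ := by
  simp [sU, hA]

lemma nc1_lt {r : ℕ} (hr : 1 ≤ r) {π : Equiv.Perm (Fin k)} (hπ : IsProperPerm r k π)
    (ℓ : Fin k) : nc1 π ℓ < r := by
  unfold nc1
  split
  · omega
  · rename_i h
    push_neg at h
    have h1 := sU_card hπ h
    have h2 : rk (sU π ℓ) (π ℓ) < (sU π ℓ).card := rk_lt (mem_sU_self h)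
    omega

lemma nc2_le {r : ℕ} {π : Equiv.Perm (Fin k)} (hπ : IsProperPerm r k π) (j : Fin k) :
    nc2 r π j ≤ r := by
  unfold nc2
  split
  · rename_i h
    have := rk_lt h.choose_spec.1
    have := Aset_card_le hπ j
    omega
  · exact le_refl r

lemma nc2_lt_of_exists {r : ℕ} {π : Equiv.Perm (Fin k)} (hπ : IsProperPerm r k π) {j : Fin k}
    (h : ∃ m ∈ Aset π j, (π m : ℕ) + 1 = (j : ℕ)) : nc2 r π j < r := by
  unfold nc2
  rw [dif_pos h]
  have := rk_lt h.choose_spec.1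
  have := Aset_card_le hπ j
  omega

lemma exists_of_nc2_lt {r : ℕ} {π : Equiv.Perm (Fin k)} {j : Fin k}
    (h : nc2 r π j < r) : ∃ m ∈ Aset π j, (π m : ℕ) + 1 = (j : ℕ) := by
  by_contra hc
  unfold nc2 at h
  rw [dif_neg hc] at h
  omega

lemma nc2_eq {r : ℕ} (π : Equiv.Perm (Fin k)) {j m : Fin k} (hm : m ∈ Aset π j)
    (hv : (π m : ℕ) + 1 = (j : ℕ)) : nc2 r π j = rk (Aset π j) m := by
  have hE : ∃ m' ∈ Aset π j, (π m' : ℕ) + 1 = (j : ℕ) := ⟨m, hm, hv⟩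
  unfold nc2
  rw [dif_pos hE]
  have hce : hE.choose = m := by
    apply π.injective
    apply Fin.eq_of_val_eq
    have := hE.choose_spec.2
    omega
  rw [hce]

lemma Aset_eq {π π' : Equiv.Perm (Fin k)} {j : Fin k}
    (H : ∀ ℓ v : Fin k, (ℓ : ℕ) ≤ (j : ℕ) → (v : ℕ) + 1 < (j : ℕ) → (π ℓ = v ↔ π' ℓ = v)) :
    Aset π j = Aset π' j := by
  ext m
  simp only [Aset, Finset.mem_filter, Finset.mem_univ, true_and]
  constructor
  · rintro ⟨h1, h2⟩
    refine ⟨h1, ?_⟩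
    by_contra hc
    push_neg at hc
    have he := (H m (π' m) (Fin.le_def.mp h1) hc).mpr rfl
    have := congrArg Fin.val he
    omega
  · rintro ⟨h1, h2⟩
    refine ⟨h1, ?_⟩
    by_contra hc
    push_neg at hc
    have he := (H m (π m) (Fin.le_def.mp h1) hc).mp rfl
    have := congrArg Fin.val he
    omega

lemma sU_eq {π π' : Equiv.Perm (Fin k)} {ℓ : Fin k}
    (H : ∀ m v : Fin k, (m : ℕ) < (ℓ : ℕ) → (v : ℕ) + 1 < (ℓ : ℕ) → (π m = v ↔ π' m = v)) :
    sU π ℓ = sU π' ℓ := by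
  ext v
  simp only [sU, Finset.mem_filter, Finset.mem_univ, true_and]
  constructor
  · rintro ⟨h1, h2⟩
    refine ⟨h1, ?_⟩
    by_contra hc
    push_neg at hc
    have hm : π' (π'.symm v) = v := π'.apply_symm_apply v
    have he := (H (π'.symm v) v hc h1).mpr hm
    have h3 : π.symm v = π'.symm v := by
      apply π.injective
      rw [Equiv.apply_symm_apply, he]
    have := congrArg Fin.val h3
    omega
  · rintro ⟨h1, h2⟩
    refine ⟨h1, ?_⟩
    by_contra hc
    push_neg at hc
    have hm : π (π.symm v) = v := π.apply_symm_apply v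
    have he := (H (π.symm v) v hc h1).mp hm
    have h3 : π'.symm v = π.symm v := by
      apply π'.injective
      rw [Equiv.apply_symm_apply, he]
    have := congrArg Fin.val h3
    omega

/-- One direction of the "case A" decoding step. -/
lemma stepA {r : ℕ} {n : ℕ} (π π' : Equiv.Perm (Fin k))
    (hπ : IsProperPerm r k π) (hπ' : IsProperPerm r k π')
    (hc : ∀ m, nc1 π m = nc1 π' m)
    (hI : ∀ m w : Fin k, (m : ℕ) ≤ n → (w : ℕ) + 1 ≤ n → (π m = w ↔ π' m = w))
    (ℓ v : Fin k) (hℓ : (ℓ : ℕ) = n + 1) (hv : (v : ℕ) + 1 ≤ n) (hval : π ℓ = v) :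
    π' ℓ = v := by
  have hcaseA : (π ℓ : ℕ) + 1 < (ℓ : ℕ) := by rw [hval]; omega
  have hA1 : nc1 π ℓ ≠ 0 := by
    unfold nc1
    rw [if_neg (by omega)]
    omega
  have hcaseA' : (π' ℓ : ℕ) + 1 < (ℓ : ℕ) := by
    by_contra hc2
    push_neg at hc2
    have : nc1 π' ℓ = 0 := by unfold nc1; rw [if_pos hc2]
    rw [hc ℓ, this] at hA1
    exact hA1 rfl
  have hsU : sU π ℓ = sU π' ℓ :=
    sU_eq (fun m w hm hw => hI m w (by omega) (by omega))
  have e1 : rk (sU π ℓ) (π ℓ) = rk (sU π ℓ) (π' ℓ) := by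
    have h := hc ℓ
    unfold nc1 at h
    rw [if_neg (by omega), if_neg (by omega)] at h
    rw [← hsU] at h
    omega
  have m1 : π ℓ ∈ sU π ℓ := mem_sU_self hcaseA
  have m2 : π' ℓ ∈ sU π ℓ := hsU ▸ mem_sU_self hcaseA'
  have := rk_inj m1 m2 e1
  rw [← this, hval]

/-- One direction of the "case B" decoding step (value `= n`). -/
lemma stepB {r : ℕ} {n : ℕ} (hr : 1 ≤ r) (π π' : Equiv.Perm (Fin k))
    (hπ : IsProperPerm r k π) (hπ' : IsProperPerm r k π')
    (hc : ∀ m, nc2 r π m = nc2 r π' m)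
    (HP : ∀ m w : Fin k, (m : ℕ) ≤ n + 1 → (w : ℕ) + 1 ≤ n → (π m = w ↔ π' m = w))
    (ℓ v : Fin k) (hℓ : (ℓ : ℕ) ≤ n + 1) (hv : (v : ℕ) = n) (hval : π ℓ = v) :
    π' ℓ = v := by
  by_cases hk2 : n + 1 < k
  · set j : Fin k := ⟨n + 1, hk2⟩ with hj
    have hjval : (j : ℕ) = n + 1 := rfl
    have hAeq : Aset π j = Aset π' j :=
      Aset_eq (fun m w hm hw => HP m w (by omega) (by omega))
    have hℓA : ℓ ∈ Aset π j := by
      simp only [Aset, Finset.mem_filter, Finset.mem_univ, true_and]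
      refine ⟨Fin.le_def.mpr (by omega), ?_⟩
      have := congrArg Fin.val hval
      omega
    have hvalj : (π ℓ : ℕ) + 1 = (j : ℕ) := by
      have := congrArg Fin.val hval
      omega
    have hE : ∃ m ∈ Aset π j, (π m : ℕ) + 1 = (j : ℕ) := ⟨ℓ, hℓA, hvalj⟩
    have hlt : nc2 r π j < r := nc2_lt_of_exists hπ hE
    have hlt' : nc2 r π' j < r := by rw [← hc j]; exact hlt
    obtain ⟨m', hm'1, hm'2⟩ := exists_of_nc2_lt hlt'
    have hn2π : nc2 r π j = rk (Aset π j) ℓ := nc2_eq π hℓA hvalj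
    have hn2π' : nc2 r π' j = rk (Aset π' j) m' := nc2_eq π' hm'1 hm'2
    have h := hc j
    rw [hn2π, hn2π', ← hAeq] at h
    have hm'A : m' ∈ Aset π j := by rw [hAeq]; exact hm'1
    have hℓm : ℓ = m' := rk_inj hℓA hm'A h
    rw [hℓm]
    apply Fin.eq_of_val_eq
    omega
  · -- here n = k - 1, value v is the largest one; use elimination
    have hvk : (v : ℕ) = k - 1 := by have := v.isLt; omega
    by_contra hcon
    have hne : (π' ℓ : ℕ) ≠ (v : ℕ) := fun h => hcon (Fin.eq_of_val_eq h)
    have hlt2 : (π' ℓ : ℕ) + 1 ≤ n := by have := (π' ℓ).isLt; omega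
    have := (HP ℓ (π' ℓ) (by omega) hlt2).mpr rfl
    rw [this] at hval
    exact hcon hval

lemma decode {r : ℕ} (hr : 1 ≤ r) {π π' : Equiv.Perm (Fin k)}
    (hπ : IsProperPerm r k π) (hπ' : IsProperPerm r k π')
    (h1 : ∀ ℓ, nc1 π ℓ = nc1 π' ℓ) (h2 : ∀ j, nc2 r π j = nc2 r π' j) : π = π' := by
  have main : ∀ n, ∀ ℓ v : Fin k, (ℓ : ℕ) ≤ n → (v : ℕ) + 1 ≤ n → (π ℓ = v ↔ π' ℓ = v) := by
    intro n
    induction n with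
    | zero => intro ℓ v _ hv; omega
    | succ n ih =>
      have Pa : ∀ ℓ v : Fin k, (ℓ : ℕ) ≤ n + 1 → (v : ℕ) + 1 ≤ n → (π ℓ = v ↔ π' ℓ = v) := by
        intro ℓ v hℓ hv
        rcases Nat.lt_or_ge (ℓ : ℕ) (n + 1) with h | h
        · exact ih ℓ v (by omega) hv
        · have hℓn : (ℓ : ℕ) = n + 1 := by omega
          constructor
          · exact stepA π π' hπ hπ' h1 ih ℓ v hℓn hv
          · exact stepA π' π hπ' hπ (fun m => (h1 m).symm)
              (fun m w hm hw => (ih m w hm hw).symm) ℓ v hℓn hv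
      intro ℓ v hℓ hv
      rcases Nat.lt_or_ge ((v : ℕ) + 1) (n + 1) with h | h
      · exact Pa ℓ v hℓ (by omega)
      · have hvn : (v : ℕ) = n := by omega
        constructor
        · exact stepB hr π π' hπ hπ' h2 Pa ℓ v hℓ hvn
        · exact stepB hr π' π hπ' hπ (fun m => (h2 m).symm)
            (fun m w hm hw => (Pa m w hm hw).symm) ℓ v hℓ hvn
  apply Equiv.ext
  intro x
  exact ((main k x (π x) (le_of_lt x.isLt) (π x).isLt).mp rfl).symm

end ProperAux

open ProperAux in
/-- The number of `r`-proper permutations of `[k]` is at most `2 ^ ((r + log₂ r) k)`. -/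
theorem count_proper_permutations (r k : ℕ) (hr : 1 ≤ r) (hk : 1 ≤ k) :
    (Nat.card {π : Equiv.Perm (Fin k) // IsProperPerm r k π} : ℝ) ≤
      2 ^ (((r : ℝ) + Real.logb 2 r) * k) := by
  classical
  have hrpos : 0 < r := hr
  have hcard : Nat.card {π : Equiv.Perm (Fin k) // IsProperPerm r k π} ≤ (r * (r + 1)) ^ k := by
    have hi : Function.Injective (fun (p : {π : Equiv.Perm (Fin k) // IsProperPerm r k π}) =>
        (fun j : Fin k =>
          ((⟨nc1 p.1 j % r, Nat.mod_lt _ hrpos⟩ : Fin r),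
           (⟨nc2 r p.1 j % (r + 1), Nat.mod_lt _ (by omega)⟩ : Fin (r + 1))))) := by
      rintro ⟨π, hπ⟩ ⟨π', hπ'⟩ hEq
      simp only [Subtype.mk.injEq]
      have hEq' := fun j => congrFun hEq j
      simp only [Prod.mk.injEq, Fin.mk.injEq] at hEq'
      apply decode hr hπ hπ'
      · intro ℓ
        have h := (hEq' ℓ).1
        rwa [Nat.mod_eq_of_lt (nc1_lt hr hπ ℓ), Nat.mod_eq_of_lt (nc1_lt hr hπ' ℓ)] at h
      · intro j
        have h := (hEq' j).2
        rwa [Nat.mod_eq_of_lt (Nat.lt_succ_of_le (nc2_le hπ j)),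
          Nat.mod_eq_of_lt (Nat.lt_succ_of_le (nc2_le hπ' j))] at h
    calc Nat.card {π : Equiv.Perm (Fin k) // IsProperPerm r k π}
        ≤ Nat.card (Fin k → Fin r × Fin (r + 1)) := Nat.card_le_card_of_injective _ hi
      _ = (r * (r + 1)) ^ k := by
          simp [Nat.card_eq_fintype_card]
  have hR : ((r * (r + 1)) ^ k : ℝ) ≤ 2 ^ (((r : ℝ) + Real.logb 2 r) * k) := by
    have h2 : (2 : ℝ) ^ (((r : ℝ) + Real.logb 2 r) * (k : ℝ)) = ((2 : ℝ) ^ (r : ℕ) * r) ^ (k : ℕ) := by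
      rw [Real.rpow_mul (by norm_num), Real.rpow_add (by norm_num),
        Real.rpow_logb (by norm_num) (by norm_num) (by exact_mod_cast hrpos),
        Real.rpow_natCast, Real.rpow_natCast]
    rw [h2]
    have hbase : ((r * (r + 1) : ℕ) : ℝ) ≤ (2 : ℝ) ^ (r : ℕ) * r := by
      have hn : r * (r + 1) ≤ 2 ^ r * r := by
        have := Nat.lt_two_pow_self (n := r)
        calc r * (r + 1) = (r + 1) * r := Nat.mul_comm _ _
          _ ≤ 2 ^ r * r := Nat.mul_le_mul_right _ (by omega)
      calc ((r * (r + 1) : ℕ) : ℝ) ≤ ((2 ^ r * r : ℕ) : ℝ) := by exact_mod_cast hn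
        _ = (2 : ℝ) ^ (r : ℕ) * r := by push_cast; ring
    calc ((r * (r + 1)) ^ k : ℝ) = (((r * (r + 1) : ℕ) : ℝ)) ^ k := by push_cast; ring
      _ ≤ ((2 : ℝ) ^ (r : ℕ) * r) ^ k := pow_le_pow_left₀ (by positivity) hbase k
      _ = ((2 : ℝ) ^ (r : ℕ) * r) ^ (k : ℕ) := rfl
  calc (Nat.card {π : Equiv.Perm (Fin k) // IsProperPerm r k π} : ℝ)
      ≤ ((r * (r + 1)) ^ k : ℝ) := by exact_mod_cast hcard
    _ ≤ 2 ^ (((r : ℝ) + Real.logb 2 r) * k) := hR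
end
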